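/- arXiv:1510.00269 — 7 statements merged into one kernel-verified Lean document; each statement's English description precedes it below -/
import Mathlib

section
/- The number of permutations of length n avoiding the pattern 312 equals the n-th Catalan number C(n) = (1/(n+1))·binomial(2n,n). -/
open Equiv

/-- `π` avoids the pattern 312. -/
def Avoids312 {n : ℕ} (π : Equiv.Perm (Fin n)) : Prop :=
  ∀ i j k : Fin n, i < j → j < k → ¬ (π j < π k ∧ π k < π i)

section Glue

variable {n p : ℕ} (hp : p ≤ n) (σ : Perm (Fin p)) (τ : Perm (Fin (n - p)))

def glueTo : Fin (n + 1) → Fin (n + 1) := fun i =>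
  if h : (i : ℕ) < p then ⟨(σ ⟨i, h⟩ : ℕ) + 1, by have := (σ ⟨i, h⟩).isLt; omega⟩
  else if h2 : (i : ℕ) = p then ⟨0, by omega⟩
  else ⟨(τ ⟨(i : ℕ) - (p + 1), by have := i.isLt; omega⟩ : ℕ) + (p + 1), by
    have := (τ ⟨(i : ℕ) - (p + 1), by have := i.isLt; omega⟩).isLt; omega⟩

theorem glueTo_lt {i : Fin (n + 1)} (h : (i : ℕ) < p) :
    ((glueTo hp σ τ i : Fin (n + 1)) : ℕ) = (σ ⟨i, h⟩ : ℕ) + 1 := by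
  simp only [glueTo, dif_pos h]

theorem glueTo_eq {i : Fin (n + 1)} (h : (i : ℕ) = p) :
    ((glueTo hp σ τ i : Fin (n + 1)) : ℕ) = 0 := by
  simp only [glueTo, dif_neg (by omega : ¬ (i : ℕ) < p), dif_pos h]

theorem glueTo_gt {i : Fin (n + 1)} (h : p < (i : ℕ)) :
    ((glueTo hp σ τ i : Fin (n + 1)) : ℕ) =
      (τ ⟨(i : ℕ) - (p + 1), by have := i.isLt; omega⟩ : ℕ) + (p + 1) := by
  simp only [glueTo, dif_neg (by omega : ¬ (i : ℕ) < p), dif_neg (by omega : ¬ (i : ℕ) = p)]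

theorem glueTo_inj : Function.Injective (glueTo hp σ τ) := by
  intro a b hab
  have hv := congrArg Fin.val hab
  apply Fin.ext
  rcases lt_trichotomy (a : ℕ) p with ha | ha | ha <;>
    rcases lt_trichotomy (b : ℕ) p with hb | hb | hb
  · rw [glueTo_lt hp σ τ ha, glueTo_lt hp σ τ hb] at hv
    have := σ.injective (Fin.ext (show ((σ ⟨(a:ℕ), ha⟩ : Fin p) : ℕ) = (σ ⟨(b:ℕ), hb⟩ : ℕ) by omega))
    have h2 := congrArg Fin.val this
    exact h2
  · rw [glueTo_lt hp σ τ ha, glueTo_eq hp σ τ hb] at hv; omega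
  · rw [glueTo_lt hp σ τ ha, glueTo_gt hp σ τ hb] at hv
    have := (σ ⟨(a:ℕ), ha⟩).isLt; omega
  · rw [glueTo_eq hp σ τ ha, glueTo_lt hp σ τ hb] at hv; omega
  · omega
  · rw [glueTo_eq hp σ τ ha, glueTo_gt hp σ τ hb] at hv; omega
  · rw [glueTo_gt hp σ τ ha, glueTo_lt hp σ τ hb] at hv
    have := (σ ⟨(b:ℕ), hb⟩).isLt; omega
  · rw [glueTo_gt hp σ τ ha, glueTo_eq hp σ τ hb] at hv; omega
  · rw [glueTo_gt hp σ τ ha, glueTo_gt hp σ τ hb] at hv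
    have := τ.injective (Fin.ext (show
      ((τ ⟨(a:ℕ) - (p+1), by have := a.isLt; omega⟩ : Fin (n - p)) : ℕ) =
      ((τ ⟨(b:ℕ) - (p+1), by have := b.isLt; omega⟩ : Fin (n - p)) : ℕ) by omega))
    have := congrArg Fin.val this
    simp at this
    omega

noncomputable def glue : Perm (Fin (n + 1)) :=
  Equiv.ofBijective _ (Finite.injective_iff_bijective.mp (glueTo_inj hp σ τ))

theorem glue_lt {i : Fin (n + 1)} (h : (i : ℕ) < p) :
    ((glue hp σ τ i : Fin (n + 1)) : ℕ) = (σ ⟨i, h⟩ : ℕ) + 1 := glueTo_lt hp σ τ h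

theorem glue_eq {i : Fin (n + 1)} (h : (i : ℕ) = p) :
    ((glue hp σ τ i : Fin (n + 1)) : ℕ) = 0 := glueTo_eq hp σ τ h

theorem glue_gt {i : Fin (n + 1)} (h : p < (i : ℕ)) :
    ((glue hp σ τ i : Fin (n + 1)) : ℕ) =
      (τ ⟨(i : ℕ) - (p + 1), by have := i.isLt; omega⟩ : ℕ) + (p + 1) := glueTo_gt hp σ τ h

theorem glue_avoids (hσ : Avoids312 σ) (hτ : Avoids312 τ) : Avoids312 (glue hp σ τ) := by
  intro i j k hij hjk ⟨h1, h2⟩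
  rw [Fin.lt_def] at hij hjk h1 h2
  rcases lt_trichotomy (i : ℕ) p with hi | hi | hi
  · -- i < p
    rcases lt_trichotomy (j : ℕ) p with hj | hj | hj
    · rcases lt_trichotomy (k : ℕ) p with hk | hk | hk
      · -- all in σ
        rw [glue_lt hp σ τ hj, glue_lt hp σ τ hk] at h1
        rw [glue_lt hp σ τ hk, glue_lt hp σ τ hi] at h2
        exact hσ ⟨i, hi⟩ ⟨j, hj⟩ ⟨k, hk⟩ (Fin.mk_lt_mk.mpr hij)
          (Fin.mk_lt_mk.mpr hjk) ⟨Fin.lt_def.mpr (by omega),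
          Fin.lt_def.mpr (by omega)⟩
      · rw [glue_lt hp σ τ hj, glue_eq hp σ τ hk] at h1; omega
      · rw [glue_lt hp σ τ hi, glue_gt hp σ τ hk] at h2
        have := (σ ⟨i, hi⟩).isLt; omega
    · rw [glue_lt hp σ τ hi, glue_eq hp σ τ hj] at *
      have hk : p < (k : ℕ) := by omega
      rw [glue_gt hp σ τ hk] at h2
      have := (σ ⟨i, hi⟩).isLt; omega
    · have hk : p < (k : ℕ) := by omega
      rw [glue_lt hp σ τ hi, glue_gt hp σ τ hk] at h2
      have := (σ ⟨i, hi⟩).isLt; omega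
  · rw [glue_eq hp σ τ hi] at h2; omega
  · -- i > p, so all three in τ
    have hj : p < (j : ℕ) := by omega
    have hk : p < (k : ℕ) := by omega
    rw [glue_gt hp σ τ hj, glue_gt hp σ τ hk] at h1
    rw [glue_gt hp σ τ hk, glue_gt hp σ τ hi] at h2
    exact hτ ⟨(i:ℕ) - (p+1), by have := i.isLt; omega⟩ ⟨(j:ℕ) - (p+1), by have := j.isLt; omega⟩
      ⟨(k:ℕ) - (p+1), by have := k.isLt; omega⟩ (Fin.mk_lt_mk.mpr (by omega))
      (Fin.mk_lt_mk.mpr (by omega)) ⟨Fin.lt_def.mpr (by omega),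
      Fin.lt_def.mpr (by omega)⟩

end Glue

section Unglue
variable {n : ℕ} (π : Perm (Fin (n + 1))) (hav : Avoids312 π)

/-- position of the value 0 -/
def zpos : ℕ := ((π.symm ⟨0, Nat.succ_pos n⟩ : Fin (n + 1)) : ℕ)

theorem zpos_le : zpos π ≤ n := Nat.lt_succ_iff.mp (π.symm _).isLt

theorem apply_zpos : (π ⟨zpos π, Nat.lt_succ_of_le (zpos_le π)⟩ : ℕ) = 0 := by
  have : (⟨zpos π, Nat.lt_succ_of_le (zpos_le π)⟩ : Fin (n + 1)) = π.symm ⟨0, Nat.succ_pos n⟩ :=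
    Fin.ext rfl
  rw [this, Equiv.apply_symm_apply]

theorem apply_pos {i : Fin (n + 1)} (h : (i : ℕ) ≠ zpos π) : 0 < (π i : ℕ) := by
  rcases Nat.eq_zero_or_pos (π i : ℕ) with h' | h'
  case inr => exact h'
  · exfalso; apply h
    have : π i = ⟨0, Nat.succ_pos n⟩ := Fin.ext h'
    have := congrArg π.symm this
    rw [Equiv.symm_apply_apply] at this
    exact congrArg Fin.val this

include hav in
theorem left_small {i : Fin (n + 1)} (h : (i : ℕ) < zpos π) : (π i : ℕ) ≤ zpos π := by
  by_contra hbig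
  push_neg at hbig
  set p := zpos π with hpdef
  by_cases hex : ∃ k : Fin (n + 1), p < (k : ℕ) ∧ 0 < (π k : ℕ) ∧ (π k : ℕ) ≤ p
  · obtain ⟨k, hk1, hk2, hk3⟩ := hex
    exact hav i ⟨p, Nat.lt_succ_of_le (zpos_le π)⟩ k (Fin.lt_def.mpr h) (Fin.lt_def.mpr hk1)
      ⟨Fin.lt_def.mpr (by rw [apply_zpos]; exact hk2), Fin.lt_def.mpr (by omega)⟩
  · push_neg at hex
    -- values 1..p all lie at positions < p other than i : impossible
    have hple := zpos_le π
    set F : Fin p → Fin p := fun m => ⟨(π.symm ⟨(m : ℕ) + 1, by have := m.isLt; omega⟩ : ℕ), by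
      set v : Fin (n + 1) := ⟨(m : ℕ) + 1, by have := m.isLt; omega⟩
      have hv1 : 0 < (π (π.symm v) : ℕ) := by rw [Equiv.apply_symm_apply]; simp [v]
      have hv2 : (π (π.symm v) : ℕ) ≤ p := by
        rw [Equiv.apply_symm_apply]; simp [v]
      have := hex (π.symm v)
      have hne : ((π.symm v : Fin (n+1)) : ℕ) ≠ p := by
        intro heq
        have : π.symm v = ⟨p, Nat.lt_succ_of_le hple⟩ := Fin.ext heq
        rw [this] at hv1
        rw [apply_zpos] at hv1; omega
      omega⟩ with hF
    have hFinj : Function.Injective F := by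
      intro a b hab
      have hv := congrArg Fin.val hab
      simp only [hF] at hv
      have := π.symm.injective (Fin.ext hv)
      exact Fin.ext (by have := congrArg Fin.val this; simpa using this)
    have hFsurj := Finite.surjective_of_injective hFinj
    obtain ⟨m, hm⟩ := hFsurj ⟨(i : ℕ), h⟩
    have hv := congrArg Fin.val hm
    simp only [hF] at hv
    have : (π.symm ⟨(m : ℕ) + 1, by have := m.isLt; omega⟩ : Fin (n+1)) = i := Fin.ext hv
    have := congrArg π this
    rw [Equiv.apply_symm_apply] at this
    have := congrArg Fin.val this
    simp at this
    omega

include hav in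
theorem right_big {i : Fin (n + 1)} (h : zpos π < (i : ℕ)) : zpos π < (π i : ℕ) := by
  set p := zpos π with hpdef
  have hple := zpos_le π
  by_contra hsm
  push_neg at hsm
  have hpos : 0 < (π i : ℕ) := apply_pos π (by omega)
  set G : Fin p → Fin p := fun m => ⟨(π ⟨(m : ℕ), by have := m.isLt; omega⟩ : ℕ) - 1, by
    have h1 := apply_pos π (i := ⟨(m : ℕ), by have := m.isLt; omega⟩) (by have := m.isLt; simp; omega)
    have h2 := left_small π hav (i := ⟨(m : ℕ), by have := m.isLt; omega⟩) (by have := m.isLt; simp; omega)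
    omega⟩ with hG
  have hGinj : Function.Injective G := by
    intro a b hab
    have hv := congrArg Fin.val hab
    simp only [hG] at hv
    have h1 := apply_pos π (i := ⟨(a : ℕ), by have := a.isLt; omega⟩) (by have := a.isLt; simp; omega)
    have h2 := apply_pos π (i := ⟨(b : ℕ), by have := b.isLt; omega⟩) (by have := b.isLt; simp; omega)
    have : π ⟨(a : ℕ), by have := a.isLt; omega⟩ = π ⟨(b : ℕ), by have := b.isLt; omega⟩ :=
      Fin.ext (by omega)
    have := π.injective this
    exact Fin.ext (by have := congrArg Fin.val this; simpa using this)
  obtain ⟨m, hm⟩ := Finite.surjective_of_injective hGinj ⟨(π i : ℕ) - 1, by omega⟩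
  have hv := congrArg Fin.val hm
  simp only [hG] at hv
  have h1 := apply_pos π (i := ⟨(m : ℕ), by have := m.isLt; omega⟩) (by have := m.isLt; simp; omega)
  have : π ⟨(m : ℕ), by have := m.isLt; omega⟩ = π i := Fin.ext (by omega)
  have := π.injective this
  have := congrArg Fin.val this
  simp at this
  omega

end Unglue

section Unglue2
variable {n : ℕ} (π : Perm (Fin (n + 1))) (hav : Avoids312 π)

def ungL : Fin (zpos π) → Fin (zpos π) := fun m =>
  ⟨(π ⟨(m : ℕ), by have := m.isLt; have := zpos_le π; omega⟩ : ℕ) - 1, by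
    have h1 := apply_pos π (i := ⟨(m : ℕ), by have := m.isLt; have := zpos_le π; omega⟩)
      (by have := m.isLt; simp; omega)
    have h2 := left_small π hav (i := ⟨(m : ℕ), by have := m.isLt; have := zpos_le π; omega⟩)
      (by simp [m.isLt])
    omega⟩

def ungR : Fin (n - zpos π) → Fin (n - zpos π) := fun m =>
  ⟨(π ⟨zpos π + 1 + (m : ℕ), by have := m.isLt; omega⟩ : ℕ) - (zpos π + 1), by
    have h1 := right_big π hav (i := ⟨zpos π + 1 + (m : ℕ), by have := m.isLt; omega⟩)
      (by simp; omega)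
    have h2 := (π ⟨zpos π + 1 + (m : ℕ), by have := m.isLt; omega⟩).isLt
    have := m.isLt; omega⟩

theorem ungL_inj : Function.Injective (ungL π hav) := by
  intro a b hab
  have hv := congrArg Fin.val hab
  simp only [ungL] at hv
  have h1 := apply_pos π (i := ⟨(a : ℕ), by have := a.isLt; have := zpos_le π; omega⟩)
    (by have := a.isLt; simp; omega)
  have h2 := apply_pos π (i := ⟨(b : ℕ), by have := b.isLt; have := zpos_le π; omega⟩)
    (by have := b.isLt; simp; omega)
  have := π.injective (Fin.ext (show
    ((π ⟨(a : ℕ), by have := a.isLt; have := zpos_le π; omega⟩ : Fin (n+1)) : ℕ) =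
    ((π ⟨(b : ℕ), by have := b.isLt; have := zpos_le π; omega⟩ : Fin (n+1)) : ℕ) from by omega))
  exact Fin.ext (by have := congrArg Fin.val this; simpa using this)

theorem ungR_inj : Function.Injective (ungR π hav) := by
  intro a b hab
  have hv := congrArg Fin.val hab
  simp only [ungR] at hv
  have h1 := right_big π hav (i := ⟨zpos π + 1 + (a : ℕ), by have := a.isLt; omega⟩) (by simp; omega)
  have h2 := right_big π hav (i := ⟨zpos π + 1 + (b : ℕ), by have := b.isLt; omega⟩) (by simp; omega)
  have := π.injective (Fin.ext (show
    ((π ⟨zpos π + 1 + (a : ℕ), by have := a.isLt; omega⟩ : Fin (n+1)) : ℕ) =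
    ((π ⟨zpos π + 1 + (b : ℕ), by have := b.isLt; omega⟩ : Fin (n+1)) : ℕ) from by omega))
  exact Fin.ext (by have := congrArg Fin.val this; simp at this; omega)

noncomputable def unglueL : Perm (Fin (zpos π)) :=
  Equiv.ofBijective _ (Finite.injective_iff_bijective.mp (ungL_inj π hav))

noncomputable def unglueR : Perm (Fin (n - zpos π)) :=
  Equiv.ofBijective _ (Finite.injective_iff_bijective.mp (ungR_inj π hav))

theorem unglueL_apply (m : Fin (zpos π)) : unglueL π hav m = ungL π hav m := rfl
theorem unglueR_apply (m : Fin (n - zpos π)) : unglueR π hav m = ungR π hav m := rfl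

theorem unglueL_avoids : Avoids312 (unglueL π hav) := by
  intro a b c hab hbc ⟨h1, h2⟩
  rw [Fin.lt_def] at hab hbc h1 h2
  rw [unglueL_apply, unglueL_apply] at h1
  rw [unglueL_apply, unglueL_apply] at h2
  simp only [ungL] at h1 h2
  have hple := zpos_le π
  have pa : 0 < (π ⟨(a : ℕ), by have := a.isLt; omega⟩ : ℕ) :=
    apply_pos π (by have := a.isLt; simp; omega)
  have pb : 0 < (π ⟨(b : ℕ), by have := b.isLt; omega⟩ : ℕ) :=
    apply_pos π (by have := b.isLt; simp; omega)
  have pc : 0 < (π ⟨(c : ℕ), by have := c.isLt; omega⟩ : ℕ) :=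
    apply_pos π (by have := c.isLt; simp; omega)
  exact hav ⟨(a : ℕ), by have := a.isLt; omega⟩ ⟨(b : ℕ), by have := b.isLt; omega⟩
    ⟨(c : ℕ), by have := c.isLt; omega⟩ (Fin.mk_lt_mk.mpr hab) (Fin.mk_lt_mk.mpr hbc)
    ⟨Fin.lt_def.mpr (by omega), Fin.lt_def.mpr (by omega)⟩

theorem unglueR_avoids : Avoids312 (unglueR π hav) := by
  intro a b c hab hbc ⟨h1, h2⟩
  rw [Fin.lt_def] at hab hbc h1 h2
  rw [unglueR_apply, unglueR_apply] at h1
  rw [unglueR_apply, unglueR_apply] at h2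
  simp only [ungR] at h1 h2
  have pa := right_big π hav (i := ⟨zpos π + 1 + (a : ℕ), by have := a.isLt; omega⟩) (by simp; omega)
  have pb := right_big π hav (i := ⟨zpos π + 1 + (b : ℕ), by have := b.isLt; omega⟩) (by simp; omega)
  have pc := right_big π hav (i := ⟨zpos π + 1 + (c : ℕ), by have := c.isLt; omega⟩) (by simp; omega)
  exact hav ⟨zpos π + 1 + (a : ℕ), by have := a.isLt; omega⟩
    ⟨zpos π + 1 + (b : ℕ), by have := b.isLt; omega⟩
    ⟨zpos π + 1 + (c : ℕ), by have := c.isLt; omega⟩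
    (Fin.mk_lt_mk.mpr (by omega)) (Fin.mk_lt_mk.mpr (by omega))
    ⟨Fin.lt_def.mpr (by omega), Fin.lt_def.mpr (by omega)⟩

end Unglue2

section Reconstruct
variable {n : ℕ} (π : Perm (Fin (n + 1))) (hav : Avoids312 π)

theorem glue_unglue : glue (zpos_le π) (unglueL π hav) (unglueR π hav) = π := by
  apply Equiv.ext; intro i; apply Fin.ext
  rcases lt_trichotomy (i : ℕ) (zpos π) with h | h | h
  · rw [glue_lt _ _ _ h, unglueL_apply]
    simp only [ungL]
    have key : ∀ j : Fin (n + 1), (j : ℕ) = (i : ℕ) → (π j : ℕ) - 1 + 1 = (π i : ℕ) := by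
      intro j hj
      rw [Fin.ext hj]
      have := apply_pos π (i := i) (by omega)
      omega
    exact key _ rfl
  · rw [glue_eq _ _ _ h]
    have : π i = π ⟨zpos π, Nat.lt_succ_of_le (zpos_le π)⟩ := congrArg π (Fin.ext h)
    rw [this, apply_zpos]
  · rw [glue_gt _ _ _ h, unglueR_apply]
    simp only [ungR]
    have key : ∀ j : Fin (n + 1), (j : ℕ) = (i : ℕ) →
        (π j : ℕ) - (zpos π + 1) + (zpos π + 1) = (π i : ℕ) := by
      intro j hj
      rw [Fin.ext hj]
      have := right_big π hav (i := i) h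
      omega
    exact key _ (show zpos π + 1 + ((i : ℕ) - (zpos π + 1)) = (i : ℕ) by omega)

end Reconstruct

section Count
variable {n : ℕ}

noncomputable def Phi (n : ℕ) :
    (Σ p : Fin (n + 1), {σ : Perm (Fin (p : ℕ)) // Avoids312 σ} ×
      {τ : Perm (Fin (n - (p : ℕ))) // Avoids312 τ}) →
    {π : Perm (Fin (n + 1)) // Avoids312 π} := fun x =>
  ⟨glue (Nat.lt_succ_iff.mp x.1.isLt) x.2.1.1 x.2.2.1,
    glue_avoids _ _ _ x.2.1.2 x.2.2.2⟩

theorem Phi_surjective : Function.Surjective (Phi n) := by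
  rintro ⟨π, hav⟩
  exact ⟨⟨⟨zpos π, Nat.lt_succ_of_le (zpos_le π)⟩,
    ⟨unglueL π hav, unglueL_avoids π hav⟩, ⟨unglueR π hav, unglueR_avoids π hav⟩⟩,
    Subtype.ext (glue_unglue π hav)⟩

theorem Phi_injective : Function.Injective (Phi n) := by
  rintro ⟨p, ⟨σ, hσ⟩, ⟨τ, hτ⟩⟩ ⟨q, ⟨σ', hσ'⟩, ⟨τ', hτ'⟩⟩ h
  have hpe := congrArg Subtype.val h
  simp only [Phi] at hpe
  have hp := Nat.lt_succ_iff.mp p.isLt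
  have hq := Nat.lt_succ_iff.mp q.isLt
  -- p = q: both are positions of 0
  have h0p : (glue hp σ τ ⟨(p : ℕ), p.isLt⟩ : ℕ) = 0 := glue_eq _ _ _ rfl
  have h0q : (glue hq σ' τ' ⟨(q : ℕ), q.isLt⟩ : ℕ) = 0 := glue_eq _ _ _ rfl
  rw [hpe] at h0p
  have : glue hq σ' τ' ⟨(p : ℕ), p.isLt⟩ = glue hq σ' τ' ⟨(q : ℕ), q.isLt⟩ :=
    Fin.ext (by rw [h0p, h0q])
  have hpq : p = q := by
    have := (glue hq σ' τ').injective this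
    exact Fin.ext (congrArg Fin.val this)
  subst hpq
  have hσeq : σ = σ' := by
    apply Equiv.ext; intro m; apply Fin.ext
    have e1 : (glue hp σ τ ⟨(m : ℕ), by have := m.isLt; omega⟩ : ℕ) =
        (σ ⟨(m : ℕ), m.isLt⟩ : ℕ) + 1 := glue_lt _ _ _ m.isLt
    have e2 : (glue hq σ' τ' ⟨(m : ℕ), by have := m.isLt; omega⟩ : ℕ) =
        (σ' ⟨(m : ℕ), m.isLt⟩ : ℕ) + 1 := glue_lt _ _ _ m.isLt
    rw [hpe] at e1
    have key : ∀ a b : Fin (p : ℕ), (a : ℕ) = (m : ℕ) → (b : ℕ) = (m : ℕ) →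
        (σ a : ℕ) + 1 = (σ' b : ℕ) + 1 → (σ m : ℕ) = (σ' m : ℕ) := by
      intro a b ha hb hab
      rw [Fin.ext ha, Fin.ext hb] at hab; omega
    exact key _ _ rfl rfl (e1.symm.trans e2)
  have hτeq : τ = τ' := by
    apply Equiv.ext; intro m; apply Fin.ext
    have hm := m.isLt
    have e1 : (glue hp σ τ ⟨(p : ℕ) + 1 + (m : ℕ), by omega⟩ : ℕ) =
        (τ ⟨(p : ℕ) + 1 + (m : ℕ) - ((p : ℕ) + 1), by omega⟩ : ℕ) + ((p : ℕ) + 1) :=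
      glue_gt _ _ _ (by simp; omega)
    have e2 : (glue hq σ' τ' ⟨(p : ℕ) + 1 + (m : ℕ), by omega⟩ : ℕ) =
        (τ' ⟨(p : ℕ) + 1 + (m : ℕ) - ((p : ℕ) + 1), by omega⟩ : ℕ) + ((p : ℕ) + 1) :=
      glue_gt _ _ _ (by simp; omega)
    rw [hpe] at e1
    have key : ∀ a b : Fin (n - (p : ℕ)), (a : ℕ) = (m : ℕ) → (b : ℕ) = (m : ℕ) →
        (τ a : ℕ) + ((p : ℕ) + 1) = (τ' b : ℕ) + ((p : ℕ) + 1) →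
        (τ m : ℕ) = (τ' m : ℕ) := by
      intro a b ha hb hab
      rw [Fin.ext ha, Fin.ext hb] at hab; omega
    exact key ⟨(p : ℕ) + 1 + (m : ℕ) - ((p : ℕ) + 1), by omega⟩
      ⟨(p : ℕ) + 1 + (m : ℕ) - ((p : ℕ) + 1), by omega⟩
      (show (p : ℕ) + 1 + (m : ℕ) - ((p : ℕ) + 1) = (m : ℕ) by omega)
      (show (p : ℕ) + 1 + (m : ℕ) - ((p : ℕ) + 1) = (m : ℕ) by omega)
      (e1.symm.trans e2)
  subst hσeq; subst hτeq; rfl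

instance : DecidablePred (Avoids312 (n := n)) := fun _ =>
  inferInstanceAs (Decidable (∀ _ _ _, _))

theorem card_succ_eq (n : ℕ) :
    Nat.card {π : Perm (Fin (n + 1)) // Avoids312 π} =
      ∑ p : Fin (n + 1), Nat.card {σ : Perm (Fin (p : ℕ)) // Avoids312 σ} *
        Nat.card {τ : Perm (Fin (n - (p : ℕ))) // Avoids312 τ} := by
  rw [← Nat.card_eq_of_bijective (Phi n) ⟨Phi_injective, Phi_surjective⟩]
  rw [Nat.card_eq_fintype_card, Fintype.card_sigma]
  exact Finset.sum_congr rfl fun p _ => by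
    rw [Fintype.card_prod, Nat.card_eq_fintype_card, Nat.card_eq_fintype_card]

end Count

/-- The number of permutations of length `n` avoiding 312 is the `n`-th Catalan number. -/
theorem stmt1 (n : ℕ) :
    Nat.card {π : Equiv.Perm (Fin n) // Avoids312 π} = catalan n := by
  induction n using Nat.strong_induction_on with
  | _ n ih =>
    match n with
    | 0 =>
      haveI : Unique {π : Equiv.Perm (Fin 0) // Avoids312 π} :=
        { default := ⟨1, fun i _ _ _ _ => i.elim0⟩,
          uniq := fun a => Subtype.ext (Equiv.ext fun x => x.elim0) }
      rw [Nat.card_unique, catalan_zero]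
    | n + 1 =>
      rw [card_succ_eq, catalan_succ]
      exact Finset.sum_congr rfl fun i _ => by
        rw [ih (i : ℕ) (by omega), ih (n - (i : ℕ)) (by have := i.isLt; omega)]
end

section
/- The number of permutations of length n avoiding the pattern 321 equals the n-th Catalan number, and hence Av(312) and Av(321) are Wilf-equivalent: for every n, |Av_n(312)| = |Av_n(321)|. -/
/-- `π` avoids the pattern 321. -/
def Avoids321 {n : ℕ} (π : Equiv.Perm (Fin n)) : Prop :=
  ∀ i j k : Fin n, i < j → j < k → ¬ (π k < π j ∧ π j < π i)

open Finset


/-- staircase monotone functions -/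
def MSet (n : ℕ) : Finset (Fin n → Fin n) :=
  univ.filter (fun m => (∀ i j : Fin n, i ≤ j → m i ≤ m j) ∧ ∀ i : Fin n, (i : ℕ) ≤ (m i : ℕ))

lemma mem_MSet {n : ℕ} (m : Fin n → Fin n) :
    m ∈ MSet n ↔ (∀ i j : Fin n, i ≤ j → m i ≤ m j) ∧ ∀ i : Fin n, (i : ℕ) ≤ (m i : ℕ) := by
  simp [MSet]

/-- first touch point of the staircase -/
def Ftouch {n : ℕ} (m : Fin (n+1) → Fin (n+1)) : Fin (n+1) :=
  if h : (univ.filter (fun i : Fin (n+1) => (m i : ℕ) = (i : ℕ))).Nonempty then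
    (univ.filter (fun i : Fin (n+1) => (m i : ℕ) = (i : ℕ))).min' h else 0

lemma Ftouch_spec {n : ℕ} (m : Fin (n+1) → Fin (n+1)) (hm : m ∈ MSet (n+1)) :
    (m (Ftouch m) : ℕ) = (Ftouch m : ℕ) ∧ ∀ i : Fin (n+1), i < Ftouch m → (i : ℕ) < (m i : ℕ) := by
  obtain ⟨-, h2⟩ := (mem_MSet m).mp hm
  have hne : (univ.filter (fun i : Fin (n+1) => (m i : ℕ) = (i : ℕ))).Nonempty := by
    refine ⟨Fin.last n, ?_⟩
    simp only [mem_filter, mem_univ, true_and]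
    have := h2 (Fin.last n)
    have := (m (Fin.last n)).isLt
    simp only [Fin.val_last] at *
    omega
  rw [Ftouch, dif_pos hne]
  constructor
  · have := Finset.min'_mem _ hne
    simpa using this
  · intro i hi
    have h3 := h2 i
    rcases Nat.lt_or_ge (i : ℕ) (m i : ℕ) with h | h
    · exact h
    · exfalso
      have : i ∈ univ.filter (fun i : Fin (n+1) => (m i : ℕ) = (i : ℕ)) := by
        simp only [mem_filter, mem_univ, true_and]; omega
      have := Finset.min'_le _ _ this
      exact absurd (lt_of_lt_of_le hi this) (lt_irrefl _)

/-- glue two staircase functions -/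
def glueM {n : ℕ} (p : Fin (n+1)) (a : Fin (p : ℕ) → Fin (p : ℕ))
    (b : Fin (n - (p : ℕ)) → Fin (n - (p : ℕ))) : Fin (n+1) → Fin (n+1) := fun i =>
  if h : (i : ℕ) < (p : ℕ) then
    ⟨(a ⟨i, h⟩ : ℕ) + 1, by have := (a ⟨i, h⟩).isLt; have := p.isLt; omega⟩
  else if h2 : (i : ℕ) = (p : ℕ) then p
  else
    ⟨(b ⟨(i : ℕ) - ((p : ℕ)+1), by have := i.isLt; omega⟩ : ℕ) + ((p : ℕ)+1), by
      have := (b ⟨(i : ℕ) - ((p : ℕ)+1), by have := i.isLt; omega⟩).isLt; omega⟩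

lemma glueM_val {n : ℕ} (p : Fin (n+1)) (a : Fin (p : ℕ) → Fin (p : ℕ))
    (b : Fin (n - (p : ℕ)) → Fin (n - (p : ℕ))) (i : Fin (n+1)) :
    ((h : (i : ℕ) < (p : ℕ)) → (glueM p a b i : ℕ) = (a ⟨i, h⟩ : ℕ) + 1) ∧
    ((i : ℕ) = (p : ℕ) → (glueM p a b i : ℕ) = (p : ℕ)) ∧
    ((h : (p : ℕ) < (i : ℕ)) → (glueM p a b i : ℕ)
      = (b ⟨(i : ℕ) - ((p : ℕ)+1), by have := i.isLt; omega⟩ : ℕ) + ((p : ℕ)+1)) := by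
  refine ⟨fun h => ?_, fun h => ?_, fun h => ?_⟩
  · simp only [glueM, dif_pos h]
  · simp only [glueM, dif_neg (by omega : ¬ (i:ℕ) < (p:ℕ)), dif_pos h]
  · simp only [glueM, dif_neg (by omega : ¬ (i:ℕ) < (p:ℕ)), dif_neg (by omega : ¬ (i:ℕ) = (p:ℕ))]

lemma glueM_mem {n : ℕ} (p : Fin (n+1)) (a : Fin (p : ℕ) → Fin (p : ℕ))
    (b : Fin (n - (p : ℕ)) → Fin (n - (p : ℕ)))
    (ha : a ∈ MSet (p : ℕ)) (hb : b ∈ MSet (n - (p : ℕ))) :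
    glueM p a b ∈ MSet (n+1) ∧ Ftouch (glueM p a b) = p := by
  obtain ⟨ha1, ha2⟩ := (mem_MSet a).mp ha
  obtain ⟨hb1, hb2⟩ := (mem_MSet b).mp hb
  have g1 := fun i => (glueM_val p a b i).1
  have g2 := fun i => (glueM_val p a b i).2.1
  have g3 := fun i => (glueM_val p a b i).2.2
  have hmem : glueM p a b ∈ MSet (n+1) := by
    rw [mem_MSet]
    constructor
    · intro i j hij
      rw [Fin.le_def] at hij ⊢
      rcases Nat.lt_or_ge (i : ℕ) (p : ℕ) with hi | hi
      · rw [g1 i hi]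
        rcases Nat.lt_or_ge (j : ℕ) (p : ℕ) with hj | hj
        · rw [g1 j hj]
          have := ha1 ⟨i, hi⟩ ⟨j, hj⟩ (by rw [Fin.le_def]; exact hij)
          rw [Fin.le_def] at this
          simp only [Nat.add_le_add_iff_right]
          exact this
        · rcases Nat.eq_or_lt_of_le hj with hj2 | hj2
          · rw [(g2 j) hj2.symm]; have := (a ⟨i, hi⟩).isLt; omega
          · rw [g3 j hj2]; have := (a ⟨i, hi⟩).isLt; omega
      · rcases Nat.eq_or_lt_of_le hi with hi2 | hi2
        · rw [(g2 i) hi2.symm]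
          rcases Nat.eq_or_lt_of_le (hi2.trans_le hij : (p:ℕ) ≤ (j:ℕ)) with hj2 | hj2
          · rw [(g2 j) hj2.symm]
          · rw [g3 j hj2]; omega
        · have hj2 : (p : ℕ) < (j : ℕ) := lt_of_lt_of_le hi2 hij
          rw [g3 i hi2, g3 j hj2]
          have := hb1 ⟨(i : ℕ) - ((p : ℕ)+1), by have := i.isLt; omega⟩
            ⟨(j : ℕ) - ((p : ℕ)+1), by have := j.isLt; omega⟩ (by rw [Fin.le_def]; simp; omega)
          rw [Fin.le_def] at this
          simp only [Nat.add_le_add_iff_right]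
          exact this
    · intro i
      rcases Nat.lt_or_ge (i : ℕ) (p : ℕ) with hi | hi
      · rw [g1 i hi]; have := ha2 ⟨i, hi⟩; simp at this; omega
      · rcases Nat.eq_or_lt_of_le hi with hi2 | hi2
        · rw [(g2 i) hi2.symm]; omega
        · rw [g3 i hi2]
          have := hb2 ⟨(i : ℕ) - ((p : ℕ)+1), by have := i.isLt; omega⟩
          simp at this; omega
  refine ⟨hmem, ?_⟩
  -- Ftouch = p
  obtain ⟨hs1, hs2⟩ := Ftouch_spec (glueM p a b) hmem
  by_contra hne
  rcases Fin.lt_or_lt_of_ne hne with hlt | hlt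
  · -- Ftouch < p : but then glue at Ftouch is a-value, which is > index
    have := g1 (Ftouch (glueM p a b)) (by rw [Fin.lt_def] at hlt; exact hlt)
    have h2 := ha2 ⟨(Ftouch (glueM p a b) : ℕ), by rw [Fin.lt_def] at hlt; exact hlt⟩
    simp at h2
    omega
  · -- p < Ftouch : but glue at p = p, contradicting minimality via hs2
    have := hs2 p hlt
    have := g2 p rfl
    omega

lemma glueM_inj {n : ℕ} (p : Fin (n+1)) (a a' : Fin (p : ℕ) → Fin (p : ℕ))
    (b b' : Fin (n - (p : ℕ)) → Fin (n - (p : ℕ)))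
    (h : glueM p a b = glueM p a' b') : a = a' ∧ b = b' := by
  constructor
  · funext i
    have hi : ((i : ℕ) : ℕ) < (p : ℕ) := by have := i.isLt; simpa using this
    have h1 := (glueM_val p a b ⟨(i:ℕ), by have := p.isLt; omega⟩).1 (by simpa using hi)
    have h2 := (glueM_val p a' b' ⟨(i:ℕ), by have := p.isLt; omega⟩).1 (by simpa using hi)
    rw [h] at h1
    apply Fin.ext
    have : (⟨(⟨(i:ℕ), by have := p.isLt; omega⟩ : Fin (n+1)), by simpa using hi⟩ : Fin (p:ℕ)) = i := by
      apply Fin.ext; rfl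
    rw [this] at h1 h2
    omega
  · funext j
    have hj : (j : ℕ) < n - (p : ℕ) := j.isLt
    set i : Fin (n+1) := ⟨(p : ℕ) + 1 + (j : ℕ), by omega⟩ with hidef
    have hpi : (p : ℕ) < (i : ℕ) := by simp [hidef]; omega
    have h1 := (glueM_val p a b i).2.2 hpi
    have h2 := (glueM_val p a' b' i).2.2 hpi
    rw [h] at h1
    apply Fin.ext
    have heq : (⟨(i : ℕ) - ((p:ℕ)+1), by have := i.isLt; omega⟩ : Fin (n - (p:ℕ))) = j := by
      apply Fin.ext; simp [hidef]
    rw [heq] at h1 h2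
    omega

set_option maxHeartbeats 1000000 in
lemma glueM_surj {n : ℕ} (p : Fin (n+1)) (m : Fin (n+1) → Fin (n+1))
    (hm : m ∈ MSet (n+1)) (hf : Ftouch m = p) :
    ∃ a ∈ MSet (p : ℕ), ∃ b ∈ MSet (n - (p : ℕ)), glueM p a b = m := by
  obtain ⟨h1, h2⟩ := (mem_MSet m).mp hm
  obtain ⟨hs1, hs2⟩ := Ftouch_spec m hm
  rw [hf] at hs1 hs2
  -- bounds
  have hlow : ∀ i : Fin (n+1), (i : ℕ) < (p : ℕ) → (i : ℕ) < (m i : ℕ) ∧ (m i : ℕ) ≤ (p : ℕ) := by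
    intro i hi
    refine ⟨hs2 i (by rwa [Fin.lt_def]), ?_⟩
    have := h1 i p (by rw [Fin.le_def]; omega)
    rw [Fin.le_def] at this
    omega
  have hhigh : ∀ i : Fin (n+1), (p : ℕ) < (i : ℕ) → (i : ℕ) ≤ (m i : ℕ) ∧ (m i : ℕ) ≤ n := by
    intro i hi
    exact ⟨h2 i, by have := (m i).isLt; omega⟩
  refine ⟨fun i => ⟨(m ⟨(i:ℕ), by have := p.isLt; have := i.isLt; omega⟩ : ℕ) - 1, by
      have := hlow ⟨(i:ℕ), by have := p.isLt; have := i.isLt; omega⟩ (by simpa using i.isLt)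
      simp at this; omega⟩, ?_, fun j => ⟨(m ⟨(p:ℕ)+1+(j:ℕ), by have := j.isLt; omega⟩ : ℕ) - ((p:ℕ)+1), by
      have := hhigh ⟨(p:ℕ)+1+(j:ℕ), by have := j.isLt; omega⟩ (by simp; omega)
      simp at this; omega⟩, ?_, ?_⟩
  · rw [mem_MSet]
    constructor
    · intro i j hij
      rw [Fin.le_def] at hij ⊢
      simp only
      have hi := hlow ⟨(i:ℕ), by have := p.isLt; have := i.isLt; omega⟩ (by simpa using i.isLt)
      have hmono := h1 ⟨(i:ℕ), by have := p.isLt; have := i.isLt; omega⟩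
        ⟨(j:ℕ), by have := p.isLt; have := j.isLt; omega⟩ (by rw [Fin.le_def]; simpa using hij)
      rw [Fin.le_def] at hmono
      simp at hi hmono ⊢
      omega
    · intro i
      have hi := hlow ⟨(i:ℕ), by have := p.isLt; have := i.isLt; omega⟩ (by simpa using i.isLt)
      simp at hi ⊢
      omega
  · rw [mem_MSet]
    constructor
    · intro i j hij
      rw [Fin.le_def] at hij ⊢
      simp only
      have hmono := h1 ⟨(p:ℕ)+1+(i:ℕ), by have := i.isLt; omega⟩
        ⟨(p:ℕ)+1+(j:ℕ), by have := j.isLt; omega⟩ (by rw [Fin.le_def]; simp; omega)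
      rw [Fin.le_def] at hmono
      have hhi := hhigh ⟨(p:ℕ)+1+(i:ℕ), by have := i.isLt; omega⟩ (by simp; omega)
      simp at hmono hhi ⊢
      omega
    · intro j
      have hj := hhigh ⟨(p:ℕ)+1+(j:ℕ), by have := j.isLt; omega⟩ (by simp; omega)
      simp at hj ⊢
      omega
  · funext i
    apply Fin.ext
    rcases Nat.lt_or_ge (i : ℕ) (p : ℕ) with hi | hi
    · rw [(glueM_val p _ _ i).1 hi]
      have := (hlow i hi)
      simp only
      have heq : (⟨((⟨(i:ℕ), hi⟩ : Fin (p:ℕ)) : ℕ), by have := p.isLt; have := i.isLt; omega⟩ : Fin (n+1)) = i := by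
        apply Fin.ext; rfl
      rw [heq]
      omega
    · rcases Nat.eq_or_lt_of_le hi with hi2 | hi2
      · rw [(glueM_val p _ _ i).2.1 hi2.symm]
        have : i = p := by apply Fin.ext; omega
        rw [this, hs1]
      · rw [(glueM_val p _ _ i).2.2 hi2]
        simp only
        have hhi := hhigh i hi2
        have heq : (⟨(p:ℕ)+1+(((⟨(i:ℕ) - ((p:ℕ)+1), by have := i.isLt; omega⟩ : Fin (n - (p:ℕ))) : ℕ)), by have := i.isLt; omega⟩ : Fin (n+1)) = i := by
          apply Fin.ext; simp; omega
        rw [heq]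
        omega

lemma fiberM_card {n : ℕ} (p : Fin (n+1)) :
    ((MSet (n+1)).filter (fun m => Ftouch m = p)).card
      = (MSet (p : ℕ)).card * (MSet (n - (p : ℕ))).card := by
  rw [← Finset.card_product]
  refine (Finset.card_bij (fun ab _ => glueM p ab.1 ab.2) ?_ ?_ ?_).symm
  · rintro ⟨a, b⟩ hab
    rw [Finset.mem_product] at hab
    obtain ⟨h1, h2⟩ := glueM_mem p a b hab.1 hab.2
    simp only [mem_filter]
    exact ⟨h1, h2⟩
  · rintro ⟨a, b⟩ h1 ⟨a', b'⟩ h2 heq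
    obtain ⟨e1, e2⟩ := glueM_inj p a a' b b' heq
    simp [e1, e2]
  · intro m hm
    rw [mem_filter] at hm
    obtain ⟨a, ha, b, hb, heq⟩ := glueM_surj p m hm.1 hm.2
    exact ⟨⟨a, b⟩, Finset.mem_product.mpr ⟨ha, hb⟩, heq⟩

lemma cardM : ∀ n : ℕ, (MSet n).card = catalan n := by
  intro n
  induction n using Nat.strong_induction_on with
  | _ n ih =>
    match n with
    | 0 =>
      rw [catalan_zero]
      rw [show MSet 0 = univ from by ext m; simp [mem_MSet, Fin.elim0, Subsingleton.elim m default]]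
      simp
    | (k+1) =>
      rw [Finset.card_eq_sum_card_fiberwise (f := Ftouch) (t := univ) (fun x _ => mem_univ _)]
      rw [catalan_succ]
      apply Finset.sum_congr rfl
      intro p _
      rw [fiberM_card p, ih _ (by have := p.isLt; omega), ih _ (by omega)]

instance {n : ℕ} : DecidablePred (Avoids312 (n := n)) := fun π => by
  unfold Avoids312; infer_instance

instance {n : ℕ} : DecidablePred (Avoids321 (n := n)) := fun π => by
  unfold Avoids321; infer_instance

def A312 (n : ℕ) : Finset (Equiv.Perm (Fin n)) := univ.filter Avoids312

def A321 (n : ℕ) : Finset (Equiv.Perm (Fin n)) := univ.filter Avoids321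

/-- glue function for the 312 decomposition -/
def gfun {n : ℕ} (p : Fin (n+1)) (a : Fin (p : ℕ) → Fin (p : ℕ))
    (b : Fin (n - (p : ℕ)) → Fin (n - (p : ℕ))) : Fin (n+1) → Fin (n+1) := fun i =>
  if h : (i : ℕ) < (p : ℕ) then
    ⟨(a ⟨i, h⟩ : ℕ) + 1, by have := (a ⟨i, h⟩).isLt; have := p.isLt; omega⟩
  else if h2 : (i : ℕ) = (p : ℕ) then 0
  else
    ⟨(b ⟨(i : ℕ) - ((p : ℕ)+1), by have := i.isLt; omega⟩ : ℕ) + ((p : ℕ)+1), by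
      have := (b ⟨(i : ℕ) - ((p : ℕ)+1), by have := i.isLt; omega⟩).isLt; omega⟩

lemma gfun_val {n : ℕ} (p : Fin (n+1)) (a : Fin (p : ℕ) → Fin (p : ℕ))
    (b : Fin (n - (p : ℕ)) → Fin (n - (p : ℕ))) (i : Fin (n+1)) :
    ((h : (i : ℕ) < (p : ℕ)) → (gfun p a b i : ℕ) = (a ⟨i, h⟩ : ℕ) + 1) ∧
    ((i : ℕ) = (p : ℕ) → (gfun p a b i : ℕ) = 0) ∧
    ((h : (p : ℕ) < (i : ℕ)) → (gfun p a b i : ℕ)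
      = (b ⟨(i : ℕ) - ((p : ℕ)+1), by have := i.isLt; omega⟩ : ℕ) + ((p : ℕ)+1)) := by
  refine ⟨fun h => ?_, fun h => ?_, fun h => ?_⟩
  · simp only [gfun, dif_pos h]
  · simp only [gfun, dif_neg (by omega : ¬ (i:ℕ) < (p:ℕ)), dif_pos h]
    rfl
  · simp only [gfun, dif_neg (by omega : ¬ (i:ℕ) < (p:ℕ)), dif_neg (by omega : ¬ (i:ℕ) = (p:ℕ))]

lemma gfun_bounds {n : ℕ} (p : Fin (n+1)) (a : Fin (p : ℕ) → Fin (p : ℕ))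
    (b : Fin (n - (p : ℕ)) → Fin (n - (p : ℕ))) (i : Fin (n+1)) :
    ((i : ℕ) < (p : ℕ) → 1 ≤ (gfun p a b i : ℕ) ∧ (gfun p a b i : ℕ) ≤ (p : ℕ)) ∧
    ((i : ℕ) = (p : ℕ) → (gfun p a b i : ℕ) = 0) ∧
    ((p : ℕ) < (i : ℕ) → (p : ℕ) + 1 ≤ (gfun p a b i : ℕ)) := by
  obtain ⟨g1, g2, g3⟩ := gfun_val p a b i
  refine ⟨fun h => ?_, g2, fun h => ?_⟩
  · rw [g1 h]; have := (a ⟨i, h⟩).isLt; omega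
  · rw [g3 h]; omega

lemma gfun_inj {n : ℕ} (p : Fin (n+1)) (a : Fin (p : ℕ) → Fin (p : ℕ))
    (b : Fin (n - (p : ℕ)) → Fin (n - (p : ℕ)))
    (ha : Function.Injective a) (hb : Function.Injective b) :
    Function.Injective (gfun p a b) := by
  intro i j hij
  have hij' : (gfun p a b i : ℕ) = (gfun p a b j : ℕ) := by rw [hij]
  obtain ⟨bi1, bi2, bi3⟩ := gfun_bounds p a b i
  obtain ⟨bj1, bj2, bj3⟩ := gfun_bounds p a b j
  rcases Nat.lt_trichotomy (i : ℕ) (p : ℕ) with hi | hi | hi <;>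
    rcases Nat.lt_trichotomy (j : ℕ) (p : ℕ) with hj | hj | hj
  · -- both in first block
    have e1 := (gfun_val p a b i).1 hi
    have e2 := (gfun_val p a b j).1 hj
    have : a ⟨i, hi⟩ = a ⟨j, hj⟩ := by apply Fin.ext; omega
    have := ha this
    apply Fin.ext
    simpa using congrArg Fin.val this
  · exact absurd hij' (by have := bi1 hi; have := bj2 hj; omega)
  · exact absurd hij' (by have := bi1 hi; have := bj3 hj; omega)
  · exact absurd hij' (by have := bi2 hi; have := bj1 hj; omega)
  · apply Fin.ext; omega
  · exact absurd hij' (by have := bi2 hi; have := bj3 hj; omega)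
  · exact absurd hij' (by have := bi3 hi; have := bj1 hj; omega)
  · exact absurd hij' (by have := bi3 hi; have := bj2 hj; omega)
  · -- both in last block
    have e1 := (gfun_val p a b i).2.2 hi
    have e2 := (gfun_val p a b j).2.2 hj
    have : b ⟨(i:ℕ) - ((p:ℕ)+1), by have := i.isLt; omega⟩
        = b ⟨(j:ℕ) - ((p:ℕ)+1), by have := j.isLt; omega⟩ := by apply Fin.ext; omega
    have := hb this
    have := congrArg Fin.val this
    simp only at this
    apply Fin.ext
    have := i.isLt; have := j.isLt
    omega

/-- glue permutation -/
noncomputable def gPerm {n : ℕ} (p : Fin (n+1)) (a : Equiv.Perm (Fin (p : ℕ)))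
    (b : Equiv.Perm (Fin (n - (p : ℕ)))) : Equiv.Perm (Fin (n+1)) :=
  Equiv.ofBijective (gfun p a b)
    (Finite.injective_iff_bijective.mp (gfun_inj p a b a.injective b.injective))

lemma gPerm_apply {n : ℕ} (p : Fin (n+1)) (a : Equiv.Perm (Fin (p : ℕ)))
    (b : Equiv.Perm (Fin (n - (p : ℕ)))) (i : Fin (n+1)) :
    gPerm p a b i = gfun p a b i := rfl

lemma gPerm_mem {n : ℕ} (p : Fin (n+1)) (a : Equiv.Perm (Fin (p : ℕ)))
    (b : Equiv.Perm (Fin (n - (p : ℕ))))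
    (ha : Avoids312 a) (hb : Avoids312 b) :
    Avoids312 (gPerm p a b) ∧ (gPerm p a b) p = 0 := by
  constructor
  · intro i j k hij hjk ⟨h1, h2⟩
    rw [Fin.lt_def] at hij hjk h1 h2
    rw [gPerm_apply] at h1 h2
    rw [gPerm_apply] at h1 h2
    obtain ⟨bi1, bi2, bi3⟩ := gfun_bounds p a b i
    obtain ⟨bj1, bj2, bj3⟩ := gfun_bounds p a b j
    obtain ⟨bk1, bk2, bk3⟩ := gfun_bounds p a b k
    rcases Nat.lt_trichotomy (i : ℕ) (p : ℕ) with hi | hi | hi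
    · rcases Nat.lt_trichotomy (j : ℕ) (p : ℕ) with hj | hj | hj
      · rcases Nat.lt_trichotomy (k : ℕ) (p : ℕ) with hk | hk | hk
        · -- all in first block : pattern in a
          have e1 := (gfun_val p a b i).1 hi
          have e2 := (gfun_val p a b j).1 hj
          have e3 := (gfun_val p a b k).1 hk
          refine ha ⟨i, hi⟩ ⟨j, hj⟩ ⟨k, hk⟩ (by rw [Fin.lt_def]; exact hij)
            (by rw [Fin.lt_def]; exact hjk) ⟨?_, ?_⟩ <;> rw [Fin.lt_def] <;> omega
        · have := bk2 hk; omega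
        · have := bi1 hi; have := bk3 hk; omega
      · have := bj2 hj; omega
      · have := bi1 hi; have hk : (p:ℕ) < (k:ℕ) := by omega
        have := bk3 hk; omega
    · have := bi2 hi; omega
    · -- i in last block, so all are
      have hj : (p:ℕ) < (j:ℕ) := by omega
      have hk : (p:ℕ) < (k:ℕ) := by omega
      have e1 := (gfun_val p a b i).2.2 hi
      have e2 := (gfun_val p a b j).2.2 hj
      have e3 := (gfun_val p a b k).2.2 hk
      have hin := i.isLt; have hjn := j.isLt; have hkn := k.isLt
      refine hb ⟨(i:ℕ) - ((p:ℕ)+1), by omega⟩ ⟨(j:ℕ) - ((p:ℕ)+1), by omega⟩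
        ⟨(k:ℕ) - ((p:ℕ)+1), by omega⟩ (by rw [Fin.lt_def]; simp; omega)
        (by rw [Fin.lt_def]; simp; omega) ⟨?_, ?_⟩ <;> rw [Fin.lt_def] <;> omega
  · apply Fin.ext
    rw [gPerm_apply, (gfun_val p a b p).2.1 rfl]
    rfl

lemma gPerm_inj {n : ℕ} (p : Fin (n+1)) (a a' : Equiv.Perm (Fin (p : ℕ)))
    (b b' : Equiv.Perm (Fin (n - (p : ℕ))))
    (h : gPerm p a b = gPerm p a' b') : a = a' ∧ b = b' := by
  have hfun : ∀ i, gfun p (⇑a) (⇑b) i = gfun p (⇑a') (⇑b') i := by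
    intro i
    have := congrArg (fun π : Equiv.Perm (Fin (n+1)) => π i) h
    simpa [gPerm_apply] using this
  constructor
  · apply Equiv.ext
    intro i
    have hi : ((i : ℕ) : ℕ) < (p : ℕ) := i.isLt
    set I : Fin (n+1) := ⟨(i:ℕ), by have := p.isLt; omega⟩ with hI
    have h1 := (gfun_val p (⇑a) (⇑b) I).1 hi
    have h2 := (gfun_val p (⇑a') (⇑b') I).1 hi
    rw [hfun I] at h1
    have : (⟨(I : ℕ), hi⟩ : Fin (p:ℕ)) = i := by apply Fin.ext; rfl
    rw [this] at h1 h2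
    apply Fin.ext
    omega
  · apply Equiv.ext
    intro j
    have hj : (j : ℕ) < n - (p : ℕ) := j.isLt
    set I : Fin (n+1) := ⟨(p : ℕ) + 1 + (j : ℕ), by omega⟩ with hI
    have hpi : (p : ℕ) < (I : ℕ) := by simp [hI]; omega
    have h1 := (gfun_val p (⇑a) (⇑b) I).2.2 hpi
    have h2 := (gfun_val p (⇑a') (⇑b') I).2.2 hpi
    rw [hfun I] at h1
    have heq : (⟨(I : ℕ) - ((p:ℕ)+1), by have := I.isLt; omega⟩ : Fin (n - (p:ℕ))) = j := by
      apply Fin.ext; simp [hI]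
    rw [heq] at h1 h2
    apply Fin.ext
    omega

-- structure of a 312-avoiding permutation around the position of 0
lemma structure312 {n : ℕ} (π : Equiv.Perm (Fin (n+1))) (hπ : Avoids312 π)
    (p : Fin (n+1)) (hp : π p = 0) :
    (∀ i : Fin (n+1), (i : ℕ) < (p : ℕ) → 1 ≤ (π i : ℕ) ∧ (π i : ℕ) ≤ (p : ℕ)) ∧
    (∀ k : Fin (n+1), (p : ℕ) < (k : ℕ) → (p : ℕ) + 1 ≤ (π k : ℕ)) := by
  have hne : ∀ i : Fin (n+1), i ≠ p → (π i : ℕ) ≠ 0 := by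
    intro i hip h0
    exact hip (π.injective (by rw [hp]; exact Fin.ext h0))
  -- cross inequality
  have hcross : ∀ i k : Fin (n+1), (i : ℕ) < (p : ℕ) → (p : ℕ) < (k : ℕ) →
      (π i : ℕ) < (π k : ℕ) := by
    intro i k hi hk
    by_contra hc
    have hik : i ≠ k := by intro h; rw [h] at hi; omega
    have hne2 : (π i : ℕ) ≠ (π k : ℕ) := by
      intro h; exact hik (π.injective (Fin.ext h))
    have hk0 : (π k : ℕ) ≠ 0 := hne k (by intro h; rw [h] at hk; omega)
    refine hπ i p k (by rw [Fin.lt_def]; omega) (by rw [Fin.lt_def]; omega) ⟨?_, ?_⟩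
    · rw [Fin.lt_def, hp]; simp only [Fin.val_zero]; omega
    · rw [Fin.lt_def]; omega
  constructor
  · intro i hi
    refine ⟨by have := hne i (by intro h; rw [h] at hi; omega); omega, ?_⟩
    by_contra hc
    -- π i > p ; consider image of Ioi p
    set B : Finset (Fin (n+1)) := (univ.filter (fun k : Fin (n+1) => (p:ℕ) < (k:ℕ))).image π with hB
    have hBcard : B.card = n - (p : ℕ) := by
      rw [hB, Finset.card_image_of_injective _ π.injective]
      have : (univ.filter (fun k : Fin (n+1) => (p:ℕ) < (k:ℕ))) = Finset.Ioi p := by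
        ext x
        simp only [Finset.mem_filter, Finset.mem_univ, true_and, Finset.mem_Ioi, Fin.lt_def]
      rw [this, Fin.card_Ioi]
      simp
    have hBsub : B ⊆ univ.filter (fun x : Fin (n+1) => (π i : ℕ) < (x : ℕ)) := by
      intro x hx
      rw [hB, Finset.mem_image] at hx
      obtain ⟨k, hk, rfl⟩ := hx
      rw [Finset.mem_filter] at hk ⊢
      exact ⟨mem_univ _, hcross i k hi hk.2⟩
    have hsubcard : (univ.filter (fun x : Fin (n+1) => (π i : ℕ) < (x : ℕ))).card
        = n - (π i : ℕ) := by
      have : (univ.filter (fun x : Fin (n+1) => (π i : ℕ) < (x : ℕ))) = Finset.Ioi (π i) := by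
        ext x
        simp only [Finset.mem_filter, Finset.mem_univ, true_and, Finset.mem_Ioi, Fin.lt_def]
      rw [this, Fin.card_Ioi]
      simp
    have := Finset.card_le_card hBsub
    rw [hBcard, hsubcard] at this
    have hpn := p.isLt
    omega
  · intro k hk
    by_contra hc
    set C : Finset (Fin (n+1)) := (univ.filter (fun i : Fin (n+1) => (i:ℕ) ≤ (p:ℕ))).image π with hC
    have hCcard : C.card = (p : ℕ) + 1 := by
      rw [hC, Finset.card_image_of_injective _ π.injective]
      have : (univ.filter (fun i : Fin (n+1) => (i:ℕ) ≤ (p:ℕ))) = Finset.Iic p := by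
        ext x
        simp only [Finset.mem_filter, Finset.mem_univ, true_and, Finset.mem_Iic, Fin.le_def]
      rw [this, Fin.card_Iic]
    have hCsub : C ⊆ univ.filter (fun x : Fin (n+1) => (x : ℕ) < (π k : ℕ)) := by
      intro x hx
      rw [hC, Finset.mem_image] at hx
      obtain ⟨i, hi, rfl⟩ := hx
      rw [Finset.mem_filter] at hi ⊢
      refine ⟨mem_univ _, ?_⟩
      rcases Nat.lt_or_ge (i : ℕ) (p : ℕ) with h | h
      · exact hcross i k h hk
      · have : i = p := by apply Fin.ext; omega
        rw [this, hp]
        have := hne k (by intro h2; rw [h2] at hk; omega)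
        simp only [Fin.val_zero]
        omega
    have hsubcard : (univ.filter (fun x : Fin (n+1) => (x : ℕ) < (π k : ℕ))).card
        = (π k : ℕ) := by
      have : (univ.filter (fun x : Fin (n+1) => (x : ℕ) < (π k : ℕ))) = Finset.Iio (π k) := by
        ext x
        simp only [Finset.mem_filter, Finset.mem_univ, true_and, Finset.mem_Iio, Fin.lt_def]
      rw [this, Fin.card_Iio]
    have := Finset.card_le_card hCsub
    rw [hCcard, hsubcard] at this
    omega

set_option maxHeartbeats 1000000 in
lemma gPerm_surj {n : ℕ} (p : Fin (n+1)) (π : Equiv.Perm (Fin (n+1)))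
    (hπ : Avoids312 π) (hp : π p = 0) :
    ∃ a, Avoids312 a ∧ ∃ b, Avoids312 b ∧ gPerm p a b = π := by
  obtain ⟨hlow, hhigh⟩ := structure312 π hπ p hp
  have hval : ∀ i : Fin (n+1), (π i : ℕ) ≤ n := fun i => by have := (π i).isLt; omega
  have hpn := p.isLt
  -- the small permutations as functions
  obtain ⟨af, hafval⟩ : ∃ af : Fin (p : ℕ) → Fin (p : ℕ),
      ∀ i : Fin (p : ℕ), (af i : ℕ) = (π ⟨(i:ℕ), by omega⟩ : ℕ) - 1 := by
    refine ⟨fun i => ⟨(π ⟨(i:ℕ), by omega⟩ : ℕ) - 1, ?_⟩, fun i => rfl⟩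
    have := hlow ⟨(i:ℕ), by omega⟩ (by simpa using i.isLt)
    omega
  obtain ⟨bf, hbfval⟩ : ∃ bf : Fin (n - (p : ℕ)) → Fin (n - (p : ℕ)),
      ∀ j : Fin (n - (p : ℕ)),
        (bf j : ℕ) = (π ⟨(p:ℕ)+1+(j:ℕ), by have := j.isLt; omega⟩ : ℕ) - ((p:ℕ)+1) := by
    refine ⟨fun j => ⟨(π ⟨(p:ℕ)+1+(j:ℕ), by have := j.isLt; omega⟩ : ℕ) - ((p:ℕ)+1), ?_⟩,
      fun j => rfl⟩
    have h1 := hhigh ⟨(p:ℕ)+1+(j:ℕ), by have := j.isLt; omega⟩ (by simp only; omega)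
    have h2 := hval ⟨(p:ℕ)+1+(j:ℕ), by have := j.isLt; omega⟩
    have := j.isLt
    omega
  have hlow' : ∀ i : Fin (p:ℕ), 1 ≤ (π ⟨(i:ℕ), by omega⟩ : ℕ) ∧ (π ⟨(i:ℕ), by omega⟩ : ℕ) ≤ (p:ℕ) :=
    fun i => hlow ⟨(i:ℕ), by omega⟩ (by simpa using i.isLt)
  have hhigh' : ∀ j : Fin (n - (p:ℕ)), (p:ℕ)+1 ≤ (π ⟨(p:ℕ)+1+(j:ℕ), by have := j.isLt; omega⟩ : ℕ) :=
    fun j => hhigh ⟨(p:ℕ)+1+(j:ℕ), by have := j.isLt; omega⟩ (by simp only; omega)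
  have hainj : Function.Injective af := by
    intro i j hij
    have hij' := congrArg Fin.val hij
    rw [hafval i, hafval j] at hij'
    have h1 := hlow' i
    have h2 := hlow' j
    have hv : (π ⟨(i:ℕ), by omega⟩ : ℕ) = (π ⟨(j:ℕ), by omega⟩ : ℕ) := by omega
    have := π.injective (Fin.ext hv)
    apply Fin.ext
    simpa using congrArg Fin.val this
  have hbinj : Function.Injective bf := by
    intro i j hij
    have hij' := congrArg Fin.val hij
    rw [hbfval i, hbfval j] at hij'
    have h1 := hhigh' i
    have h2 := hhigh' j
    have hv : (π ⟨(p:ℕ)+1+(i:ℕ), by have := i.isLt; omega⟩ : ℕ)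
        = (π ⟨(p:ℕ)+1+(j:ℕ), by have := j.isLt; omega⟩ : ℕ) := by omega
    have := π.injective (Fin.ext hv)
    have := congrArg Fin.val this
    simp only at this
    apply Fin.ext
    omega
  refine ⟨Equiv.ofBijective af (Finite.injective_iff_bijective.mp hainj), ?_,
    Equiv.ofBijective bf (Finite.injective_iff_bijective.mp hbinj), ?_, ?_⟩
  · intro i j k hij hjk hpat
    obtain ⟨h1, h2⟩ := hpat
    rw [Fin.lt_def] at hij hjk h1 h2
    simp only [Equiv.ofBijective_apply] at h1 h2
    rw [hafval j, hafval k] at h1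
    rw [hafval k, hafval i] at h2
    have b1 := hlow' i
    have b2 := hlow' j
    have b3 := hlow' k
    refine hπ ⟨(i:ℕ), by omega⟩ ⟨(j:ℕ), by omega⟩ ⟨(k:ℕ), by omega⟩
      (by rw [Fin.lt_def]; simpa using hij) (by rw [Fin.lt_def]; simpa using hjk) ⟨?_, ?_⟩
      <;> rw [Fin.lt_def] <;> omega
  · intro i j k hij hjk hpat
    obtain ⟨h1, h2⟩ := hpat
    rw [Fin.lt_def] at hij hjk h1 h2
    simp only [Equiv.ofBijective_apply] at h1 h2
    rw [hbfval j, hbfval k] at h1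
    rw [hbfval k, hbfval i] at h2
    have b1 := hhigh' i
    have b2 := hhigh' j
    have b3 := hhigh' k
    refine hπ ⟨(p:ℕ)+1+(i:ℕ), by have := i.isLt; omega⟩
      ⟨(p:ℕ)+1+(j:ℕ), by have := j.isLt; omega⟩
      ⟨(p:ℕ)+1+(k:ℕ), by have := k.isLt; omega⟩
      (by rw [Fin.lt_def]; simp only; omega) (by rw [Fin.lt_def]; simp only; omega) ⟨?_, ?_⟩
      <;> rw [Fin.lt_def] <;> omega
  · apply Equiv.ext
    intro i
    apply Fin.ext
    rw [gPerm_apply]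
    rcases Nat.lt_trichotomy (i : ℕ) (p : ℕ) with hi | hi | hi
    · rw [(gfun_val p _ _ i).1 hi]
      simp only [Equiv.ofBijective_apply]
      rw [hafval ⟨(i:ℕ), hi⟩]
      have b1 := hlow' ⟨(i:ℕ), hi⟩
      have : (⟨((⟨(i:ℕ), hi⟩ : Fin (p:ℕ)) : ℕ), by omega⟩ : Fin (n+1)) = i := by
        apply Fin.ext; rfl
      rw [this] at b1 ⊢
      omega
    · rw [(gfun_val p _ _ i).2.1 hi]
      have : i = p := Fin.ext hi
      rw [this, hp]
      rfl
    · rw [(gfun_val p _ _ i).2.2 hi]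
      simp only [Equiv.ofBijective_apply]
      rw [hbfval ⟨(i:ℕ) - ((p:ℕ)+1), by have := i.isLt; omega⟩]
      have b1 := hhigh i hi
      have : (⟨(p:ℕ)+1+((⟨(i:ℕ) - ((p:ℕ)+1), by have := i.isLt; omega⟩ : Fin (n - (p:ℕ))) : ℕ),
          by have := i.isLt; omega⟩ : Fin (n+1)) = i := by apply Fin.ext; simp only; omega
      rw [this]
      omega

lemma inv_zero_eq_iff {n : ℕ} (π : Equiv.Perm (Fin (n+1))) (p : Fin (n+1)) :
    π⁻¹ 0 = p ↔ π p = 0 := by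
  rw [Equiv.Perm.inv_def, Equiv.symm_apply_eq, eq_comm]

lemma fiberA_card {n : ℕ} (p : Fin (n+1)) :
    ((A312 (n+1)).filter (fun π => π⁻¹ 0 = p)).card
      = (A312 (p : ℕ)).card * (A312 (n - (p : ℕ))).card := by
  rw [← Finset.card_product]
  refine (Finset.card_bij (fun ab _ => gPerm p ab.1 ab.2) ?_ ?_ ?_).symm
  · rintro ⟨a, b⟩ hab
    rw [Finset.mem_product] at hab
    have ha := (Finset.mem_filter.mp hab.1).2
    have hb := (Finset.mem_filter.mp hab.2).2
    obtain ⟨h1, h2⟩ := gPerm_mem p a b ha hb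
    simp only [mem_filter, A312, mem_univ, true_and]
    exact ⟨h1, (inv_zero_eq_iff _ p).mpr h2⟩
  · rintro ⟨a, b⟩ h1 ⟨a', b'⟩ h2 heq
    obtain ⟨e1, e2⟩ := gPerm_inj p a a' b b' heq
    simp [e1, e2]
  · intro π hπ
    rw [mem_filter] at hπ
    obtain ⟨hπ1, hπ2⟩ := hπ
    have hav : Avoids312 π := (Finset.mem_filter.mp hπ1).2
    obtain ⟨a, ha, b, hb, heq⟩ := gPerm_surj p π hav ((inv_zero_eq_iff _ p).mp hπ2)
    exact ⟨⟨a, b⟩, Finset.mem_product.mpr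
      ⟨Finset.mem_filter.mpr ⟨mem_univ _, ha⟩, Finset.mem_filter.mpr ⟨mem_univ _, hb⟩⟩, heq⟩

lemma cardA312 : ∀ n : ℕ, (A312 n).card = catalan n := by
  intro n
  induction n using Nat.strong_induction_on with
  | _ n ih =>
    match n with
    | 0 =>
      rw [catalan_zero]
      rw [show A312 0 = univ from by
        ext π
        simp only [A312, mem_filter, mem_univ, true_and, iff_true]
        intro i j k
        exact i.elim0]
      simp
    | (k+1) =>
      rw [Finset.card_eq_sum_card_fiberwise (f := fun π => π⁻¹ 0) (t := univ)
        (fun x _ => mem_univ _)]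
      rw [catalan_succ]
      apply Finset.sum_congr rfl
      intro p _
      rw [fiberA_card p, ih _ (by have := p.isLt; omega), ih _ (by omega)]

section RMax

variable {n : ℕ}

/-- running maximum, as a natural number -/
def rmax (π : Equiv.Perm (Fin n)) (p : Fin n) : ℕ :=
  (Finset.Iic p).sup (fun q => (π q : ℕ))

lemma rmax_lt (π : Equiv.Perm (Fin n)) (p : Fin n) : rmax π p < n := by
  rw [rmax, Finset.sup_lt_iff (by simpa using p.pos)]
  exact fun b _ => (π b).isLt

lemma le_rmax (π : Equiv.Perm (Fin n)) {q p : Fin n} (h : q ≤ p) : (π q : ℕ) ≤ rmax π p :=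
  Finset.le_sup (f := fun q => (π q : ℕ)) (Finset.mem_Iic.mpr h)

lemma rmax_mono (π : Equiv.Perm (Fin n)) {p q : Fin n} (h : p ≤ q) : rmax π p ≤ rmax π q :=
  Finset.sup_mono (Finset.Iic_subset_Iic.mpr h)

lemma rmax_achieved (π : Equiv.Perm (Fin n)) (p : Fin n) :
    ∃ q : Fin n, q ≤ p ∧ (π q : ℕ) = rmax π p := by
  obtain ⟨q, hq, he⟩ := Finset.exists_mem_eq_sup (Finset.Iic p) ⟨p, Finset.mem_Iic.mpr le_rfl⟩
    (fun q => (π q : ℕ))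
  exact ⟨q, Finset.mem_Iic.mp hq, he.symm⟩

lemma rmax_ge (π : Equiv.Perm (Fin n)) (p : Fin n) : (p : ℕ) ≤ rmax π p := by
  have himg : (Finset.Iic p).image (fun q => (π q : ℕ)) ⊆ Finset.Iic (rmax π p) := by
    intro x hx
    rw [Finset.mem_image] at hx
    obtain ⟨q, hq, rfl⟩ := hx
    exact Finset.mem_Iic.mpr (le_rmax π (Finset.mem_Iic.mp hq))
  have hcard := Finset.card_le_card himg
  rw [Finset.card_image_of_injective _
    (fun a b hab => π.injective (Fin.ext hab)), Fin.card_Iic, Nat.card_Iic] at hcard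
  omega

/-- running max as an element of `MSet` -/
def RFun (π : Equiv.Perm (Fin n)) : Fin n → Fin n := fun p => ⟨rmax π p, rmax_lt π p⟩

lemma RFun_mem (π : Equiv.Perm (Fin n)) : RFun π ∈ MSet n := by
  rw [mem_MSet]
  exact ⟨fun i j hij => by rw [Fin.le_def] at hij ⊢; exact rmax_mono π hij,
    fun i => rmax_ge π i⟩

end RMax

section Records

variable {n : ℕ}

/-- record positions of a function -/
def Sm (m : Fin n → Fin n) : Finset (Fin n) :=
  univ.filter (fun p => ∀ q : Fin n, q < p → (m q : ℕ) < (m p : ℕ))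

lemma mem_Sm {m : Fin n → Fin n} {p : Fin n} :
    p ∈ Sm m ↔ ∀ q : Fin n, q < p → (m q : ℕ) < (m p : ℕ) := by
  simp [Sm]

/-- at a record position the permutation value equals the running max -/
lemma record_spec (π : Equiv.Perm (Fin n)) (p : Fin n) :
    (p ∈ Sm (RFun π) → (π p : ℕ) = rmax π p) ∧
    (p ∉ Sm (RFun π) → (π p : ℕ) < rmax π p) ∧
    (p ∈ Sm (RFun π) ↔ ∀ q : Fin n, q < p → (π q : ℕ) < (π p : ℕ)) := by
  have hRv : ∀ q : Fin n, ((RFun π q : Fin n) : ℕ) = rmax π q := fun q => rfl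
  have h1 : p ∈ Sm (RFun π) → (π p : ℕ) = rmax π p := by
    intro hp
    rw [mem_Sm] at hp
    obtain ⟨r, hr, he⟩ := rmax_achieved π p
    rcases eq_or_lt_of_le hr with h | h
    · rw [h] at he; exact he
    · exfalso
      have := hp r h
      rw [hRv, hRv] at this
      have := le_rmax π (le_refl r)
      omega
  refine ⟨h1, ?_, ?_⟩
  · intro hp
    rw [mem_Sm] at hp
    push_neg at hp
    obtain ⟨q, hq, hge⟩ := hp
    rw [hRv, hRv] at hge
    -- rmax π p ≤ rmax π q with q < p; so π p < rmax π p
    have h2 : rmax π q = rmax π p := le_antisymm (rmax_mono π (le_of_lt hq)) hge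
    obtain ⟨r, hr, he⟩ := rmax_achieved π q
    have hrp : r ≠ p := by
      intro h; rw [h] at hr; exact absurd (lt_of_lt_of_le hq hr) (lt_irrefl _)
    have : (π r : ℕ) ≠ (π p : ℕ) := fun h => hrp (π.injective (Fin.ext h))
    have := le_rmax π (le_refl p)
    omega
  · constructor
    · intro hp q hq
      have hpe := h1 hp
      rw [mem_Sm] at hp
      have := hp q hq
      rw [hRv, hRv] at this
      have := le_rmax π (le_refl q)
      omega
    · intro h
      rw [mem_Sm]
      intro q hq
      rw [hRv, hRv]
      -- π p = rmax π p here too : every earlier value is smaller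
      have hpe : (π p : ℕ) = rmax π p := by
        obtain ⟨r, hr, he⟩ := rmax_achieved π p
        rcases eq_or_lt_of_le hr with h2 | h2
        · rw [h2] at he; exact he
        · have := h r h2; have := le_rmax π (le_refl p); omega
      obtain ⟨r, hr, he⟩ := rmax_achieved π q
      have := h r (lt_of_le_of_lt hr hq)
      omega

/-- non-record values are not record values -/
lemma nonrecord_value (π : Equiv.Perm (Fin n)) (p : Fin n) (hp : p ∉ Sm (RFun π)) :
    π p ∉ (Sm (RFun π)).image π := by
  intro hmem
  rw [Finset.mem_image] at hmem
  obtain ⟨s, hs, he⟩ := hmem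
  have : s = p := π.injective he
  rw [this] at hs
  exact hp hs

/-- non-records of a 321-avoiding permutation increase -/
lemma nonrecord_mono (π : Equiv.Perm (Fin n)) (hπ : Avoids321 π)
    {j k : Fin n} (hj : j ∉ Sm (RFun π)) (hjk : j < k) : (π j : ℕ) < (π k : ℕ) := by
  by_contra hc
  have hne : (π j : ℕ) ≠ (π k : ℕ) := by
    intro h
    have : j = k := π.injective (Fin.ext h)
    rw [this] at hjk
    exact lt_irrefl _ hjk
  -- find an earlier bigger element
  have h2 := (record_spec π j).2.1 hj
  obtain ⟨r, hr, he⟩ := rmax_achieved π j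
  have hrj : r ≠ j := by intro h; rw [h] at he; omega
  have hrj2 : r < j := lt_of_le_of_ne hr hrj
  exact hπ r j k hrj2 hjk ⟨by rw [Fin.lt_def]; omega, by rw [Fin.lt_def]; omega⟩

end Records

section Unique

variable {n : ℕ}

/-- two strictly monotone maps on `P` into `V` with `#P = #V` agree -/
lemma eq_on_of_strictMonoOn (P V : Finset (Fin n)) (h : P.card = V.card)
    {f g : Fin n → Fin n} (hf : ∀ p ∈ P, ∀ q ∈ P, p < q → f p < f q)
    (hg : ∀ p ∈ P, ∀ q ∈ P, p < q → g p < g q)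
    (hfV : ∀ p ∈ P, f p ∈ V) (hgV : ∀ p ∈ P, g p ∈ V) :
    ∀ p ∈ P, f p = g p := by
  have e := P.orderIsoOfFin rfl
  have hFmono : StrictMono (fun t : Fin P.card => f (e t)) := by
    intro s t hst
    exact hf _ (e s).2 _ (e t).2 (by exact e.lt_iff_lt.mpr hst)
  have hGmono : StrictMono (fun t : Fin P.card => g (e t)) := by
    intro s t hst
    exact hg _ (e s).2 _ (e t).2 (by exact e.lt_iff_lt.mpr hst)
  have hF := Finset.orderEmbOfFin_unique' h.symm
    (f := OrderEmbedding.ofStrictMono _ hFmono) (fun t => hfV _ (e t).2)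
  have hG := Finset.orderEmbOfFin_unique' h.symm
    (f := OrderEmbedding.ofStrictMono _ hGmono) (fun t => hgV _ (e t).2)
  intro p hp
  have : e (e.symm ⟨p, hp⟩) = ⟨p, hp⟩ := e.apply_symm_apply _
  have hfp : f p = (OrderEmbedding.ofStrictMono _ hFmono) (e.symm ⟨p, hp⟩) := by
    simp [OrderEmbedding.ofStrictMono, this]
  have hgp : g p = (OrderEmbedding.ofStrictMono _ hGmono) (e.symm ⟨p, hp⟩) := by
    simp [OrderEmbedding.ofStrictMono, this]
  rw [hfp, hgp, hF, hG]

end Unique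

section CardFacts

variable {n : ℕ}

lemma Sm_strictMono (m : Fin n → Fin n) {p q : Fin n} (hp : p ∈ Sm m) (hq : q ∈ Sm m)
    (hpq : p < q) : (m p : ℕ) < (m q : ℕ) := (mem_Sm.mp hq) p hpq

lemma card_W_eq (m : Fin n → Fin n) : ((Sm m).image m).card = (Sm m).card :=
  Finset.card_image_of_injOn (fun p hp q hq hpq => by
    by_contra hne
    rcases Fin.lt_or_lt_of_ne hne with h | h
    · have := Sm_strictMono m hp hq h; omega
    · have := Sm_strictMono m hq hp h; omega)

lemma card_V_eq_card_P (m : Fin n → Fin n) :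
    (((Sm m).image m)ᶜ : Finset (Fin n)).card = ((Sm m)ᶜ : Finset (Fin n)).card := by
  rw [Finset.card_compl, Finset.card_compl, card_W_eq]

/-- there is a record position weakly before p achieving the value m p -/
lemma exists_record (m : Fin n → Fin n) (hm : m ∈ MSet n) (p : Fin n) :
    ∃ s : Fin n, s ∈ Sm m ∧ s ≤ p ∧ m s = m p := by
  obtain ⟨hmono, -⟩ := (mem_MSet m).mp hm
  have hne : (univ.filter (fun q : Fin n => m q = m p)).Nonempty := ⟨p, by simp⟩
  set s := (univ.filter (fun q : Fin n => m q = m p)).min' hne with hs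
  have hsmem : m s = m p := by
    have := Finset.min'_mem _ hne
    rw [← hs] at this
    simpa using this
  have hsle : s ≤ p := Finset.min'_le _ _ (by simp)
  refine ⟨s, ?_, hsle, hsmem⟩
  rw [mem_Sm]
  intro q hq
  have h1 : m q ≤ m s := by rw [hsmem]; exact hmono q p (le_trans (le_of_lt hq) hsle)
  rcases eq_or_lt_of_le h1 with h | h
  · exfalso
    have : q ∈ univ.filter (fun q : Fin n => m q = m p) := by
      simp only [mem_filter, mem_univ, true_and]
      rw [← hsmem]; exact Fin.ext (congrArg Fin.val h).symm ▸ h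
    have := Finset.min'_le _ _ this
    rw [← hs] at this
    exact absurd (lt_of_lt_of_le hq this) (lt_irrefl _)
  · rw [Fin.lt_def] at h; exact h

end CardFacts

section Inj321

variable {n : ℕ}

lemma RFun_inj_on_A321 (π π' : Equiv.Perm (Fin n)) (hπ : Avoids321 π) (hπ' : Avoids321 π')
    (h : RFun π = RFun π') : π = π' := by
  have hrm : ∀ p, rmax π p = rmax π' p := fun p => by
    have := congrArg (fun f => (f p : ℕ)) h
    simpa [RFun] using this
  have hS : Sm (RFun π) = Sm (RFun π') := by rw [h]
  apply Equiv.ext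
  intro p
  by_cases hp : p ∈ Sm (RFun π)
  · have h1 := (record_spec π p).1 hp
    have h2 := (record_spec π' p).1 (hS ▸ hp)
    apply Fin.ext
    rw [h1, h2, hrm]
  · -- non-record positions : use uniqueness of monotone maps
    set P : Finset (Fin n) := (Sm (RFun π))ᶜ with hP
    set V : Finset (Fin n) := (((Sm (RFun π)).image (RFun π))ᶜ : Finset (Fin n)) with hV
    have hcard : P.card = V.card := (card_V_eq_card_P (RFun π)).symm
    have hval : ∀ q ∈ P, π q ∈ V ∧ π' q ∈ V := by
      intro q hq
      rw [hP, Finset.mem_compl] at hq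
      constructor
      · rw [hV, Finset.mem_compl]
        intro hmem
        rw [Finset.mem_image] at hmem
        obtain ⟨s, hs, he⟩ := hmem
        -- (RFun π) s = π s at records
        have hrs := (record_spec π s).1 hs
        have : π s = π q := by
          apply Fin.ext; rw [hrs]
          exact congrArg Fin.val he
        have := π.injective this
        rw [this] at hs
        exact hq hs
      · rw [hV, Finset.mem_compl]
        intro hmem
        rw [Finset.mem_image] at hmem
        obtain ⟨s, hs, he⟩ := hmem
        have hrs := (record_spec π' s).1 (hS ▸ hs)
        have : π' s = π' q := by
          apply Fin.ext; rw [hrs, ← hrm]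
          exact congrArg Fin.val he
        have := π'.injective this
        rw [this] at hs
        exact hq hs
    have := eq_on_of_strictMonoOn P V hcard
      (f := ⇑π) (g := ⇑π')
      (fun a ha b hb hab => by
        rw [Fin.lt_def]
        exact nonrecord_mono π hπ (by rw [hP, Finset.mem_compl] at ha; exact ha) hab)
      (fun a ha b hb hab => by
        rw [Fin.lt_def]
        exact nonrecord_mono π' hπ' (by
          rw [hP, Finset.mem_compl, hS] at ha; exact ha) hab)
      (fun q hq => (hval q hq).1)
      (fun q hq => (hval q hq).2)
    exact this p (by rw [hP, Finset.mem_compl]; exact hp)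

end Inj321

section Fill

variable {n : ℕ}

/-- number of elements of `A` below the `t`-th element of `A` is `t` -/
lemma card_filter_lt_orderEmbOfFin (A : Finset (Fin n)) {k : ℕ} (h : A.card = k) (t : Fin k) :
    (A.filter (· < A.orderEmbOfFin h t)).card = (t : ℕ) := by
  have himg : A.filter (· < A.orderEmbOfFin h t)
      = (univ.filter (fun s : Fin k => s < t)).image (A.orderEmbOfFin h) := by
    ext x
    simp only [Finset.mem_filter, Finset.mem_image, Finset.mem_univ, true_and]
    constructor
    · rintro ⟨hxA, hxlt⟩
      have : x ∈ Set.range (A.orderEmbOfFin h) := by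
        rw [Finset.range_orderEmbOfFin]; exact hxA
      obtain ⟨s, rfl⟩ := this
      exact ⟨s, (A.orderEmbOfFin h).lt_iff_lt.mp hxlt, rfl⟩
    · rintro ⟨s, hst, rfl⟩
      exact ⟨Finset.orderEmbOfFin_mem _ _ _, (A.orderEmbOfFin h).lt_iff_lt.mpr hst⟩
  rw [himg, Finset.card_image_of_injective _ (A.orderEmbOfFin h).injective]
  have : (univ.filter (fun s : Fin k => s < t)) = Finset.Iio t := by
    ext s; simp
  rw [this, Fin.card_Iio]

variable (m : Fin n → Fin n)

/-- fill in the non-record positions with the non-record values in increasing order -/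
def fillf : Fin n → Fin n := fun p =>
  if h : p ∈ Sm m then m p
  else (((Sm m).image m)ᶜ : Finset (Fin n)).orderEmbOfFin (card_V_eq_card_P m)
    ((((Sm m)ᶜ : Finset (Fin n)).orderIsoOfFin rfl).symm ⟨p, by rwa [Finset.mem_compl]⟩)

lemma fillf_at_S {p : Fin n} (h : p ∈ Sm m) : fillf m p = m p := dif_pos h

lemma fillf_at_P {p : Fin n} (h : p ∉ Sm m) :
    fillf m p = (((Sm m).image m)ᶜ : Finset (Fin n)).orderEmbOfFin (card_V_eq_card_P m)
      ((((Sm m)ᶜ : Finset (Fin n)).orderIsoOfFin rfl).symm ⟨p, by rwa [Finset.mem_compl]⟩) :=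
  dif_neg h

lemma fillf_mem_V {p : Fin n} (h : p ∉ Sm m) : fillf m p ∈ (((Sm m).image m)ᶜ : Finset (Fin n)) := by
  rw [fillf_at_P m h]
  exact Finset.orderEmbOfFin_mem _ _ _

lemma fillf_mono_P {p q : Fin n} (hp : p ∉ Sm m) (hq : q ∉ Sm m) (hpq : p < q) :
    fillf m p < fillf m q := by
  rw [fillf_at_P m hp, fillf_at_P m hq]
  apply (Finset.orderEmbOfFin _ _).lt_iff_lt.mpr
  apply (OrderIso.lt_iff_lt _).mpr
  exact hpq

lemma fillf_key (hm : m ∈ MSet n) {p : Fin n} (hp : p ∉ Sm m) : (fillf m p : ℕ) < (m p : ℕ) := by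
  obtain ⟨hmono, hge⟩ := (mem_MSet m).mp hm
  set S := Sm m with hS
  set P : Finset (Fin n) := Sᶜ with hPdef
  set W : Finset (Fin n) := S.image m with hW
  set V : Finset (Fin n) := Wᶜ with hV
  set t := ((P.orderIsoOfFin rfl).symm ⟨p, by rwa [Finset.mem_compl]⟩) with ht
  -- p is the t-th element of P
  have hpt : p = P.orderEmbOfFin rfl t := by
    have := (P.orderIsoOfFin rfl).apply_symm_apply ⟨p, by rwa [Finset.mem_compl]⟩
    rw [← ht] at this
    exact congrArg Subtype.val this.symm
  have hA : (P.filter (· < p)).card = (t : ℕ) := by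
    conv_lhs => rw [hpt]
    exact card_filter_lt_orderEmbOfFin P rfl t
  have hfp : fillf m p = V.orderEmbOfFin (card_V_eq_card_P m) t := fillf_at_P m hp
  have hB : (V.filter (· < fillf m p)).card = (t : ℕ) := by
    rw [hfp]
    exact card_filter_lt_orderEmbOfFin V (card_V_eq_card_P m) t
  -- partition of Iic p
  have hc : (S.filter (· ≤ p)).card + (P.filter (· ≤ p)).card = (p : ℕ) + 1 := by
    have h1 : S.filter (· ≤ p) = (Finset.Iic p).filter (· ∈ S) := by
      ext x; simp only [Finset.mem_filter, Finset.mem_Iic]; tauto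
    have h2 : P.filter (· ≤ p) = (Finset.Iic p).filter (fun x => ¬ x ∈ S) := by
      ext x; simp only [Finset.mem_filter, Finset.mem_Iic, hPdef, Finset.mem_compl]; tauto
    rw [h1, h2, Finset.card_filter_add_card_filter_not, Fin.card_Iic]
  have hc' : (P.filter (· ≤ p)).card = (P.filter (· < p)).card + 1 := by
    have : P.filter (· ≤ p) = insert p (P.filter (· < p)) := by
      ext x
      simp only [Finset.mem_filter, Finset.mem_insert]
      constructor
      · rintro ⟨hxP, hxle⟩
        rcases eq_or_lt_of_le hxle with h | h
        · left; exact h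
        · right; exact ⟨hxP, h⟩
      · rintro (rfl | ⟨hxP, hxlt⟩)
        · exact ⟨by rwa [hPdef, Finset.mem_compl], le_refl _⟩
        · exact ⟨hxP, le_of_lt hxlt⟩
    rw [this, Finset.card_insert_of_notMem (by simp)]
  -- partition of Iio (m p)
  have hd : (V.filter (· < m p)).card + (W.filter (· < m p)).card = (m p : ℕ) := by
    have h1 : V.filter (· < m p) = (Finset.Iio (m p)).filter (fun x => ¬ x ∈ W) := by
      ext x; simp only [Finset.mem_filter, Finset.mem_Iio, hV, Finset.mem_compl]; tauto
    have h2 : W.filter (· < m p) = (Finset.Iio (m p)).filter (· ∈ W) := by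
      ext x; simp only [Finset.mem_filter, Finset.mem_Iio]; tauto
    rw [h1, h2, add_comm, Finset.card_filter_add_card_filter_not, Fin.card_Iio]
  -- W below m p
  have he : (W.filter (· < m p)).card + 1 = (S.filter (· ≤ p)).card := by
    obtain ⟨s₀, hs₀S, hs₀le, hs₀val⟩ := exists_record m hm p
    have himg : W.filter (· ≤ m p) = (S.filter (· ≤ p)).image m := by
      ext w
      simp only [Finset.mem_filter, Finset.mem_image, hW]
      constructor
      · rintro ⟨⟨s, hsS, rfl⟩, hle⟩
        refine ⟨s, ⟨hsS, ?_⟩, rfl⟩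
        by_contra hc2
        push_neg at hc2
        have := (mem_Sm.mp hsS) p hc2
        rw [Fin.le_def] at hle
        omega
      · rintro ⟨s, ⟨hsS, hsle⟩, rfl⟩
        exact ⟨⟨s, hsS, rfl⟩, hmono s p hsle⟩
    have hmp_mem : m p ∈ W.filter (· ≤ m p) := by
      rw [Finset.mem_filter, hW]
      exact ⟨Finset.mem_image.mpr ⟨s₀, hs₀S, hs₀val⟩, le_refl _⟩
    have herase : W.filter (· < m p) = (W.filter (· ≤ m p)).erase (m p) := by
      ext x
      simp only [Finset.mem_filter, Finset.mem_erase]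
      constructor
      · rintro ⟨hxW, hxlt⟩
        exact ⟨by intro h; rw [h] at hxlt; exact lt_irrefl _ hxlt, hxW, le_of_lt hxlt⟩
      · rintro ⟨hne, hxW, hxle⟩
        exact ⟨hxW, lt_of_le_of_ne hxle hne⟩
    have hcard_img : ((S.filter (· ≤ p)).image m).card = (S.filter (· ≤ p)).card := by
      apply Finset.card_image_of_injOn
      intro a ha b hb hab
      rw [Finset.mem_coe, Finset.mem_filter] at ha hb
      by_contra hne
      rcases Fin.lt_or_lt_of_ne hne with h | h
      · have := Sm_strictMono m ha.1 hb.1 h; omega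
      · have := Sm_strictMono m hb.1 ha.1 h; omega
    rw [herase, Finset.card_erase_add_one hmp_mem, himg, hcard_img]
  -- final contradiction
  by_contra hcon
  push_neg at hcon
  have hsub : V.filter (· < m p) ⊆ V.filter (· < fillf m p) := by
    intro x hx
    rw [Finset.mem_filter] at hx ⊢
    refine ⟨hx.1, lt_of_lt_of_le hx.2 ?_⟩
    rw [Fin.le_def]
    exact hcon
  have hVm := Finset.card_le_card hsub
  rw [hB] at hVm
  have hgep := hge p
  omega

end Fill

section FillPerm

variable {n : ℕ} (m : Fin n → Fin n)

lemma fillf_inj : Function.Injective (fillf m) := by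
  intro p q hpq
  by_cases hp : p ∈ Sm m <;> by_cases hq : q ∈ Sm m
  · by_contra hne
    rw [fillf_at_S m hp, fillf_at_S m hq] at hpq
    rcases Fin.lt_or_lt_of_ne hne with h | h
    · have := Sm_strictMono m hp hq h; omega
    · have := Sm_strictMono m hq hp h; omega
  · exfalso
    have h1 : fillf m p ∈ (Sm m).image m := by
      rw [fillf_at_S m hp]; exact Finset.mem_image.mpr ⟨p, hp, rfl⟩
    have h2 := fillf_mem_V m hq
    rw [Finset.mem_compl] at h2
    rw [hpq] at h1
    exact h2 h1
  · exfalso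
    have h1 : fillf m q ∈ (Sm m).image m := by
      rw [fillf_at_S m hq]; exact Finset.mem_image.mpr ⟨q, hq, rfl⟩
    have h2 := fillf_mem_V m hp
    rw [Finset.mem_compl] at h2
    rw [← hpq] at h1
    exact h2 h1
  · by_contra hne
    rcases Fin.lt_or_lt_of_ne hne with h | h
    · have := fillf_mono_P m hp hq h; rw [hpq] at this; exact lt_irrefl _ this
    · have := fillf_mono_P m hq hp h; rw [hpq] at this; exact lt_irrefl _ this

/-- the fill permutation -/
noncomputable def fillPerm : Equiv.Perm (Fin n) :=
  Equiv.ofBijective (fillf m) (Finite.injective_iff_bijective.mp (fillf_inj m))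

lemma fillPerm_apply (p : Fin n) : fillPerm m p = fillf m p := rfl

lemma fillPerm_avoids (hm : m ∈ MSet n) : Avoids321 (fillPerm m) := by
  intro i j k hij hjk hpat
  obtain ⟨h1, h2⟩ := hpat
  rw [Fin.lt_def] at h1 h2
  rw [fillPerm_apply, fillPerm_apply] at h1 h2
  -- both elements of a decreasing pair cannot lie in the same chain
  have hS : ∀ a b : Fin n, a < b → a ∈ Sm m → b ∈ Sm m → (fillf m b : ℕ) < (fillf m a : ℕ) →
      False := by
    intro a b hab ha hb hba
    have := Sm_strictMono m ha hb hab
    rw [fillf_at_S m ha, fillf_at_S m hb] at hba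
    omega
  have hP : ∀ a b : Fin n, a < b → a ∉ Sm m → b ∉ Sm m → (fillf m b : ℕ) < (fillf m a : ℕ) →
      False := by
    intro a b hab ha hb hba
    have := fillf_mono_P m ha hb hab
    rw [Fin.lt_def] at this
    omega
  by_cases hi : i ∈ Sm m <;> by_cases hj : j ∈ Sm m <;> by_cases hk : k ∈ Sm m
  · exact hS i j hij hi hj h2
  · exact hS i j hij hi hj h2
  · exact hS i k (lt_trans hij hjk) hi hk (by omega)
  · exact hP j k hjk hj hk h1
  · exact hS j k hjk hj hk h1
  · exact hP i k (lt_trans hij hjk) hi hk (by omega)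
  · exact hP i j hij hi hj h2
  · exact hP i j hij hi hj h2

lemma fillPerm_RFun (hm : m ∈ MSet n) : RFun (fillPerm m) = m := by
  obtain ⟨hmono, hge⟩ := (mem_MSet m).mp hm
  funext p
  apply Fin.ext
  have hval : ∀ q : Fin n, ((RFun (fillPerm m)) q : ℕ) = rmax (fillPerm m) q := fun q => rfl
  rw [hval]
  apply le_antisymm
  · -- sup ≤ m p
    rw [rmax, Finset.sup_le_iff]
    intro q hq
    rw [Finset.mem_Iic] at hq
    rw [show ((fillPerm m) q : ℕ) = (fillf m q : ℕ) from rfl]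
    by_cases h : q ∈ Sm m
    · rw [fillf_at_S m h]
      have := hmono q p hq
      rw [Fin.le_def] at this
      exact this
    · have h1 := fillf_key m hm h
      have := hmono q p hq
      rw [Fin.le_def] at this
      omega
  · obtain ⟨s₀, hs₀S, hs₀le, hs₀val⟩ := exists_record m hm p
    have h1 : ((fillPerm m) s₀ : ℕ) = (m p : ℕ) := by
      rw [show ((fillPerm m) s₀ : ℕ) = (fillf m s₀ : ℕ) from rfl, fillf_at_S m hs₀S, hs₀val]
    rw [← h1]
    exact le_rmax _ hs₀le

end FillPerm

section Main321

variable {n : ℕ}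

lemma card_A321_eq_cardM : (A321 n).card = (MSet n).card := by
  apply Finset.card_bij (fun π _ => RFun π)
  · intro π _
    exact RFun_mem π
  · intro π hπ π' hπ' h
    have h1 : Avoids321 π := (Finset.mem_filter.mp hπ).2
    have h2 : Avoids321 π' := (Finset.mem_filter.mp hπ').2
    exact RFun_inj_on_A321 π π' h1 h2 h
  · intro m hm
    refine ⟨fillPerm m, Finset.mem_filter.mpr ⟨mem_univ _, fillPerm_avoids m hm⟩, ?_⟩
    exact fillPerm_RFun m hm

end Main321


/-- `|Av_n(321)| = catalan n`, and hence `Av(312)` and `Av(321)` are Wilf-equivalent. -/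
theorem stmt2 :
    (∀ n : ℕ, Nat.card {π : Equiv.Perm (Fin n) // Avoids321 π} = catalan n) ∧
    (∀ n : ℕ, Nat.card {π : Equiv.Perm (Fin n) // Avoids312 π} =
      Nat.card {π : Equiv.Perm (Fin n) // Avoids321 π}) := by
  have h321 : ∀ n : ℕ, Nat.card {π : Equiv.Perm (Fin n) // Avoids321 π} = catalan n := by
    intro n
    rw [Nat.card_eq_fintype_card, Fintype.card_subtype]
    have : Finset.filter (fun π => Avoids321 π) Finset.univ = A321 n := rfl
    rw [this, card_A321_eq_cardM, cardM]
  have h312 : ∀ n : ℕ, Nat.card {π : Equiv.Perm (Fin n) // Avoids312 π} = catalan n := by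
    intro n
    rw [Nat.card_eq_fintype_card, Fintype.card_subtype]
    have : Finset.filter (fun π => Avoids312 π) Finset.univ = A312 n := rfl
    rw [this, cardA312]
  exact ⟨h321, fun n => by rw [h312 n, h321 n]⟩
end

section
/- The generating function f(x) = Σ_{n≥0} |Av_n(312)| x^n satisfies f(x) = (1 − √(1−4x))/(2x), i.e., x·f(x)^2 − f(x) + 1 = 0. -/
/-- The generating function of `Av(312)`. -/
noncomputable def f312 : PowerSeries ℚ :=
  PowerSeries.mk fun n => (Nat.card {π : Equiv.Perm (Fin n) // Avoids312 π} : ℚ)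

section Decomp

variable {n : ℕ}

-- Key structural lemmas about an avoiding permutation with π mf = 0
variable (π : Equiv.Perm (Fin (n+1))) (hA : Avoids312 π) (mf : Fin (n+1)) (hm : π mf = 0)

include hA hm in
lemma L1 : ∀ i k : Fin (n+1), i < mf → mf < k → π i < π k := by
  intro i k hi hk
  have h := hA i mf k hi hk
  rw [hm] at h
  have hk0 : π k ≠ 0 := by
    rw [← hm]; exact fun h' => absurd (π.injective h') (ne_of_gt hk)
  have hik : π i ≠ π k := fun h' => absurd (π.injective h') (ne_of_lt (hi.trans hk))
  have : ¬ (π k < π i) := fun hlt => h ⟨Fin.pos_of_ne_zero hk0, hlt⟩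
  omega

include hA hm in
lemma L2 : ∀ i : Fin (n+1), i < mf → 0 < (π i).val ∧ (π i).val ≤ mf.val := by
  intro i hi
  have h0 : (π i) ≠ 0 := by
    rw [← hm]; exact fun h' => absurd (π.injective h') (ne_of_lt hi)
  refine ⟨Fin.pos_of_ne_zero h0, ?_⟩
  -- image of Ioi mf under π is inside Ioi (π i)
  have hsub : (Finset.Ioi mf).image π ⊆ Finset.Ioi (π i) := by
    intro v hv
    simp only [Finset.mem_image, Finset.mem_Ioi] at hv ⊢
    obtain ⟨k, hk, rfl⟩ := hv
    exact L1 π hA mf hm i k hi hk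
  have hcard := Finset.card_le_card hsub
  rw [Finset.card_image_of_injective _ π.injective, Fin.card_Ioi, Fin.card_Ioi] at hcard
  have := (π i).isLt
  have := mf.isLt
  omega

include hA hm in
lemma L3 : ∀ k : Fin (n+1), mf < k → mf.val < (π k).val := by
  intro k hk
  have hsub : (Finset.Iic mf).image π ⊆ Finset.Iio (π k) := by
    intro v hv
    simp only [Finset.mem_image, Finset.mem_Iic, Finset.mem_Iio] at hv ⊢
    obtain ⟨i, hi, rfl⟩ := hv
    rcases eq_or_lt_of_le hi with h | h
    · subst h; rw [hm]
      exact Fin.pos_of_ne_zero (by rw [← hm]; exact fun h' => absurd (π.injective h') (ne_of_gt hk))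
    · exact L1 π hA mf hm i k h hk
  have hcard := Finset.card_le_card hsub
  rw [Finset.card_image_of_injective _ π.injective, Fin.card_Iic, Fin.card_Iio] at hcard
  omega

/-- left block function -/
def sigOf : Fin mf.val → Fin mf.val := fun i =>
  ⟨(π ⟨i.val, by omega⟩).val - 1, by
    have := L2 π hA mf hm ⟨i.val, by omega⟩ (by simp only [Fin.lt_def, Fin.val_mk]; omega)
    omega⟩

include hA hm in
lemma sigOf_inj : Function.Injective (sigOf π hA mf hm) := by
  intro a b hab
  simp only [sigOf, Fin.mk.injEq] at hab
  have ha := L2 π hA mf hm ⟨a.val, by omega⟩ (by simp only [Fin.lt_def, Fin.val_mk]; omega)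
  have hb := L2 π hA mf hm ⟨b.val, by omega⟩ (by simp only [Fin.lt_def, Fin.val_mk]; omega)
  have : π ⟨a.val, by omega⟩ = π ⟨b.val, by omega⟩ := by
    apply Fin.ext; omega
  have := π.injective this
  simpa [Fin.ext_iff] using this

/-- left block permutation -/
noncomputable def sigPerm : Equiv.Perm (Fin mf.val) :=
  Equiv.ofBijective _ (Finite.injective_iff_bijective.mp (sigOf_inj π hA mf hm))

include hA hm in
lemma sigPerm_apply (i : Fin mf.val) :
    ((sigPerm π hA mf hm i : Fin mf.val) : ℕ) = (π ⟨i.val, by omega⟩).val - 1 := rfl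

include hA hm in
lemma sigPerm_avoids : Avoids312 (sigPerm π hA mf hm) := by
  intro i j k hij hjk ⟨h1, h2⟩
  have gi := L2 π hA mf hm ⟨i.val, by omega⟩ (by simp only [Fin.lt_def, Fin.val_mk]; omega)
  have gj := L2 π hA mf hm ⟨j.val, by omega⟩ (by simp only [Fin.lt_def, Fin.val_mk]; omega)
  have gk := L2 π hA mf hm ⟨k.val, by omega⟩ (by simp only [Fin.lt_def, Fin.val_mk]; omega)
  have si := sigPerm_apply π hA mf hm i
  have sj := sigPerm_apply π hA mf hm j
  have sk := sigPerm_apply π hA mf hm k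
  refine hA ⟨i.val, by omega⟩ ⟨j.val, by omega⟩ ⟨k.val, by omega⟩ (by simp only [Fin.lt_def, Fin.val_mk]; omega)
    (by simp only [Fin.lt_def, Fin.val_mk]; omega) ⟨by simp only [Fin.lt_def, Fin.val_mk] at *; omega, by simp only [Fin.lt_def, Fin.val_mk] at *; omega⟩

/-- right block function -/
def tauOf : Fin (n - mf.val) → Fin (n - mf.val) := fun j =>
  ⟨(π ⟨mf.val + 1 + j.val, by omega⟩).val - (mf.val + 1), by
    have := L3 π hA mf hm ⟨mf.val + 1 + j.val, by omega⟩ (by simp only [Fin.lt_def, Fin.val_mk]; omega)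
    have := (π ⟨mf.val + 1 + j.val, by omega⟩).isLt
    omega⟩

include hA hm in
lemma tauOf_inj : Function.Injective (tauOf π hA mf hm) := by
  intro a b hab
  simp only [tauOf, Fin.mk.injEq] at hab
  have ha := L3 π hA mf hm ⟨mf.val + 1 + a.val, by omega⟩ (by simp only [Fin.lt_def, Fin.val_mk]; omega)
  have hb := L3 π hA mf hm ⟨mf.val + 1 + b.val, by omega⟩ (by simp only [Fin.lt_def, Fin.val_mk]; omega)
  have : π ⟨mf.val + 1 + a.val, by omega⟩ = π ⟨mf.val + 1 + b.val, by omega⟩ := by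
    apply Fin.ext; omega
  have := π.injective this
  simpa [Fin.ext_iff] using this

noncomputable def tauPerm : Equiv.Perm (Fin (n - mf.val)) :=
  Equiv.ofBijective _ (Finite.injective_iff_bijective.mp (tauOf_inj π hA mf hm))

include hA hm in
lemma tauPerm_apply (j : Fin (n - mf.val)) :
    ((tauPerm π hA mf hm j : Fin (n - mf.val)) : ℕ)
      = (π ⟨mf.val + 1 + j.val, by omega⟩).val - (mf.val + 1) := rfl

include hA hm in
lemma tauPerm_avoids : Avoids312 (tauPerm π hA mf hm) := by
  intro i j k hij hjk ⟨h1, h2⟩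
  have gi := L3 π hA mf hm ⟨mf.val + 1 + i.val, by omega⟩ (by simp only [Fin.lt_def, Fin.val_mk]; omega)
  have gj := L3 π hA mf hm ⟨mf.val + 1 + j.val, by omega⟩ (by simp only [Fin.lt_def, Fin.val_mk]; omega)
  have gk := L3 π hA mf hm ⟨mf.val + 1 + k.val, by omega⟩ (by simp only [Fin.lt_def, Fin.val_mk]; omega)
  have si := tauPerm_apply π hA mf hm i
  have sj := tauPerm_apply π hA mf hm j
  have sk := tauPerm_apply π hA mf hm k
  refine hA ⟨mf.val + 1 + i.val, by omega⟩ ⟨mf.val + 1 + j.val, by omega⟩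
    ⟨mf.val + 1 + k.val, by omega⟩ (by simp only [Fin.lt_def, Fin.val_mk]; omega)
    (by simp only [Fin.lt_def, Fin.val_mk]; omega) ⟨by simp only [Fin.lt_def, Fin.val_mk] at *; omega, by simp only [Fin.lt_def, Fin.val_mk] at *; omega⟩

end Decomp

section Glue

variable {n : ℕ} (mf : Fin (n+1)) (σ : Equiv.Perm (Fin mf.val)) (τ : Equiv.Perm (Fin (n - mf.val)))

def glueFun : Fin (n+1) → Fin (n+1) := fun i =>
  if h : i.val < mf.val then ⟨(σ ⟨i.val, h⟩).val + 1, by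
      have := (σ ⟨i.val, h⟩).isLt; omega⟩
  else if h2 : i.val = mf.val then 0
  else ⟨(τ ⟨i.val - mf.val - 1, by have := i.isLt; have := mf.isLt; omega⟩).val + mf.val + 1, by
      have := (τ ⟨i.val - mf.val - 1, by have := i.isLt; have := mf.isLt; omega⟩).isLt; omega⟩

lemma glueFun_lt (i : Fin (n+1)) (h : i.val < mf.val) :
    (glueFun mf σ τ i).val = (σ ⟨i.val, h⟩).val + 1 := by
  simp only [glueFun, dif_pos h]

lemma glueFun_eq : glueFun mf σ τ mf = 0 := by
  simp [glueFun]

lemma glueFun_gt (i : Fin (n+1)) (h : mf.val < i.val) :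
    (glueFun mf σ τ i).val
      = (τ ⟨i.val - mf.val - 1, by have := i.isLt; have := mf.isLt; omega⟩).val + mf.val + 1 := by
  simp only [glueFun, dif_neg (by omega : ¬ i.val < mf.val), dif_neg (by omega : ¬ i.val = mf.val)]

lemma glueFun_inj : Function.Injective (glueFun mf σ τ) := by
  intro a b hab
  have hab' : (glueFun mf σ τ a).val = (glueFun mf σ τ b).val := congrArg Fin.val hab
  have key : ∀ c : Fin (n+1),
      (c.val < mf.val → 1 ≤ (glueFun mf σ τ c).val ∧ (glueFun mf σ τ c).val ≤ mf.val)
      ∧ (c.val = mf.val → (glueFun mf σ τ c).val = 0)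
      ∧ (mf.val < c.val → mf.val < (glueFun mf σ τ c).val) := by
    intro c
    refine ⟨fun h => ?_, fun h => ?_, fun h => ?_⟩
    · rw [glueFun_lt mf σ τ c h]; have := (σ ⟨c.val, h⟩).isLt; omega
    · rw [show c = mf from Fin.ext h, glueFun_eq]; rfl
    · rw [glueFun_gt mf σ τ c h]; omega
  obtain ⟨ka1, ka2, ka3⟩ := key a
  obtain ⟨kb1, kb2, kb3⟩ := key b
  rcases lt_trichotomy a.val mf.val with ha | ha | ha <;>
    rcases lt_trichotomy b.val mf.val with hb | hb | hb
  · rw [glueFun_lt mf σ τ a ha, glueFun_lt mf σ τ b hb] at hab'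
    have : (⟨a.val, ha⟩ : Fin mf.val) = ⟨b.val, hb⟩ := σ.injective (Fin.ext (by omega))
    exact Fin.ext (by simpa [Fin.ext_iff] using this)
  · have := ka1 ha; have := kb2 hb; omega
  · have := ka1 ha; have := kb3 hb; omega
  · have := ka2 ha; have := kb1 hb; omega
  · exact Fin.ext (by omega)
  · have := ka2 ha; have := kb3 hb; omega
  · have := ka3 ha; have := kb1 hb; omega
  · have := ka3 ha; have := kb2 hb; omega
  · rw [glueFun_gt mf σ τ a ha, glueFun_gt mf σ τ b hb] at hab'
    have : (⟨a.val - mf.val - 1, _⟩ : Fin (n - mf.val)) = ⟨b.val - mf.val - 1, _⟩ :=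
      τ.injective (Fin.ext (by omega))
    have := congrArg Fin.val this
    simp only [Fin.val_mk] at this
    exact Fin.ext (by omega)

noncomputable def gluePerm : Equiv.Perm (Fin (n+1)) :=
  Equiv.ofBijective _ (Finite.injective_iff_bijective.mp (glueFun_inj mf σ τ))

lemma gluePerm_apply (i : Fin (n+1)) : gluePerm mf σ τ i = glueFun mf σ τ i := rfl

lemma gluePerm_avoids (hσ : Avoids312 σ) (hτ : Avoids312 τ) :
    Avoids312 (gluePerm mf σ τ) := by
  intro i j k hij hjk ⟨h1, h2⟩
  rw [gluePerm_apply, gluePerm_apply] at h1 h2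
  rw [Fin.lt_def] at h1 h2 hij hjk
  rcases lt_trichotomy k.val mf.val with hk | hk | hk
  · -- all in first block
    have hi : i.val < mf.val := by omega
    have hj : j.val < mf.val := by omega
    rw [glueFun_lt mf σ τ j hj, glueFun_lt mf σ τ k hk] at h1
    rw [glueFun_lt mf σ τ k hk, glueFun_lt mf σ τ i hi] at h2
    exact hσ ⟨i.val, hi⟩ ⟨j.val, hj⟩ ⟨k.val, hk⟩ (by simp only [Fin.lt_def]; omega)
      (by simp only [Fin.lt_def]; omega) ⟨by simp only [Fin.lt_def]; omega,
      by simp only [Fin.lt_def]; omega⟩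
  · -- k = mf : glue k = 0, contradiction with h1
    rw [show k = mf from Fin.ext hk, glueFun_eq] at h1; simp at h1
  · rcases lt_trichotomy i.val mf.val with hi | hi | hi
    · -- i in first block, k in second: glue i ≤ mf < glue k contradicts h2
      rw [glueFun_lt mf σ τ i hi, glueFun_gt mf σ τ k hk] at h2
      have := (σ ⟨i.val, hi⟩).isLt
      omega
    · -- i = mf: glue i = 0
      rw [show i = mf from Fin.ext hi, glueFun_eq] at h2; simp at h2
    · -- all in second block
      have hj : mf.val < j.val := by omega
      rw [glueFun_gt mf σ τ j hj, glueFun_gt mf σ τ k hk] at h1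
      rw [glueFun_gt mf σ τ k hk, glueFun_gt mf σ τ i hi] at h2
      have hin : i.val - mf.val - 1 < n - mf.val := by have := i.isLt; have := mf.isLt; omega
      have hjn : j.val - mf.val - 1 < n - mf.val := by have := j.isLt; have := mf.isLt; omega
      have hkn : k.val - mf.val - 1 < n - mf.val := by have := k.isLt; have := mf.isLt; omega
      exact hτ ⟨i.val - mf.val - 1, hin⟩ ⟨j.val - mf.val - 1, hjn⟩ ⟨k.val - mf.val - 1, hkn⟩
        (by simp only [Fin.lt_def]; omega) (by simp only [Fin.lt_def]; omega)
        ⟨by simp only [Fin.lt_def]; omega, by simp only [Fin.lt_def]; omega⟩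

end Glue

section Fiber

variable {n : ℕ}

lemma symm_zero_iff (π : Equiv.Perm (Fin (n+1))) (mf : Fin (n+1)) :
    π.symm 0 = mf ↔ π mf = 0 := by
  rw [Equiv.symm_apply_eq, eq_comm]

noncomputable def fiberEquiv (mf : Fin (n+1)) :
    {π : {π : Equiv.Perm (Fin (n+1)) // Avoids312 π} // π.val.symm 0 = mf}
      ≃ {σ : Equiv.Perm (Fin mf.val) // Avoids312 σ}
        × {τ : Equiv.Perm (Fin (n - mf.val)) // Avoids312 τ} where
  toFun p :=
    have hm : p.val.val mf = 0 := (symm_zero_iff _ _).mp p.prop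
    (⟨sigPerm p.val.val p.val.prop mf hm, sigPerm_avoids p.val.val p.val.prop mf hm⟩,
     ⟨tauPerm p.val.val p.val.prop mf hm, tauPerm_avoids p.val.val p.val.prop mf hm⟩)
  invFun q :=
    ⟨⟨gluePerm mf q.1.val q.2.val, gluePerm_avoids mf q.1.val q.2.val q.1.prop q.2.prop⟩,
      (symm_zero_iff _ _).mpr (glueFun_eq mf q.1.val q.2.val)⟩
  left_inv := by
    rintro ⟨⟨π, hA⟩, hm⟩
    have hm' : π mf = 0 := (symm_zero_iff _ _).mp hm
    apply Subtype.ext; apply Subtype.ext; apply Equiv.ext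
    intro i
    apply Fin.ext
    show (glueFun mf (sigPerm π hA mf hm') (tauPerm π hA mf hm') i).val = (π i).val
    rcases lt_trichotomy i.val mf.val with hi | hi | hi
    · rw [glueFun_lt _ _ _ i hi]
      have h2 := L2 π hA mf hm' i (by omega)
      have := sigPerm_apply π hA mf hm' ⟨i.val, hi⟩
      simp only [Fin.val_mk] at this
      rw [show (⟨i.val, by omega⟩ : Fin (n+1)) = i from Fin.ext rfl] at this
      omega
    · rw [show i = mf from Fin.ext hi, glueFun_eq, hm']
    · rw [glueFun_gt _ _ _ i hi]
      have h3 := L3 π hA mf hm' i (by omega)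
      have := tauPerm_apply π hA mf hm'
        ⟨i.val - mf.val - 1, by have := i.isLt; have := mf.isLt; omega⟩
      simp only [Fin.val_mk] at this
      rw [show (⟨mf.val + 1 + (i.val - mf.val - 1), by omega⟩ : Fin (n+1)) = i from
        Fin.ext (by simp only [Fin.val_mk]; omega)] at this
      omega
  right_inv := by
    rintro ⟨⟨σ, hσ⟩, ⟨τ, hτ⟩⟩
    have hm' : gluePerm mf σ τ mf = 0 := glueFun_eq mf σ τ
    refine Prod.ext ?_ ?_ <;> apply Subtype.ext <;> apply Equiv.ext <;> intro i <;> apply Fin.ext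
    · have := sigPerm_apply (gluePerm mf σ τ) (gluePerm_avoids mf σ τ hσ hτ) mf hm' i
      rw [this]
      show (glueFun mf σ τ ⟨i.val, by omega⟩).val - 1 = (σ i).val
      rw [glueFun_lt mf σ τ ⟨i.val, by omega⟩ (by simp only [Fin.val_mk]; omega)]
      simp only [Fin.val_mk]
      congr 1
    · have := tauPerm_apply (gluePerm mf σ τ) (gluePerm_avoids mf σ τ hσ hτ) mf hm' i
      rw [this]
      show (glueFun mf σ τ ⟨mf.val + 1 + i.val, by omega⟩).val - (mf.val + 1) = (τ i).val
      rw [glueFun_gt mf σ τ ⟨mf.val + 1 + i.val, by omega⟩ (by simp only [Fin.val_mk]; omega)]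
      simp only [Fin.val_mk]
      have : (⟨mf.val + 1 + i.val - mf.val - 1, by omega⟩ : Fin (n - mf.val)) = i :=
        Fin.ext (by simp only [Fin.val_mk]; omega)
      rw [this]
      omega

end Fiber

section Count

/-- the number of 312-avoiding permutations -/
noncomputable def av312 (n : ℕ) : ℕ := Nat.card {π : Equiv.Perm (Fin n) // Avoids312 π}

lemma nat_card_sigma {ι : Type*} [Fintype ι] (f : ι → Type*) [∀ i, Finite (f i)] :
    Nat.card (Σ i, f i) = ∑ i, Nat.card (f i) := by
  letI := fun i => Fintype.ofFinite (f i)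
  simp [Nat.card_eq_fintype_card, Fintype.card_sigma]

lemma av312_zero : av312 0 = 1 := by
  rw [av312, Nat.card_eq_one_iff_exists]
  refine ⟨⟨1, fun i _ _ _ _ => i.elim0⟩, fun y => Subtype.ext (Equiv.ext fun i => i.elim0)⟩

lemma av312_succ (n : ℕ) :
    av312 (n+1) = ∑ m : Fin (n+1), av312 m.val * av312 (n - m.val) := by
  have e1 : {π : Equiv.Perm (Fin (n+1)) // Avoids312 π}
      ≃ Σ mf : Fin (n+1), {π : {π : Equiv.Perm (Fin (n+1)) // Avoids312 π} // π.val.symm 0 = mf} :=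
    (Equiv.sigmaFiberEquiv fun π : {π : Equiv.Perm (Fin (n+1)) // Avoids312 π} =>
      π.val.symm 0).symm
  rw [av312, Nat.card_congr e1, nat_card_sigma]
  refine Finset.sum_congr rfl fun mf _ => ?_
  rw [Nat.card_congr (fiberEquiv mf), Nat.card_prod]
  rfl

lemma av312_eq_catalan (n : ℕ) : av312 n = catalan n := by
  induction n using Nat.strong_induction_on with
  | _ n ih =>
    match n with
    | 0 => rw [av312_zero, catalan_zero]
    | Nat.succ n =>
      rw [av312_succ, catalan_succ]
      refine Finset.sum_congr rfl fun i _ => ?_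
      rw [ih i.val (by omega), ih (n - i.val) (by omega)]

end Count

lemma f312_coeff (n : ℕ) : PowerSeries.coeff n f312 = (catalan n : ℚ) := by
  rw [f312, PowerSeries.coeff_mk, show Nat.card {π : Equiv.Perm (Fin n) // Avoids312 π} = av312 n
    from rfl, av312_eq_catalan]

lemma key312 : f312 = PowerSeries.X * f312 ^ 2 + 1 := by
  ext n
  rw [map_add]
  match n with
  | 0 =>
    rw [f312_coeff, catalan_zero, PowerSeries.coeff_zero_one]
    have : PowerSeries.coeff 0 (PowerSeries.X * f312 ^ 2) = 0 := by
      rw [PowerSeries.coeff_zero_eq_constantCoeff, map_mul, PowerSeries.constantCoeff_X, zero_mul]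
    rw [this]; norm_num
  | Nat.succ n =>
    rw [PowerSeries.coeff_succ_X_mul, PowerSeries.coeff_one, if_neg (Nat.succ_ne_zero n), add_zero,
      sq, PowerSeries.coeff_mul, f312_coeff, catalan_succ']
    push_cast
    exact (Finset.sum_congr rfl fun ij _ => by rw [f312_coeff, f312_coeff]).symm


/-- The generating function of `Av(312)` satisfies `x f(x)^2 − f(x) + 1 = 0`,
i.e., `f(x) = (1 − √(1−4x))/(2x)`. -/
theorem stmt5 : PowerSeries.X * f312 ^ 2 - f312 + 1 = 0 := by
  linear_combination -key312
end

section
/- A permutation π of length n lies in Av(231,312,321) if and only if π is a direct sum of copies of the permutations 1 and 21. Consequently, |Av_n(231,312,321)| = F_n, the n-th Fibonacci number with F_0 = F_1 = 1 and F_n = F_{n−1} + F_{n−2}. -/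
/-- `π` avoids 231. -/
def Avoids231 {n : ℕ} (π : Equiv.Perm (Fin n)) : Prop :=
  ∀ i j k : Fin n, i < j → j < k → ¬ (π k < π i ∧ π i < π j)

/-- `π` is a direct sum of copies of `1` and `21`, i.e. a product of disjoint
adjacent transpositions: it is an involution that moves every point by at most one. -/
def IsDirectSumOf1And21 {n : ℕ} (π : Equiv.Perm (Fin n)) : Prop :=
  ∀ i : Fin n, π (π i) = i ∧
    ((π i : ℕ) = (i : ℕ) ∨ (π i : ℕ) = (i : ℕ) + 1 ∨ (π i : ℕ) + 1 = (i : ℕ))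

namespace Stmt9Aux

open Equiv Finset

variable {n : ℕ}

lemma card_filter_applt (π : Equiv.Perm (Fin n)) (a : Fin n) :
    (univ.filter (fun q => π q < a)).card = (a : ℕ) := by
  rw [← Fin.card_Iio (b := a)]
  apply Finset.card_bij (fun q _ => π q)
  · intro q hq
    simp only [mem_filter, mem_univ, true_and] at hq
    simpa using hq
  · intro q1 _ q2 _ h
    exact π.injective h
  · intro v hv
    exact ⟨π.symm v, by simpa using (by simpa using hv : v < a), by simp⟩

lemma card_filter_apgt (π : Equiv.Perm (Fin n)) (a : Fin n) :
    (univ.filter (fun q => a < π q)).card = n - 1 - (a : ℕ) := by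
  rw [← Fin.card_Ioi (a := a)]
  apply Finset.card_bij (fun q _ => π q)
  · intro q hq
    simp only [mem_filter, mem_univ, true_and] at hq
    simpa using hq
  · intro q1 _ q2 _ h
    exact π.injective h
  · intro v hv
    exact ⟨π.symm v, by simpa using (by simpa using hv : a < v), by simp⟩

lemma upper (π : Equiv.Perm (Fin n)) (h312 : Avoids312 π) (h321 : Avoids321 π)
    (i : Fin n) : (π i : ℕ) ≤ (i : ℕ) + 1 := by
  by_contra hcon
  push_neg at hcon
  set S := univ.filter (fun q => i < q ∧ π q < π i) with hSdef
  have hsub : univ.filter (fun q => π q < π i) ⊆ S ∪ univ.filter (fun q => q < i) := by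
    intro q hq
    simp only [mem_filter, mem_univ, true_and] at hq
    rcases lt_trichotomy q i with h | h | h
    · exact mem_union_right _ (by simp [h])
    · subst h; exact absurd hq (lt_irrefl _)
    · exact mem_union_left _ (by simp [hSdef, h, hq])
  have hA : (univ.filter (fun q => π q < π i)).card = (π i : ℕ) := card_filter_applt π (π i)
  have hB : (univ.filter (fun q : Fin n => q < i)).card = (i : ℕ) := by
    have : (univ.filter (fun q : Fin n => q < i)) = Finset.Iio i := by
      ext q; simp
    rw [this, Fin.card_Iio]
  have hcard : (π i : ℕ) ≤ S.card + (i : ℕ) := by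
    calc (π i : ℕ) = (univ.filter (fun q => π q < π i)).card := hA.symm
      _ ≤ (S ∪ univ.filter (fun q => q < i)).card := Finset.card_le_card hsub
      _ ≤ S.card + (i : ℕ) := by
          have := Finset.card_union_le S (univ.filter (fun q : Fin n => q < i))
          omega
  have h2 : 1 < S.card := by omega
  obtain ⟨j, hj, k, hk, hjk⟩ := Finset.one_lt_card.mp h2
  simp only [hSdef, mem_filter, mem_univ, true_and] at hj hk
  rcases lt_trichotomy j k with h | h | h
  · rcases lt_trichotomy (π j) (π k) with h' | h' | h'
    · exact h312 i j k hj.1 h ⟨h', hk.2⟩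
    · exact hjk (π.injective h')
    · exact h321 i j k hj.1 h ⟨h', hj.2⟩
  · exact hjk h
  · rcases lt_trichotomy (π k) (π j) with h' | h' | h'
    · exact h312 i k j hk.1 h ⟨h', hj.2⟩
    · exact hjk (π.injective h'.symm)
    · exact h321 i k j hk.1 h ⟨h', hk.2⟩

lemma lower (π : Equiv.Perm (Fin n)) (h231 : Avoids231 π) (h321 : Avoids321 π)
    (i : Fin n) : (i : ℕ) ≤ (π i : ℕ) + 1 := by
  by_contra hcon
  push_neg at hcon
  set S := univ.filter (fun q => q < i ∧ π i < π q) with hSdef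
  have hsub : univ.filter (fun q => π i < π q) ⊆ S ∪ univ.filter (fun q => i < q) := by
    intro q hq
    simp only [mem_filter, mem_univ, true_and] at hq
    rcases lt_trichotomy q i with h | h | h
    · exact mem_union_left _ (by simp [hSdef, h, hq])
    · subst h; exact absurd hq (lt_irrefl _)
    · exact mem_union_right _ (by simp [h])
  have hA : (univ.filter (fun q => π i < π q)).card = n - 1 - (π i : ℕ) :=
    card_filter_apgt π (π i)
  have hB : (univ.filter (fun q : Fin n => i < q)).card = n - 1 - (i : ℕ) := by
    have : (univ.filter (fun q : Fin n => i < q)) = Finset.Ioi i := by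
      ext q; simp
    rw [this, Fin.card_Ioi]
  have hilt : (i : ℕ) < n := i.isLt
  have hcard : n - 1 - (π i : ℕ) ≤ S.card + (n - 1 - (i : ℕ)) := by
    calc n - 1 - (π i : ℕ) = (univ.filter (fun q => π i < π q)).card := hA.symm
      _ ≤ (S ∪ univ.filter (fun q => i < q)).card := Finset.card_le_card hsub
      _ ≤ S.card + (n - 1 - (i : ℕ)) := by
          have := Finset.card_union_le S (univ.filter (fun q : Fin n => i < q))
          omega
  have h2 : 1 < S.card := by omega
  obtain ⟨j, hj, k, hk, hjk⟩ := Finset.one_lt_card.mp h2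
  simp only [hSdef, mem_filter, mem_univ, true_and] at hj hk
  rcases lt_trichotomy j k with h | h | h
  · rcases lt_trichotomy (π j) (π k) with h' | h' | h'
    · exact h231 j k i h hk.1 ⟨hj.2, h'⟩
    · exact hjk (π.injective h')
    · exact h321 j k i h hk.1 ⟨hk.2, h'⟩
  · exact hjk h
  · rcases lt_trichotomy (π k) (π j) with h' | h' | h'
    · exact h231 k j i h hj.1 ⟨hk.2, h'⟩
    · exact hjk (π.injective h'.symm)
    · exact h321 k j i h hj.1 ⟨hj.2, h'⟩

lemma stepP (π : Equiv.Perm (Fin n))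
    (hu : ∀ i : Fin n, (π i : ℕ) ≤ (i : ℕ) + 1)
    (hl : ∀ i : Fin n, (i : ℕ) ≤ (π i : ℕ) + 1) :
    ∀ i : Fin n, (π i : ℕ) = (i : ℕ) + 1 → π (π i) = i := by
  suffices h : ∀ m : ℕ, ∀ i : Fin n, n - (i : ℕ) = m → (π i : ℕ) = (i : ℕ) + 1 → π (π i) = i by
    intro i hi; exact h (n - i) i rfl hi
  intro m
  induction m using Nat.strong_induction_on with
  | _ m ih =>
    intro i hm hi
    set j := π i with hj
    have hjv : (j : ℕ) = (i : ℕ) + 1 := hi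
    have h1 : (π j : ℕ) ≤ (i : ℕ) + 2 := by have := hu j; omega
    have h2 : (i : ℕ) ≤ (π j : ℕ) := by have := hl j; omega
    rcases (by omega : (π j : ℕ) = (i : ℕ) ∨ (π j : ℕ) = (i : ℕ) + 1 ∨ (π j : ℕ) = (i : ℕ) + 2)
      with h | h | h
    · exact Fin.ext h
    · have : π j = j := Fin.ext (by omega)
      have : i = j := π.injective (by rw [this])
      have : (i : ℕ) = (j : ℕ) := congrArg Fin.val this
      omega
    · have hjm : n - (j : ℕ) < m := by
        have := j.isLt
        omega
      have := ih (n - (j : ℕ)) hjm j rfl (by omega)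
      have hji : π j = i := π.injective (by rw [this])
      have : (π j : ℕ) = (i : ℕ) := congrArg Fin.val hji
      omega

lemma stepQ (π : Equiv.Perm (Fin n))
    (hu : ∀ i : Fin n, (π i : ℕ) ≤ (i : ℕ) + 1)
    (hl : ∀ i : Fin n, (i : ℕ) ≤ (π i : ℕ) + 1) :
    ∀ i : Fin n, (π i : ℕ) + 1 = (i : ℕ) → π (π i) = i := by
  suffices h : ∀ m : ℕ, ∀ i : Fin n, (i : ℕ) = m → (π i : ℕ) + 1 = (i : ℕ) → π (π i) = i by
    intro i hi; exact h i i rfl hi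
  intro m
  induction m using Nat.strong_induction_on with
  | _ m ih =>
    intro i hm hi
    set j := π i with hj
    have hjv : (j : ℕ) + 1 = (i : ℕ) := hi
    have h1 : (π j : ℕ) ≤ (i : ℕ) := by have := hu j; omega
    have h2 : (i : ℕ) ≤ (π j : ℕ) + 2 := by have := hl j; omega
    rcases (by omega : (π j : ℕ) = (i : ℕ) ∨ (π j : ℕ) + 1 = (i : ℕ) ∨ (π j : ℕ) + 2 = (i : ℕ))
      with h | h | h
    · exact Fin.ext h
    · have : π j = j := Fin.ext (by omega)
      have : i = j := π.injective (by rw [this])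
      have : (i : ℕ) = (j : ℕ) := congrArg Fin.val this
      omega
    · have hjm : (j : ℕ) < m := by omega
      have := ih (j : ℕ) hjm j rfl (by omega)
      have hji : π j = i := π.injective (by rw [this])
      have : (π j : ℕ) = (i : ℕ) := congrArg Fin.val hji
      omega

lemma main_iff (n : ℕ) (π : Equiv.Perm (Fin n)) :
    (Avoids231 π ∧ Avoids312 π ∧ Avoids321 π) ↔ IsDirectSumOf1And21 π := by
  constructor
  · rintro ⟨h231, h312, h321⟩
    have hu := upper π h312 h321
    have hl := lower π h231 h321
    intro i
    refine ⟨?_, by have := hu i; have := hl i; omega⟩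
    rcases (by have := hu i; have := hl i; omega :
        (π i : ℕ) = (i : ℕ) ∨ (π i : ℕ) = (i : ℕ) + 1 ∨ (π i : ℕ) + 1 = (i : ℕ))
      with h | h | h
    · have h' : π i = i := Fin.ext h
      rw [h', h']
    · exact stepP π hu hl i h
    · exact stepQ π hu hl i h
  · intro h
    have hu : ∀ i : Fin n, (π i : ℕ) ≤ (i : ℕ) + 1 := fun i => by have := (h i).2; omega
    have hl : ∀ i : Fin n, (i : ℕ) ≤ (π i : ℕ) + 1 := fun i => by have := (h i).2; omega
    refine ⟨?_, ?_, ?_⟩ <;> intro i j k hij hjk hpat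
    · have e1 : (π k : ℕ) < (π i : ℕ) := hpat.1
      have e2 : (i : ℕ) < (j : ℕ) := hij
      have e3 : (j : ℕ) < (k : ℕ) := hjk
      have := hu i; have := hl k
      omega
    · have e1 : (π k : ℕ) < (π i : ℕ) := hpat.2
      have e2 : (i : ℕ) < (j : ℕ) := hij
      have e3 : (j : ℕ) < (k : ℕ) := hjk
      have := hu i; have := hl k
      omega
    · have e1 : (π k : ℕ) < (π i : ℕ) := lt_trans hpat.1 hpat.2
      have e2 : (i : ℕ) < (j : ℕ) := hij
      have e3 : (j : ℕ) < (k : ℕ) := hjk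
      have := hu i; have := hl k
      omega

/-! ### Counting -/

lemma dF_fst (π : Perm (Fin (n+1))) : (Equiv.Perm.decomposeFin π).1 = π 0 := by
  have h : Equiv.Perm.decomposeFin.symm (Equiv.Perm.decomposeFin π) = π :=
    Equiv.symm_apply_apply _ _
  conv_rhs => rw [← h]
  exact (Equiv.Perm.decomposeFin_symm_apply_zero _ _).symm

lemma dF_rel (π : Perm (Fin (n+1))) (x : Fin n) :
    π x.succ = Equiv.swap 0 (π 0) (((Equiv.Perm.decomposeFin π).2) x).succ := by
  have h : Equiv.Perm.decomposeFin.symm (Equiv.Perm.decomposeFin π) = π :=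
    Equiv.symm_apply_apply _ _
  conv_lhs => rw [← h]
  rw [show Equiv.Perm.decomposeFin π =
    ((Equiv.Perm.decomposeFin π).1, (Equiv.Perm.decomposeFin π).2) from rfl,
    Equiv.Perm.decomposeFin_symm_apply_succ, dF_fst]

lemma transfer0_fwd (π : Perm (Fin (n+1))) (e : Perm (Fin n))
    (hrel : ∀ x : Fin n, π x.succ = (e x).succ) (h : IsDirectSumOf1And21 π) :
    IsDirectSumOf1And21 e := by
  intro x
  obtain ⟨hinv, hd⟩ := h x.succ
  rw [hrel x, hrel (e x)] at hinv
  refine ⟨Fin.succ_injective _ hinv, ?_⟩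
  have h1 : (π x.succ : ℕ) = (e x : ℕ) + 1 := by rw [hrel x]; exact Fin.val_succ _
  have h2 : (x.succ : ℕ) = (x : ℕ) + 1 := Fin.val_succ x
  omega

lemma transfer0_bwd (π : Perm (Fin (n+1))) (e : Perm (Fin n)) (h0 : π 0 = 0)
    (hrel : ∀ x : Fin n, π x.succ = (e x).succ) (h : IsDirectSumOf1And21 e) :
    IsDirectSumOf1And21 π := by
  intro i
  refine Fin.cases ?_ ?_ i
  · exact ⟨by rw [h0, h0], Or.inl (by rw [h0])⟩
  · intro x
    obtain ⟨hinv, hd⟩ := h x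
    refine ⟨by rw [hrel x, hrel (e x), hinv], ?_⟩
    have h1 : (π x.succ : ℕ) = (e x : ℕ) + 1 := by rw [hrel x]; exact Fin.val_succ _
    have h2 : (x.succ : ℕ) = (x : ℕ) + 1 := Fin.val_succ x
    omega

lemma transfer1_fwd (π : Perm (Fin (n+2))) (e : Perm (Fin (n+1)))
    (h0 : π 0 = 1)
    (hrel : ∀ x : Fin (n+1), π x.succ = Equiv.swap 0 1 (e x).succ)
    (h : IsDirectSumOf1And21 π) : IsDirectSumOf1And21 e ∧ e 0 = 0 := by
  have hπ1 : π 1 = 0 := by have := (h 0).1; rwa [h0] at this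
  have he0 : e 0 = 0 := by
    have h1 := hrel 0
    rw [Fin.succ_zero_eq_one, hπ1] at h1
    have h2 := congrArg (Equiv.swap (0 : Fin (n+2)) 1) h1
    rw [Equiv.swap_apply_self, Equiv.swap_apply_left] at h2
    have : (e 0).succ = (0 : Fin (n+1)).succ := by rw [Fin.succ_zero_eq_one]; exact h2.symm
    exact Fin.succ_injective _ this
  have key : ∀ x : Fin (n+1), x ≠ 0 → π x.succ = (e x).succ := by
    intro x hx
    have hex : e x ≠ 0 := fun hc => hx (e.injective (hc.trans he0.symm))
    rw [hrel x, Equiv.swap_apply_of_ne_of_ne (Fin.succ_ne_zero _) ?_]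
    intro hc
    exact hex (Fin.succ_injective _ (by rw [hc, Fin.succ_zero_eq_one]))
  refine ⟨?_, he0⟩
  intro x
  by_cases hx : x = 0
  · subst hx
    exact ⟨by rw [he0, he0], Or.inl (by rw [he0])⟩
  · have hex : e x ≠ 0 := fun hc => hx (e.injective (hc.trans he0.symm))
    obtain ⟨hinv, hd⟩ := h x.succ
    have k1 := key x hx
    have k2 := key (e x) hex
    rw [k1, k2] at hinv
    refine ⟨Fin.succ_injective _ hinv, ?_⟩
    have h1 : (π x.succ : ℕ) = (e x : ℕ) + 1 := by rw [k1]; exact Fin.val_succ _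
    have h2 : (x.succ : ℕ) = (x : ℕ) + 1 := Fin.val_succ x
    omega

lemma transfer1_bwd (π : Perm (Fin (n+2))) (e : Perm (Fin (n+1)))
    (h0 : π 0 = 1) (he0 : e 0 = 0)
    (hrel : ∀ x : Fin (n+1), π x.succ = Equiv.swap 0 1 (e x).succ)
    (h : IsDirectSumOf1And21 e) : IsDirectSumOf1And21 π := by
  have hπ1 : π 1 = 0 := by
    rw [← Fin.succ_zero_eq_one, hrel 0, he0, Fin.succ_zero_eq_one]
    exact Equiv.swap_apply_right _ _
  have key : ∀ x : Fin (n+1), x ≠ 0 → π x.succ = (e x).succ := by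
    intro x hx
    have hex : e x ≠ 0 := fun hc => hx (e.injective (hc.trans he0.symm))
    rw [hrel x, Equiv.swap_apply_of_ne_of_ne (Fin.succ_ne_zero _) ?_]
    intro hc
    exact hex (Fin.succ_injective _ (by rw [hc, Fin.succ_zero_eq_one]))
  intro i
  refine Fin.cases ?_ ?_ i
  · refine ⟨by rw [h0, hπ1], Or.inr (Or.inl ?_)⟩
    rw [h0]; rfl
  · intro x
    by_cases hx : x = 0
    · subst hx
      refine ⟨by rw [Fin.succ_zero_eq_one, hπ1, h0], Or.inr (Or.inr ?_)⟩
      rw [Fin.succ_zero_eq_one, hπ1]; rfl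
    · have hex : e x ≠ 0 := fun hc => hx (e.injective (hc.trans he0.symm))
      obtain ⟨hinv, hd⟩ := h x
      refine ⟨by rw [key x hx, key (e x) hex, hinv], ?_⟩
      have h1 : (π x.succ : ℕ) = (e x : ℕ) + 1 := by rw [key x hx]; exact Fin.val_succ _
      have h2 : (x.succ : ℕ) = (x : ℕ) + 1 := Fin.val_succ x
      omega

lemma rel0 (π : Perm (Fin (n+1))) (h0 : π 0 = 0) (x : Fin n) :
    π x.succ = (((Equiv.Perm.decomposeFin π).2) x).succ := by
  rw [dF_rel π x, h0, Equiv.swap_self]; rfl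

lemma rel0' (e : Perm (Fin n)) (x : Fin n) :
    (Equiv.Perm.decomposeFin.symm ((0 : Fin (n+1)), e)) x.succ = (e x).succ := by
  rw [Equiv.Perm.decomposeFin_symm_apply_succ, Equiv.swap_self]; rfl

def eq0 (n : ℕ) :
    {π : Perm (Fin (n+1)) // IsDirectSumOf1And21 π ∧ π 0 = 0} ≃
      {e : Perm (Fin n) // IsDirectSumOf1And21 e} where
  toFun p := ⟨(Equiv.Perm.decomposeFin p.1).2,
    transfer0_fwd p.1 _ (rel0 p.1 p.2.2) p.2.1⟩
  invFun p := ⟨Equiv.Perm.decomposeFin.symm (0, p.1),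
    transfer0_bwd _ p.1 (Equiv.Perm.decomposeFin_symm_apply_zero _ _) (rel0' p.1) p.2,
    Equiv.Perm.decomposeFin_symm_apply_zero _ _⟩
  left_inv := by
    rintro ⟨π, hD, h0⟩
    apply Subtype.ext
    show Equiv.Perm.decomposeFin.symm (0, (Equiv.Perm.decomposeFin π).2) = π
    have hp : ((0 : Fin (n+1)), (Equiv.Perm.decomposeFin π).2) = Equiv.Perm.decomposeFin π := by
      refine Prod.ext ?_ rfl
      rw [dF_fst, h0]
    rw [hp, Equiv.symm_apply_apply]
  right_inv := by
    rintro ⟨e, hD⟩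
    apply Subtype.ext
    show (Equiv.Perm.decomposeFin (Equiv.Perm.decomposeFin.symm (0, e))).2 = e
    rw [Equiv.apply_symm_apply]

def eq1 (n : ℕ) :
    {π : Perm (Fin (n+2)) // IsDirectSumOf1And21 π ∧ π 0 = 1} ≃
      {e : Perm (Fin (n+1)) // IsDirectSumOf1And21 e ∧ e 0 = 0} where
  toFun p := ⟨(Equiv.Perm.decomposeFin p.1).2,
    transfer1_fwd p.1 _ p.2.2 (fun x => by rw [dF_rel p.1 x, p.2.2]) p.2.1⟩
  invFun p := ⟨Equiv.Perm.decomposeFin.symm (1, p.1),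
    transfer1_bwd _ p.1 (Equiv.Perm.decomposeFin_symm_apply_zero _ _) p.2.2
      (fun x => by rw [Equiv.Perm.decomposeFin_symm_apply_succ]) p.2.1,
    Equiv.Perm.decomposeFin_symm_apply_zero _ _⟩
  left_inv := by
    rintro ⟨π, hD, h0⟩
    apply Subtype.ext
    show Equiv.Perm.decomposeFin.symm (1, (Equiv.Perm.decomposeFin π).2) = π
    have hp : ((1 : Fin (n+2)), (Equiv.Perm.decomposeFin π).2) = Equiv.Perm.decomposeFin π := by
      refine Prod.ext ?_ rfl
      rw [dF_fst, h0]
    rw [hp, Equiv.symm_apply_apply]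
  right_inv := by
    rintro ⟨e, hD, he0⟩
    apply Subtype.ext
    show (Equiv.Perm.decomposeFin (Equiv.Perm.decomposeFin.symm (1, e))).2 = e
    rw [Equiv.apply_symm_apply]

lemma card_rec (n : ℕ) :
    Nat.card {π : Perm (Fin (n+2)) // IsDirectSumOf1And21 π} =
      Nat.card {π : Perm (Fin (n+1)) // IsDirectSumOf1And21 π} +
        Nat.card {π : Perm (Fin n) // IsDirectSumOf1And21 π} := by
  classical
  have hiff : ∀ π : Perm (Fin (n+2)), IsDirectSumOf1And21 π ↔
      (IsDirectSumOf1And21 π ∧ π 0 = 0) ∨ (IsDirectSumOf1And21 π ∧ π 0 = 1) := by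
    intro π
    constructor
    · intro h
      have hd := (h 0).2
      simp only [Fin.val_zero] at hd
      rcases hd with h1 | h1 | h1
      · exact Or.inl ⟨h, Fin.ext h1⟩
      · exact Or.inr ⟨h, Fin.ext (by rw [h1]; rfl)⟩
      · omega
    · rintro (⟨h, _⟩ | ⟨h, _⟩) <;> exact h
  have hdisj : Disjoint (fun π : Perm (Fin (n+2)) => IsDirectSumOf1And21 π ∧ π 0 = 0)
      (fun π => IsDirectSumOf1And21 π ∧ π 0 = 1) := by
    rw [Pi.disjoint_iff]
    intro π
    rw [Prop.disjoint_iff]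
    rintro ⟨⟨_, h0⟩, ⟨_, h1⟩⟩
    rw [h0] at h1
    exact absurd (congrArg Fin.val h1) (by simp)
  have E := (Equiv.subtypeEquivRight hiff).trans
    (subtypeOrEquiv (fun π : Perm (Fin (n+2)) => IsDirectSumOf1And21 π ∧ π 0 = 0)
      (fun π => IsDirectSumOf1And21 π ∧ π 0 = 1) hdisj)
  rw [Nat.card_congr E, Nat.card_sum, Nat.card_congr (eq0 (n+1)),
    Nat.card_congr ((eq1 n).trans (eq0 n))]

lemma card0 : Nat.card {π : Perm (Fin 0) // IsDirectSumOf1And21 π} = 1 := by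
  haveI : Unique {π : Perm (Fin 0) // IsDirectSumOf1And21 π} :=
    { default := ⟨1, fun i => i.elim0⟩
      uniq := fun x => Subtype.ext (Equiv.ext fun i => i.elim0) }
  exact Nat.card_unique

lemma card1 : Nat.card {π : Perm (Fin 1) // IsDirectSumOf1And21 π} = 1 := by
  haveI : Unique {π : Perm (Fin 1) // IsDirectSumOf1And21 π} :=
    { default := ⟨1, fun i =>
        ⟨Subsingleton.elim _ _, Or.inl (congrArg Fin.val (Subsingleton.elim _ _))⟩⟩
      uniq := fun x => Subtype.ext (Equiv.ext fun i => Subsingleton.elim _ _) }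
  exact Nat.card_unique

lemma card_fib : ∀ n : ℕ,
    Nat.card {π : Perm (Fin n) // IsDirectSumOf1And21 π} = Nat.fib (n+1) := by
  intro n
  induction n using Nat.strong_induction_on with
  | _ n ih =>
    match n with
    | 0 => simpa using card0
    | 1 => simpa using card1
    | (m+2) =>
      rw [card_rec m, ih (m+1) (by omega), ih m (by omega)]
      have h := Nat.fib_add_two (n := m+1)
      have e1 : m + 1 + 2 = m + 2 + 1 := rfl
      have e2 : m + 1 + 1 = m + 2 := rfl
      rw [e1, e2] at h
      rw [e2]
      omega

end Stmt9Aux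

/-- `π ∈ Av(231,312,321)` iff `π` is a direct sum of copies of `1` and `21`;
consequently `|Av_n(231,312,321)| = F_n` (Fibonacci with `F_0 = F_1 = 1`). -/
theorem stmt9 :
    (∀ (n : ℕ) (π : Equiv.Perm (Fin n)),
      (Avoids231 π ∧ Avoids312 π ∧ Avoids321 π) ↔ IsDirectSumOf1And21 π) ∧
    (∀ n : ℕ,
      Nat.card {π : Equiv.Perm (Fin n) // Avoids231 π ∧ Avoids312 π ∧ Avoids321 π}
        = Nat.fib (n + 1)) := by
  refine ⟨Stmt9Aux.main_iff, ?_⟩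
  intro n
  rw [Nat.card_congr (Equiv.subtypeEquivRight (Stmt9Aux.main_iff n))]
  exact Stmt9Aux.card_fib n
end

section
/- A permutation lies in Av(123,132,213) if and only if it is a skew sum of copies of the permutations 1 and 12; hence |Av_n(123,132,213)| = F_n, the n-th Fibonacci number (F_0 = F_1 = 1). -/
/-- `π` avoids 123. -/
def Avoids123 {n : ℕ} (π : Equiv.Perm (Fin n)) : Prop :=
  ∀ i j k : Fin n, i < j → j < k → ¬ (π i < π j ∧ π j < π k)

/-- `π` avoids 132. -/
def Avoids132 {n : ℕ} (π : Equiv.Perm (Fin n)) : Prop :=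
  ∀ i j k : Fin n, i < j → j < k → ¬ (π i < π k ∧ π k < π j)

/-- `π` avoids 213. -/
def Avoids213 {n : ℕ} (π : Equiv.Perm (Fin n)) : Prop :=
  ∀ i j k : Fin n, i < j → j < k → ¬ (π j < π i ∧ π i < π k)

/-- `π` is a skew sum of copies of `1` and `12`: equivalently, its complement
(obtained by reversing all values) is a direct sum of copies of `1` and `21`. -/
def IsSkewSumOf1And12 {n : ℕ} (π : Equiv.Perm (Fin n)) : Prop :=
  IsDirectSumOf1And21 (π.trans Fin.revPerm)


namespace Stmt10Aux

open Equiv Finset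

/-- gap-2 increasing -/
def Cl {n : ℕ} (τ : Equiv.Perm (Fin n)) : Prop :=
  ∀ i k : Fin n, (i : ℕ) + 2 ≤ (k : ℕ) → τ i < τ k

lemma bound_up {n : ℕ} {τ : Equiv.Perm (Fin n)} (h : Cl τ) (i : Fin n) :
    (τ i : ℕ) ≤ (i : ℕ) + 1 := by
  by_contra hc
  push_neg at hc
  have hn : (i : ℕ) + 2 < n := lt_of_le_of_lt hc (τ i).isLt
  set a : Fin n := ⟨(i : ℕ) + 2, hn⟩ with ha
  have hcard : (Finset.Ici a).card ≤ (Finset.Ioi (τ i)).card := by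
    apply Finset.card_le_card_of_injOn τ
    · intro j hj
      rw [Finset.mem_coe, Finset.mem_Ici] at hj
      rw [Finset.mem_coe, Finset.mem_Ioi]
      exact h i j hj
    · exact fun x _ y _ hxy => τ.injective hxy
  rw [Fin.card_Ici, Fin.card_Ioi] at hcard
  have := (τ i).isLt
  have := i.isLt
  simp only [ha] at hcard
  omega

lemma bound_down {n : ℕ} {τ : Equiv.Perm (Fin n)} (h : Cl τ) (i : Fin n) :
    (i : ℕ) ≤ (τ i : ℕ) + 1 := by
  by_contra hc
  push_neg at hc
  have h2 : 2 ≤ (i : ℕ) := by omega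
  set b : Fin n := ⟨(i : ℕ) - 2, by omega⟩ with hb
  have hcard : (Finset.Iic b).card ≤ (Finset.Iio (τ i)).card := by
    apply Finset.card_le_card_of_injOn τ
    · intro j hj
      rw [Finset.mem_coe, Finset.mem_Iic] at hj
      rw [Finset.mem_coe, Finset.mem_Iio]
      apply h j i
      have : (j : ℕ) ≤ (i : ℕ) - 2 := hj
      omega
    · exact fun x _ y _ hxy => τ.injective hxy
  rw [Fin.card_Iic, Fin.card_Iio] at hcard
  simp only [hb] at hcard
  omega

lemma swapback {n : ℕ} {τ : Equiv.Perm (Fin n)}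
    (hB : ∀ j : Fin n, (j : ℕ) ≤ (τ j : ℕ) + 1)
    {i : Fin n} (hi : (τ i : ℕ) = (i : ℕ) + 1) : τ (τ i) = i := by
  by_contra hne
  have hn : (i : ℕ) + 1 < n := hi ▸ (τ i).isLt
  set a : Fin n := ⟨(i : ℕ) + 1, hn⟩ with ha
  have hτi : τ i = a := Fin.ext hi
  have hτa : τ a ≠ i := by rw [← hτi]; exact hne
  have hi' : i.val < n := i.isLt
  have hcard : (Finset.Iic a).card ≤ (Finset.Iic i).card := by
    apply Finset.card_le_card_of_injOn τ.symm
    · intro v hv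
      rw [Finset.mem_coe, Finset.mem_Iic] at hv ⊢
      have hv' : (v : ℕ) ≤ (i : ℕ) + 1 := hv
      set j : Fin n := τ.symm v with hj
      have hτj : τ j = v := τ.apply_symm_apply v
      have h1 : (j : ℕ) ≤ (v : ℕ) + 1 := by have := hB j; rw [hτj] at this; exact this
      show (j : ℕ) ≤ (i : ℕ)
      by_contra hgt
      push_neg at hgt
      have hj2 : (j : ℕ) = (i : ℕ) + 1 ∨ (j : ℕ) = (i : ℕ) + 2 := by omega
      rcases hj2 with h' | h'
      · have hja : j = a := Fin.ext h'
        have hv_ne_i : (v : ℕ) ≠ (i : ℕ) := by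
          intro e
          exact hτa (by rw [← hja, hτj]; exact Fin.ext e)
        have hv_ne_a : (v : ℕ) ≠ (i : ℕ) + 1 := by
          intro e
          have : j = i := τ.injective (by rw [hτj, hτi]; exact Fin.ext e)
          rw [this] at h'; omega
        omega
      · have hv2 : (v : ℕ) = (i : ℕ) + 1 := by omega
        have : j = i := τ.injective (by rw [hτj, hτi]; exact Fin.ext hv2)
        rw [this] at h'; omega
    · exact fun x _ y _ hxy => τ.symm.injective hxy
  rw [Fin.card_Iic, Fin.card_Iic] at hcard
  simp only [ha] at hcard
  omega

lemma swapdown {n : ℕ} {τ : Equiv.Perm (Fin n)}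
    (hB : ∀ j : Fin n, (τ j : ℕ) ≤ (j : ℕ) + 1)
    {i : Fin n} (hi : (τ i : ℕ) + 1 = (i : ℕ)) : τ (τ i) = i := by
  by_contra hne
  have h1i : 1 ≤ (i : ℕ) := by omega
  have hb : (i : ℕ) - 1 < n := by have := i.isLt; omega
  set b : Fin n := ⟨(i : ℕ) - 1, hb⟩ with hbdef
  have hτi : τ i = b := Fin.ext (by show _ = (i : ℕ) - 1; omega)
  have hτb : τ b ≠ i := by rw [← hτi]; exact hne
  have hcard : (Finset.Ici b).card ≤ (Finset.Ici i).card := by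
    apply Finset.card_le_card_of_injOn τ.symm
    · intro v hv
      rw [Finset.mem_coe, Finset.mem_Ici] at hv ⊢
      have hv' : (i : ℕ) - 1 ≤ (v : ℕ) := hv
      set j : Fin n := τ.symm v with hj
      have hτj : τ j = v := τ.apply_symm_apply v
      have h1 : (v : ℕ) ≤ (j : ℕ) + 1 := by have := hB j; rw [hτj] at this; exact this
      show (i : ℕ) ≤ (j : ℕ)
      by_contra hgt
      push_neg at hgt
      have hj2 : (j : ℕ) = (i : ℕ) - 1 ∨ ((j : ℕ) = (i : ℕ) - 2 ∧ 2 ≤ (i : ℕ)) := by omega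
      rcases hj2 with h' | h'
      · have hjb : j = b := Fin.ext h'
        have hv_ne_i : (v : ℕ) ≠ (i : ℕ) := by
          intro e
          exact hτb (by rw [← hjb, hτj]; exact Fin.ext e)
        have hv_ne_b : (v : ℕ) ≠ (i : ℕ) - 1 := by
          intro e
          have : j = i := τ.injective (by rw [hτj, hτi]; exact Fin.ext (by show _ = (i : ℕ) - 1; omega))
          rw [this] at h'; omega
        omega
      · obtain ⟨h', hi2⟩ := h'
        have hv2 : (v : ℕ) = (i : ℕ) - 1 := by omega
        have : j = i := τ.injective (by rw [hτj, hτi]; exact Fin.ext (by show _ = (i : ℕ) - 1; omega))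
        rw [this] at h'; omega
    · exact fun x _ y _ hxy => τ.symm.injective hxy
  rw [Fin.card_Ici, Fin.card_Ici] at hcard
  simp only [hbdef] at hcard
  have := i.isLt
  omega

lemma cl_iff_Q {n : ℕ} (τ : Equiv.Perm (Fin n)) : Cl τ ↔ IsDirectSumOf1And21 τ := by
  constructor
  · intro h i
    have hu := bound_up h
    have hd := bound_down h
    have hdisj : (τ i : ℕ) = (i : ℕ) ∨ (τ i : ℕ) = (i : ℕ) + 1 ∨ (τ i : ℕ) + 1 = (i : ℕ) := by
      have := hu i; have := hd i; omega
    refine ⟨?_, hdisj⟩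
    rcases hdisj with h1 | h1 | h1
    · have : τ i = i := Fin.ext h1
      rw [this, this]
    · exact swapback hd h1
    · exact swapdown hu h1
  · intro h i k hik
    have h1 := (h i).2
    have h2 := (h k).2
    have hne : (τ i : ℕ) ≠ (τ k : ℕ) := by
      intro e
      have : τ i = τ k := Fin.ext e
      have : i = k := τ.injective this
      rw [this] at hik; omega
    rw [Fin.lt_def]; omega

lemma av_iff_cg {n : ℕ} (π : Equiv.Perm (Fin n)) :
    (Avoids123 π ∧ Avoids132 π ∧ Avoids213 π) ↔
      (∀ i k : Fin n, (i : ℕ) + 2 ≤ (k : ℕ) → π k < π i) := by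
  constructor
  · rintro ⟨h123, h132, h213⟩ i k hik
    have hkn : (k : ℕ) < n := k.isLt
    set j : Fin n := ⟨(i : ℕ) + 1, by omega⟩ with hjdef
    have hij : i < j := by rw [Fin.lt_def]; simp [hjdef]
    have hjk : j < k := by rw [Fin.lt_def]; simp [hjdef]; omega
    rcases lt_trichotomy (π k) (π i) with h | h | h
    · exact h
    · exact absurd (π.injective h) (by intro e; rw [e] at hik; omega)
    · exfalso
      rcases lt_trichotomy (π j) (π i) with hj | hj | hj
      · exact h213 i j k hij hjk ⟨hj, h⟩
      · exact absurd (π.injective hj) (by intro e; rw [e] at hij; exact lt_irrefl _ hij)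
      · rcases lt_trichotomy (π j) (π k) with hk | hk | hk
        · exact h123 i j k hij hjk ⟨hj, hk⟩
        · exact absurd (π.injective hk) (by intro e; rw [e] at hjk; exact lt_irrefl _ hjk)
        · exact h132 i j k hij hjk ⟨h, hk⟩
  · intro h
    have key : ∀ i j k : Fin n, i < j → j < k → π k < π i := by
      intro i j k hij hjk
      apply h
      rw [Fin.lt_def] at hij hjk
      omega
    refine ⟨?_, ?_, ?_⟩
    · intro i j k hij hjk ⟨ha, hb⟩
      exact absurd (lt_trans ha hb) (not_lt.mpr (le_of_lt (key i j k hij hjk)))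
    · intro i j k hij hjk ⟨ha, hb⟩
      exact absurd ha (not_lt.mpr (le_of_lt (key i j k hij hjk)))
    · intro i j k hij hjk ⟨ha, hb⟩
      exact absurd hb (not_lt.mpr (le_of_lt (key i j k hij hjk)))

lemma part1 {n : ℕ} (π : Equiv.Perm (Fin n)) :
    (Avoids123 π ∧ Avoids132 π ∧ Avoids213 π) ↔ IsSkewSumOf1And12 π := by
  rw [av_iff_cg, IsSkewSumOf1And12, ← cl_iff_Q]
  unfold Cl
  constructor
  · intro h i k hik
    simp only [Equiv.trans_apply, Fin.revPerm_apply]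
    rw [Fin.rev_lt_rev]
    exact h i k hik
  · intro h i k hik
    have := h i k hik
    simp only [Equiv.trans_apply, Fin.revPerm_apply] at this
    rwa [Fin.rev_lt_rev] at this

def up1 {n : ℕ} (σ : Equiv.Perm (Fin n)) : Equiv.Perm (Fin (n + 1)) where
  toFun := Fin.cases 0 (fun i => (σ i).succ)
  invFun := Fin.cases 0 (fun i => (σ.symm i).succ)
  left_inv := by intro i; cases i using Fin.cases <;> simp
  right_inv := by intro i; cases i using Fin.cases <;> simp

@[simp] lemma up1_zero {n : ℕ} (σ : Equiv.Perm (Fin n)) : up1 σ 0 = 0 := rfl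
@[simp] lemma up1_succ {n : ℕ} (σ : Equiv.Perm (Fin n)) (i : Fin n) :
    up1 σ i.succ = (σ i).succ := by
  show (Fin.cases 0 (fun i => (σ i).succ) : Fin (n+1) → Fin (n+1)) i.succ = _
  simp

lemma Q_up1 {n : ℕ} {σ : Equiv.Perm (Fin n)} (h : IsDirectSumOf1And21 σ) :
    IsDirectSumOf1And21 (up1 σ) := by
  intro i
  cases i using Fin.cases with
  | zero => refine ⟨by simp, Or.inl (by simp)⟩
  | succ j =>
    obtain ⟨h1, h2⟩ := h j
    refine ⟨by rw [up1_succ, up1_succ, h1], ?_⟩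
    rw [up1_succ]
    simp only [Fin.val_succ]
    omega

def down {n : ℕ} (τ : Equiv.Perm (Fin (n + 1))) (h0 : τ 0 = 0) : Equiv.Perm (Fin n) where
  toFun i := (τ i.succ).pred (fun h => Fin.succ_ne_zero i (τ.injective (h.trans h0.symm)))
  invFun i := (τ.symm i.succ).pred (fun h => Fin.succ_ne_zero i
    (by rw [← h0]; exact (Equiv.symm_apply_eq τ).mp h))
  left_inv := by intro i; simp
  right_inv := by intro i; simp

@[simp] lemma down_succ {n : ℕ} (τ : Equiv.Perm (Fin (n + 1))) (h0 : τ 0 = 0) (i : Fin n) :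
    ((down τ h0) i).succ = τ i.succ :=
  Fin.succ_pred _ (fun h => Fin.succ_ne_zero i (τ.injective (h.trans h0.symm)))

lemma up1_down {n : ℕ} (τ : Equiv.Perm (Fin (n + 1))) (h0 : τ 0 = 0) :
    up1 (down τ h0) = τ := by
  apply Equiv.ext
  intro i
  cases i using Fin.cases with
  | zero => rw [up1_zero, h0]
  | succ j => rw [up1_succ, down_succ]

lemma Q_down {n : ℕ} {τ : Equiv.Perm (Fin (n + 1))} (h : IsDirectSumOf1And21 τ)
    (h0 : τ 0 = 0) : IsDirectSumOf1And21 (down τ h0) := by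
  intro i
  have hs : ∀ j : Fin n, ((down τ h0) j : ℕ) + 1 = (τ j.succ : ℕ) := by
    intro j
    rw [← Fin.val_succ, down_succ]
  obtain ⟨h1, h2⟩ := h i.succ
  constructor
  · apply Fin.succ_injective
    rw [down_succ, down_succ, h1]
  · have := hs i
    simp only [Fin.val_succ] at h2
    have hpos : 1 ≤ (τ i.succ : ℕ) := by
      rcases Nat.eq_zero_or_pos (τ i.succ : ℕ) with hz | hp
      · exfalso
        have : τ i.succ = 0 := Fin.ext hz
        exact Fin.succ_ne_zero i (τ.injective (this.trans h0.symm))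
      · exact hp
    omega

-- swap fixes values ≥ 2
lemma swap01_of_ge {n : ℕ} (v : Fin (n + 2)) (hv : 2 ≤ (v : ℕ)) :
    Equiv.swap (0 : Fin (n+2)) 1 v = v := by
  apply Equiv.swap_apply_of_ne_of_ne
  · intro e; rw [e] at hv; simp at hv
  · intro e; rw [e] at hv; simp at hv

lemma val_ge_two {n : ℕ} {v : Fin (n + 2)} (h0 : v ≠ 0) (h1 : v ≠ 1) : 2 ≤ (v : ℕ) := by
  have e0 : (v : ℕ) ≠ 0 := fun e => h0 (Fin.ext (by simpa using e))
  have e1 : (v : ℕ) ≠ 1 := fun e => h1 (Fin.ext (by simpa using e))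
  omega

lemma Q_swap {n : ℕ} {ρ : Equiv.Perm (Fin (n + 2))} (h : IsDirectSumOf1And21 ρ)
    (h01 : ρ 0 = 0 ∧ ρ 1 = 1 ∨ ρ 0 = 1 ∧ ρ 1 = 0) :
    IsDirectSumOf1And21 (ρ.trans (Equiv.swap 0 1)) := by
  have key01 : (ρ.trans (Equiv.swap 0 1)) 0 = 1 ∧ (ρ.trans (Equiv.swap 0 1)) 1 = 0 ∨
      (ρ.trans (Equiv.swap 0 1)) 0 = 0 ∧ (ρ.trans (Equiv.swap 0 1)) 1 = 1 := by
    rcases h01 with ⟨a0, a1⟩ | ⟨a0, a1⟩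
    · left; constructor <;> simp [Equiv.trans_apply, a0, a1]
    · right; constructor <;> simp [Equiv.trans_apply, a0, a1]
  intro i
  by_cases hi0 : i = 0
  · subst hi0
    rcases key01 with ⟨b0, b1⟩ | ⟨b0, b1⟩
    · exact ⟨by rw [b0, b1], Or.inr (Or.inl (by rw [b0]; simp))⟩
    · exact ⟨by rw [b0, b0], Or.inl (by rw [b0])⟩
  by_cases hi1 : i = 1
  · subst hi1
    rcases key01 with ⟨b0, b1⟩ | ⟨b0, b1⟩
    · exact ⟨by rw [b1, b0], Or.inr (Or.inr (by rw [b1]; simp))⟩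
    · exact ⟨by rw [b1, b1], Or.inl (by rw [b1])⟩
  · have hi2 : 2 ≤ (i : ℕ) := val_ge_two hi0 hi1
    have hρi : 2 ≤ (ρ i : ℕ) := by
      apply val_ge_two
      · intro e
        rcases h01 with ⟨a0, a1⟩ | ⟨a0, a1⟩
        · exact hi0 (ρ.injective (e.trans a0.symm))
        · exact hi1 (ρ.injective (e.trans a1.symm))
      · intro e
        rcases h01 with ⟨a0, a1⟩ | ⟨a0, a1⟩
        · exact hi1 (ρ.injective (e.trans a1.symm))
        · exact hi0 (ρ.injective (e.trans a0.symm))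
    obtain ⟨h1, h2⟩ := h i
    have e1 : (ρ.trans (Equiv.swap 0 1)) i = ρ i := by
      simp only [Equiv.trans_apply]; exact swap01_of_ge _ hρi
    refine ⟨?_, by rw [e1]; exact h2⟩
    rw [e1]
    simp only [Equiv.trans_apply]
    rw [h1]
    exact swap01_of_ge i hi2

noncomputable def up2 {n : ℕ} (σ : Equiv.Perm (Fin n)) : Equiv.Perm (Fin (n + 2)) :=
  (up1 (up1 σ)).trans (Equiv.swap 0 1)

lemma up1up1_zero {n : ℕ} (σ : Equiv.Perm (Fin n)) : up1 (up1 σ) 0 = 0 := up1_zero _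
lemma up1up1_one {n : ℕ} (σ : Equiv.Perm (Fin n)) : up1 (up1 σ) 1 = 1 := by
  rw [← Fin.succ_zero_eq_one, up1_succ, up1_zero, Fin.succ_zero_eq_one]

lemma Q_up2 {n : ℕ} {σ : Equiv.Perm (Fin n)} (h : IsDirectSumOf1And21 σ) :
    IsDirectSumOf1And21 (up2 σ) :=
  Q_swap (Q_up1 (Q_up1 h)) (Or.inl ⟨up1up1_zero σ, up1up1_one σ⟩)

lemma up2_zero {n : ℕ} (σ : Equiv.Perm (Fin n)) : up2 σ 0 = 1 := by
  show Equiv.swap 0 1 (up1 (up1 σ) 0) = 1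
  rw [up1up1_zero, Equiv.swap_apply_left]

lemma up2_succ_succ {n : ℕ} (σ : Equiv.Perm (Fin n)) (i : Fin n) :
    up2 σ i.succ.succ = (σ i).succ.succ := by
  show Equiv.swap 0 1 (up1 (up1 σ) i.succ.succ) = _
  rw [up1_succ, up1_succ]
  exact swap01_of_ge _ (by simp)

lemma up1_injective {n : ℕ} {σ σ' : Equiv.Perm (Fin n)} (h : up1 σ = up1 σ') : σ = σ' := by
  apply Equiv.ext
  intro i
  apply Fin.succ_injective
  rw [← up1_succ σ, ← up1_succ σ', h]

lemma up2_injective {n : ℕ} {σ σ' : Equiv.Perm (Fin n)} (h : up2 σ = up2 σ') : σ = σ' := by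
  apply Equiv.ext
  intro i
  apply Fin.succ_injective
  apply Fin.succ_injective
  rw [← up2_succ_succ σ, ← up2_succ_succ σ', h]

abbrev A (n : ℕ) := {τ : Equiv.Perm (Fin n) // IsDirectSumOf1And21 τ}

noncomputable def F (n : ℕ) : A (n + 1) ⊕ A n → A (n + 2) :=
  Sum.elim (fun σ => ⟨up1 σ.1, Q_up1 σ.2⟩) (fun σ => ⟨up2 σ.1, Q_up2 σ.2⟩)

lemma F_bijective (n : ℕ) : Function.Bijective (F n) := by
  constructor
  · rintro (⟨σ, hσ⟩ | ⟨σ, hσ⟩) (⟨σ', hσ'⟩ | ⟨σ', hσ'⟩) h <;>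
      simp only [F, Sum.elim_inl, Sum.elim_inr, Subtype.mk.injEq] at h
    · exact congrArg _ (Subtype.ext (up1_injective h))
    · exfalso
      have := congrArg (fun e => e 0) h
      simp only [up1_zero, up2_zero] at this
      exact zero_ne_one this
    · exfalso
      have := congrArg (fun e => e 0) h
      simp only [up1_zero, up2_zero] at this
      exact one_ne_zero this
    · exact congrArg _ (Subtype.ext (up2_injective h))
  · rintro ⟨τ, hτ⟩
    have hv : (τ 0 : ℕ) = 0 ∨ (τ 0 : ℕ) = 1 := by
      have := (hτ 0).2
      simp only [Fin.val_zero] at this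
      omega
    rcases hv with hv | hv
    · have h0 : τ 0 = 0 := Fin.ext (by simpa using hv)
      exact ⟨Sum.inl ⟨down τ h0, Q_down hτ h0⟩, Subtype.ext (up1_down τ h0)⟩
    · have h0 : τ 0 = 1 := Fin.ext (by simpa using hv)
      have h1 : τ 1 = 0 := by have := (hτ 0).1; rwa [h0] at this
      set ρ : Equiv.Perm (Fin (n + 2)) := τ.trans (Equiv.swap 0 1) with hρ
      have hQρ : IsDirectSumOf1And21 ρ := Q_swap hτ (Or.inr ⟨h0, h1⟩)
      have hρ0 : ρ 0 = 0 := by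
        rw [hρ]; simp only [Equiv.trans_apply, h0]; exact Equiv.swap_apply_right _ _
      have hρ1 : ρ 1 = 1 := by
        rw [hρ]; simp only [Equiv.trans_apply, h1]; exact Equiv.swap_apply_left _ _
      set σ1 := down ρ hρ0 with hσ1
      have hσ10 : σ1 0 = 0 := by
        apply Fin.succ_injective
        rw [hσ1, down_succ]
        exact hρ1
      refine ⟨Sum.inr ⟨down σ1 hσ10, Q_down (Q_down hQρ hρ0) hσ10⟩, Subtype.ext ?_⟩
      show up2 (down σ1 hσ10) = τ
      have e1 : up1 (up1 (down σ1 hσ10)) = ρ := by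
        rw [up1_down, hσ1, up1_down]
      rw [up2, e1, hρ]
      apply Equiv.ext
      intro i
      simp [Equiv.trans_apply, Equiv.swap_apply_self]

lemma card_step (n : ℕ) : Nat.card (A (n + 2)) = Nat.card (A (n + 1)) + Nat.card (A n) := by
  rw [← Nat.card_sum]
  exact (Nat.card_eq_of_bijective (F n) (F_bijective n)).symm

lemma card_base0 : Nat.card (A 0) = 1 := by
  haveI : Unique (A 0) :=
    { default := ⟨1, fun i => i.elim0⟩
      uniq := fun x => Subtype.ext (Equiv.ext fun i => i.elim0) }
  exact Nat.card_unique

lemma card_base1 : Nat.card (A 1) = 1 := by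
  haveI : Unique (A 1) :=
    { default := ⟨1, fun i => ⟨rfl, Or.inl rfl⟩⟩
      uniq := fun x => Subtype.ext (Equiv.ext fun i => Subsingleton.elim _ _) }
  exact Nat.card_unique

lemma card_A (n : ℕ) : Nat.card (A n) = Nat.fib (n + 1) := by
  have H : ∀ m : ℕ, Nat.card (A m) = Nat.fib (m + 1) ∧
      Nat.card (A (m + 1)) = Nat.fib (m + 2) := by
    intro m
    induction m with
    | zero => exact ⟨card_base0, card_base1⟩
    | succ k ih =>
      refine ⟨ih.2, ?_⟩
      rw [card_step k, ih.1, ih.2]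
      have hf := Nat.fib_add_two (n := k + 1)
      have e : Nat.fib (k + 1 + 1) = Nat.fib (k + 2) := rfl
      omega
  exact (H n).1

lemma revrev {n : ℕ} (τ : Equiv.Perm (Fin n)) :
    (τ.trans Fin.revPerm).trans Fin.revPerm = τ := by
  apply Equiv.ext
  intro i
  simp [Equiv.trans_apply, Fin.rev_rev]

lemma card_av (n : ℕ) :
    Nat.card {π : Equiv.Perm (Fin n) // Avoids123 π ∧ Avoids132 π ∧ Avoids213 π}
      = Nat.fib (n + 1) := by
  rw [← card_A n]
  apply Nat.card_congr
  refine ⟨fun π => ⟨π.1.trans Fin.revPerm, (part1 π.1).mp π.2⟩,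
          fun τ => ⟨τ.1.trans Fin.revPerm,
            (part1 _).mpr (by unfold IsSkewSumOf1And12; rw [revrev]; exact τ.2)⟩,
          fun π => Subtype.ext (revrev π.1),
          fun τ => Subtype.ext (revrev τ.1)⟩

end Stmt10Aux

/-- `π ∈ Av(123,132,213)` iff `π` is a skew sum of copies of `1` and `12`;
hence `|Av_n(123,132,213)| = F_n` (Fibonacci with `F_0 = F_1 = 1`). -/
theorem stmt10 :
    (∀ (n : ℕ) (π : Equiv.Perm (Fin n)),
      (Avoids123 π ∧ Avoids132 π ∧ Avoids213 π) ↔ IsSkewSumOf1And12 π) ∧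
    (∀ n : ℕ,
      Nat.card {π : Equiv.Perm (Fin n) // Avoids123 π ∧ Avoids132 π ∧ Avoids213 π}
        = Nat.fib (n + 1)) := by
  exact ⟨fun n π => Stmt10Aux.part1 π, Stmt10Aux.card_av⟩
end

section
/- The unique formal power series solution (s, w_p, w_n, r_p, r_n) of the system s = 1 + xs + x·w_n·s, w_p = 1 + x·w_p + x·w_n·w_p + x·r_n·w_p, w_n = x·w_p + x·w_n·w_p + x·r_n·w_p, r_p = 1 + x·r_p + x·w_n·r_p, r_n = x·r_p + x·w_n·r_p has the property that s satisfies 1 + (x−1)s − x·s² + x·s³ = 0. -/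
open PowerSeries in
/-- The unique formal power series solution of the context-free-grammar system for the
`F⊖`-machine has the property that `s` satisfies `1 + (x−1)s − x·s² + x·s³ = 0`. -/
theorem stmt13 (s wp wn rp rn : PowerSeries ℚ)
    (hs : s = 1 + X * s + X * wn * s)
    (hwp : wp = 1 + X * wp + X * wn * wp + X * rn * wp)
    (hwn : wn = X * wp + X * wn * wp + X * rn * wp)
    (hrp : rp = 1 + X * rp + X * wn * rp)
    (hrn : rn = X * rp + X * wn * rp) :
    1 + (X - 1) * s - X * s ^ 2 + X * s ^ 3 = (0 : PowerSeries ℚ) := by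
  have h1 : wn = wp - 1 := by linear_combination hwn - hwp
  have h2 : rn = rp - 1 := by linear_combination hrn - hrp
  have hA : X * wp * s = s - 1 := by linear_combination -hs - X * s * h1
  have hB : X * wp * rp = rp - 1 := by linear_combination -hrp - X * rp * h1
  have hsrp : s = rp := by
    have h : (1 - X * wp) * (s - rp) = 0 := by linear_combination -hA + hB
    have hne : (1 - X * wp : PowerSeries ℚ) ≠ 0 := by
      intro h0
      have := congrArg (PowerSeries.constantCoeff (R := ℚ)) h0
      simp at this
    rcases mul_eq_zero.mp h with h' | h'
    · exact absurd h' hne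
    · exact sub_eq_zero.mp h'
  have hC : wp = s + X * wp ^ 2 - X * wp := by
    linear_combination hwp + X * wp * h1 + X * wp * h2 - X * wp * hsrp + hA
  linear_combination (1 - X * wp * s + X * s) * hA - X * s ^ 2 * hC
end

section
/- For every permutation class C and every permutation π generated by the C-machine, there is a unique generation sequence producing π that satisfies the conventions (U1) pop whenever possible and (U2) every left-to-right maximum bypasses the container. -/
/-- The permutation `σ` contains the permutation `τ` as a pattern. -/
def PermContains (σ τ : Σ n : ℕ, Equiv.Perm (Fin n)) : Prop :=
  ∃ f : Fin τ.1 → Fin σ.1, StrictMono f ∧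
    ∀ a b, τ.2 a < τ.2 b ↔ σ.2 (f a) < σ.2 (f b)

/-- A permutation class: a set of permutations closed downward under pattern containment. -/
def IsPermClass (C : Set (Σ n : ℕ, Equiv.Perm (Fin n))) : Prop :=
  ∀ σ ∈ C, ∀ τ, PermContains σ τ → τ ∈ C

/-- An operation of a `C`-machine: bypass, push (at a given position in the
container), or pop (the leftmost container entry). -/
inductive MOp where
  | bypass : MOp
  | push : ℕ → MOp
  | pop : MOp

/-- A state of a `C`-machine generating a permutation from the input `0,1,…,n−1`:
the next input symbol, the container contents (left to right), and the output so far. -/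
structure MState where
  next : ℕ
  container : List ℕ
  output : List ℕ

/-- A single step of the machine with container constraint `P` and input length `n`. -/
inductive MStep (P : List ℕ → Prop) (n : ℕ) : MState → MOp → MState → Prop
  | bypass (s : MState) (h : s.next < n) :
      MStep P n s .bypass ⟨s.next + 1, s.container, s.output ++ [s.next]⟩
  | push (s : MState) (pos : ℕ) (h : s.next < n) (hpos : pos ≤ s.container.length)
      (hP : P (s.container.insertIdx pos s.next)) :
      MStep P n s (.push pos) ⟨s.next + 1, s.container.insertIdx pos s.next, s.output⟩
  | pop (s : MState) (a : ℕ) (rest : List ℕ) (h : s.container = a :: rest) :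
      MStep P n s .pop ⟨s.next, rest, s.output ++ [a]⟩

/-- A run of the machine in which every step additionally satisfies `Q`. -/
inductive MRun (P : List ℕ → Prop) (n : ℕ) (Q : MState → MOp → Prop) :
    MState → List MOp → MState → Prop
  | nil (s : MState) : MRun P n Q s [] s
  | cons {s s' s'' : MState} {op : MOp} {ops : List MOp} :
      MStep P n s op s' → Q s op → MRun P n Q s' ops s'' → MRun P n Q s (op :: ops) s''

/-- The operation sequence `ops` (with every step satisfying `Q`) generates the
permutation `π` from the input `0,1,…,n−1`. -/
def Generates (P : List ℕ → Prop) {n : ℕ} (π : Equiv.Perm (Fin n))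
    (Q : MState → MOp → Prop) (ops : List MOp) : Prop :=
  MRun P n Q ⟨0, [], []⟩ ops ⟨n, [], List.ofFn fun i => (π i : ℕ)⟩

/-- The container constraint of the `C`-machine: the container contents must be
order isomorphic to a member of the class `C`. -/
def ClassConstraint (C : Set (Σ n : ℕ, Equiv.Perm (Fin n))) (L : List ℕ) : Prop :=
  ∃ σ : Equiv.Perm (Fin L.length),
    (⟨L.length, σ⟩ : Σ n : ℕ, Equiv.Perm (Fin n)) ∈ C ∧
    ∀ a b : Fin L.length, σ a < σ b ↔ L.get a < L.get b

/-- `v` is the value of a left-to-right maximum of `π`. -/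
def IsLRMaxValue {n : ℕ} (π : Equiv.Perm (Fin n)) (v : ℕ) : Prop :=
  ∃ j : Fin n, (π j : ℕ) = v ∧ ∀ i < j, π i < π j

/-- The uniqueness conventions for generating `π`: (U1) pop whenever possible
(i.e. whenever the leftmost container entry is the next entry of `π` to be output),
and (U2) left-to-right maxima bypass the container (are never pushed). -/
def Canonical {n : ℕ} (π : Equiv.Perm (Fin n)) (s : MState) (op : MOp) : Prop :=
  (∀ h : s.output.length < n,
      s.container.head? = some (π ⟨s.output.length, h⟩ : ℕ) → op = MOp.pop) ∧
  (∀ pos, op = MOp.push pos → ¬ IsLRMaxValue π s.next)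

namespace S17


lemma insertIdx_inj {α : Type*} {a : α} :
    ∀ (L : List α), a ∉ L → ∀ {p q : ℕ}, p ≤ L.length → q ≤ L.length →
      L.insertIdx p a = L.insertIdx q a → p = q := by
  intro L hL
  induction L with
  | nil =>
    intro p q hp hq _
    simp at hp hq; omega
  | cons b L ih =>
    intro p q hp hq heq
    match p, q with
    | 0, 0 => rfl
    | 0, q+1 =>
      simp [List.insertIdx] at heq
      exact absurd (heq.1 ▸ (List.mem_cons_self : b ∈ b :: L)) hL
    | p+1, 0 =>
      simp [List.insertIdx] at heq
      exact absurd (heq.1.symm ▸ (List.mem_cons_self : b ∈ b :: L)) hL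
    | p+1, q+1 =>
      simp only [List.insertIdx_succ_cons, List.cons.injEq] at heq
      have := ih (fun h => hL (List.mem_cons_of_mem _ h))
        (by simpa using hp) (by simpa using hq) heq.2
      omega

lemma erase_insertIdx {a : ℕ} :
    ∀ (L : List ℕ), a ∉ L → ∀ {p : ℕ}, p ≤ L.length →
      (L.insertIdx p a).erase a = L := by
  intro L
  induction L with
  | nil =>
    intro _ p hp
    have : p = 0 := by simpa using hp
    subst this; simp
  | cons b L ih =>
    intro hL p hp
    match p with
    | 0 => simp [List.insertIdx]
    | p+1 =>
      simp only [List.insertIdx_succ_cons]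
      rw [List.erase_cons_tail]
      · rw [ih (fun h => hL (List.mem_cons_of_mem _ h)) (by simpa using hp)]
      · simp only [beq_iff_eq]
        intro h; exact hL (h ▸ (List.mem_cons_self : b ∈ b :: L))

lemma filter_succ_erase {m : ℕ} :
    ∀ (A : List ℕ), A.count m ≤ 1 →
      ((A.filter (· < m + 1)).erase m) = A.filter (· < m) := by
  intro A
  induction A with
  | nil => simp
  | cons a A ih =>
    intro hc
    rcases eq_or_ne a m with rfl | hne
    · rw [List.count_cons_self] at hc
      have hnm : a ∉ A := List.count_eq_zero.mp (by omega)
      rw [List.filter_cons_of_pos (by simp), List.filter_cons_of_neg (by simp)]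
      rw [List.erase_cons_head]
      apply List.filter_congr
      intro x hx
      have : x ≠ a := fun h => hnm (h ▸ hx)
      simp only [decide_eq_decide]
      omega
    · have hc' : A.count m ≤ 1 := by
        rwa [List.count_cons_of_ne hne] at hc
      by_cases hlt : a < m
      · rw [List.filter_cons_of_pos (by simp; omega), List.filter_cons_of_pos (by simpa using hlt)]
        rw [List.erase_cons_tail (by simpa using hne)]
        rw [ih hc']
      · rw [List.filter_cons_of_neg (by simp; omega), List.filter_cons_of_neg (by simpa using hlt)]
        exact ih hc'

lemma insert_filter_exists {m : ℕ} :
    ∀ (A : List ℕ), m ∈ A → A.count m ≤ 1 →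
      ∃ pos ≤ (A.filter (· < m)).length,
        (A.filter (· < m)).insertIdx pos m = A.filter (· < m + 1) := by
  intro A
  induction A with
  | nil => simp
  | cons a A ih =>
    intro hm hc
    rcases eq_or_ne a m with rfl | hne
    · rw [List.count_cons_self] at hc
      have hnm : a ∉ A := List.count_eq_zero.mp (by omega)
      refine ⟨0, Nat.zero_le _, ?_⟩
      rw [List.filter_cons_of_neg (by simp), List.filter_cons_of_pos (by simp)]
      rw [List.insertIdx_zero]
      congr 1
      apply List.filter_congr
      intro x hx
      have : x ≠ a := fun h => hnm (h ▸ hx)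
      simp only [decide_eq_decide]
      omega
    · have hm' : m ∈ A := by
        rcases List.mem_cons.mp hm with h | h
        · exact absurd h.symm hne
        · exact h
      have hc' : A.count m ≤ 1 := by
        rwa [List.count_cons_of_ne hne] at hc
      obtain ⟨pos, hpos, heq⟩ := ih hm' hc'
      by_cases hlt : a < m
      · refine ⟨pos + 1, ?_, ?_⟩
        · rw [List.filter_cons_of_pos (by simpa using hlt)]
          simpa using Nat.succ_le_succ hpos
        · rw [List.filter_cons_of_pos (by simpa using hlt),
            List.filter_cons_of_pos (by simp; omega), List.insertIdx_succ_cons, heq]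
      · refine ⟨pos, ?_, ?_⟩
        · rw [List.filter_cons_of_neg (by simpa using hlt)]
          exact hpos
        · rw [List.filter_cons_of_neg (by simpa using hlt),
            List.filter_cons_of_neg (by simp; omega), heq]


variable {n : ℕ} (π : Equiv.Perm (Fin n))

/-- The target output list. -/
def targ : List ℕ := List.ofFn fun i => (π i : ℕ)

lemma targ_length : (targ π).length = n := by simp [targ]

lemma targ_get (i : Fin n) :
    (targ π).get (Fin.cast (targ_length π).symm i) = (π i : ℕ) := by
  simp [targ]; rfl

lemma targ_getElem (i : ℕ) (hi : i < n) :
    (targ π)[i]'(by rw [targ_length]; exact hi) = (π ⟨i, hi⟩ : ℕ) := by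
  simp [targ]

lemma targ_nodup : (targ π).Nodup := by
  rw [targ, List.nodup_ofFn]
  exact fun a b hab => π.injective (Fin.val_injective hab)

lemma targ_lt (v : ℕ) (hv : v ∈ targ π) : v < n := by
  simp only [targ, List.mem_ofFn] at hv
  obtain ⟨i, rfl⟩ := hv
  exact (π i).isLt

lemma mem_targ (v : ℕ) (hv : v < n) : v ∈ targ π := by
  simp only [targ, List.mem_ofFn]
  exact ⟨π.symm ⟨v, hv⟩, by simp⟩

/-- Backward coherence invariant. -/
def Coh (s : MState) : Prop :=
  s.next ≤ n ∧ s.output.length ≤ n ∧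
  s.output = (targ π).take s.output.length ∧
  s.container = ((targ π).drop s.output.length).filter (· < s.next)

/-- Forward invariant. -/
def Fwd (s : MState) : Prop :=
  (∀ v ∈ s.container, v < s.next) ∧ (∀ v ∈ s.output, v < s.next)

def final : MState := ⟨n, [], targ π⟩

lemma nodup_not_mem_drop {α : Type*} {L : List α} (h : L.Nodup) {k : ℕ}
    (hk : k < L.length) : L[k] ∉ L.drop (k+1) := by
  intro hmem
  obtain ⟨j, hj, hjeq⟩ := List.mem_iff_getElem.mp hmem
  rw [List.getElem_drop] at hjeq
  have := (List.Nodup.getElem_inj_iff h).mp hjeq.symm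
  omega

lemma Fwd_step {P : List ℕ → Prop} {s s' : MState} {op : MOp}
    (h : MStep P n s op s') (hf : Fwd s) : Fwd s' := by
  obtain ⟨hc, ho⟩ := hf
  cases h with
  | bypass h =>
    refine ⟨fun v hv => ?_, fun v hv => ?_⟩ <;> dsimp only at hv ⊢
    · exact Nat.lt_succ_of_lt (hc v hv)
    · rcases List.mem_append.mp hv with h' | h'
      · exact Nat.lt_succ_of_lt (ho v h')
      · simp at h'; omega
  | push pos h hpos hP =>
    refine ⟨fun v hv => ?_, fun v hv => ?_⟩ <;> dsimp only at hv ⊢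
    · rcases (List.mem_insertIdx hpos).mp hv with h' | h'
      · omega
      · exact Nat.lt_succ_of_lt (hc v h')
    · exact Nat.lt_succ_of_lt (ho v hv)
  | pop a rest hc' =>
    refine ⟨fun v hv => ?_, fun v hv => ?_⟩ <;> dsimp only at hv ⊢
    · exact hc v (by rw [hc']; exact List.mem_cons_of_mem _ hv)
    · rcases List.mem_append.mp hv with h' | h'
      · exact ho v h'
      · simp at h'; subst h'
        exact hc v (by rw [hc']; exact List.mem_cons_self)

lemma Fwd_run {P : List ℕ → Prop} {Q : MState → MOp → Prop} {s t : MState} {ops : List MOp}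
    (h : MRun P n Q s ops t) (hf : Fwd s) : Fwd t := by
  induction h with
  | nil => exact hf
  | cons hstep _ _ ih => exact ih (Fwd_step hstep hf)

lemma Coh_final : Coh π (final π) := by
  refine ⟨le_refl n, ?_, ?_, ?_⟩ <;>
    simp [final, targ_length, List.take_of_length_le, List.drop_of_length_le,
      (targ_length π).le]

lemma Coh_back_step {P : List ℕ → Prop} {s s' : MState} {op : MOp}
    (h : MStep P n s op s') (hf : Fwd s) (hc : Coh π s') : Coh π s := by
  obtain ⟨h1, h2, h3, h4⟩ := hc
  cases h with
  | bypass h =>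
    simp only at h1 h2 h3 h4
    rw [List.length_append, List.length_singleton] at h2 h3 h4
    have hk : s.output.length < n := by omega
    have hkk : s.output.length + 1 ≤ (targ π).length := by rw [targ_length]; omega
    rw [List.take_succ, List.getElem?_eq_getElem (by rw [targ_length]; omega)] at h3
    simp only [Option.toList_some] at h3
    have hout : s.output = (targ π).take s.output.length :=
      (List.append_inj' h3 rfl).1
    have hnext : s.next = (targ π)[s.output.length]'(by rw [targ_length]; omega) := by
      have := (List.append_inj' h3 rfl).2
      simpa using this
    refine ⟨by omega, by omega, hout, ?_⟩
    have hdrop : (targ π).drop s.output.length =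
        (targ π)[s.output.length]'(by rw [targ_length]; omega) ::
          (targ π).drop (s.output.length + 1) :=
      List.drop_eq_getElem_cons (by rw [targ_length]; omega)
    rw [hdrop, List.filter_cons_of_neg (by simp; omega)]
    rw [h4]
    have hnotmem : s.next ∉ (targ π).drop (s.output.length + 1) := by
      rw [hnext]
      exact nodup_not_mem_drop (targ_nodup π) _
    apply List.filter_congr
    intro x hx
    have : x ≠ s.next := fun h => hnotmem (h ▸ hx)
    simp only [decide_eq_decide]
    omega
  | push pos h hpos hP =>
    simp only at h1 h2 h3 h4
    have hnm : s.next ∉ s.container := fun hmem => lt_irrefl _ (hf.1 _ hmem)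
    have hnodup : ((targ π).drop s.output.length).Nodup :=
      (targ_nodup π).sublist (List.drop_sublist _ _)
    have hcount : ((targ π).drop s.output.length).count s.next ≤ 1 :=
      List.nodup_iff_count_le_one.mp hnodup s.next
    refine ⟨by omega, h2, h3, ?_⟩
    have : s.container = (s.container.insertIdx pos s.next).erase s.next :=
      (erase_insertIdx _ hnm hpos).symm
    rw [this, h4, filter_succ_erase _ hcount]
  | pop a rest hcr =>
    simp only at h1 h2 h3 h4
    rw [List.length_append, List.length_singleton] at h2 h3 h4
    have hk : s.output.length < n := by omega
    rw [List.take_succ, List.getElem?_eq_getElem (by rw [targ_length]; omega)] at h3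
    simp only [Option.toList_some] at h3
    have hout : s.output = (targ π).take s.output.length :=
      (List.append_inj' h3 rfl).1
    have ha : a = (targ π)[s.output.length]'(by rw [targ_length]; omega) := by
      have := (List.append_inj' h3 rfl).2
      simpa using this
    refine ⟨h1, by omega, hout, ?_⟩
    have hdrop : (targ π).drop s.output.length =
        (targ π)[s.output.length]'(by rw [targ_length]; omega) ::
          (targ π).drop (s.output.length + 1) :=
      List.drop_eq_getElem_cons (by rw [targ_length]; omega)
    have halt : a < s.next := hf.1 a (by rw [hcr]; exact List.mem_cons_self)
    rw [hdrop, List.filter_cons_of_pos (by simp; omega), ← h4, ← ha, hcr]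

lemma Coh_back_run {P : List ℕ → Prop} {Q : MState → MOp → Prop} {s t : MState}
    {ops : List MOp} (h : MRun P n Q s ops t) : Fwd s → Coh π t → Coh π s := by
  induction h with
  | nil => exact fun _ hc => hc
  | cons hstep _ _ ih =>
    exact fun hf hc => Coh_back_step π hstep hf (ih (Fwd_step hstep hf) hc)

lemma no_step_final {P : List ℕ → Prop} {op : MOp} {s' : MState}
    (h : MStep P n (final π) op s') : False := by
  cases h with
  | bypass h => exact lt_irrefl n h
  | push pos h _ _ => exact lt_irrefl n h
  | pop a rest h => simp [final] at h

lemma lrmax_of {s : MState} (hc : Coh π s) (hf : Fwd s)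
    (hk : s.output.length < n)
    (hm : (π ⟨s.output.length, hk⟩ : ℕ) = s.next) : IsLRMaxValue π s.next := by
  refine ⟨⟨s.output.length, hk⟩, hm, fun i hi => ?_⟩
  rw [Fin.lt_def]
  have hiv : (i : ℕ) < s.output.length := hi
  have hmem : (π i : ℕ) ∈ s.output := by
    rw [hc.2.2.1]
    have : (π i : ℕ) = (targ π)[(i:ℕ)]'(by rw [targ_length]; exact i.isLt) := by
      rw [targ_getElem]
    rw [this]
    have h1 : (i:ℕ) < ((targ π).take s.output.length).length := by
      rw [List.length_take, targ_length]
      omega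
    have h2 : ((targ π).take s.output.length)[(i:ℕ)]'h1 =
        (targ π)[(i:ℕ)]'(by rw [targ_length]; exact i.isLt) := List.getElem_take ..
    rw [← h2]
    exact List.getElem_mem h1
  have := hf.2 _ hmem
  omega

lemma bypass_det {P : List ℕ → Prop} {s s' : MState}
    (h : MStep P n s .bypass s') (hc' : Coh π s') :
    ∃ hk : s.output.length < n, (π ⟨s.output.length, hk⟩ : ℕ) = s.next := by
  cases h with
  | bypass h =>
    obtain ⟨h1, h2, h3, h4⟩ := hc'
    simp only at h1 h2 h3 h4
    rw [List.length_append, List.length_singleton] at h2 h3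
    have hk : s.output.length < n := by omega
    refine ⟨hk, ?_⟩
    rw [List.take_succ, List.getElem?_eq_getElem (by rw [targ_length]; omega)] at h3
    simp only [Option.toList_some] at h3
    have := (List.append_inj' h3 rfl).2
    simp only [List.cons.injEq] at this
    rw [targ_getElem] at this
    exact this.1.symm

lemma pop_det {P : List ℕ → Prop} {s s' : MState}
    (h : MStep P n s .pop s') (hc' : Coh π s') :
    ∃ hk : s.output.length < n,
      s.container.head? = some (π ⟨s.output.length, hk⟩ : ℕ) := by
  cases h with
  | pop a rest hcr =>
    obtain ⟨h1, h2, h3, h4⟩ := hc'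
    simp only at h1 h2 h3 h4
    rw [List.length_append, List.length_singleton] at h2 h3
    have hk : s.output.length < n := by omega
    refine ⟨hk, ?_⟩
    rw [List.take_succ, List.getElem?_eq_getElem (by rw [targ_length]; omega)] at h3
    simp only [Option.toList_some] at h3
    have := (List.append_inj' h3 rfl).2
    simp only [List.cons.injEq] at this
    rw [targ_getElem] at this
    rw [hcr, List.head?_cons, this.1]

lemma push_det {P : List ℕ → Prop} {s s' : MState} {pos : ℕ}
    (h : MStep P n s (.push pos) s') (hc : Coh π s) (hf : Fwd s) (hc' : Coh π s') :
    pos ≤ s.container.length ∧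
    s.container.insertIdx pos s.next =
      ((targ π).drop s.output.length).filter (· < s.next + 1) := by
  cases h with
  | push pos h hpos hP =>
    obtain ⟨h1, h2, h3, h4⟩ := hc'
    simp only at h1 h2 h3 h4
    exact ⟨hpos, h4⟩

lemma step_determinism {P : List ℕ → Prop} {s s₁ s₂ : MState} {op₁ op₂ : MOp}
    (hcs : Coh π s) (hf : Fwd s)
    (h1 : MStep P n s op₁ s₁) (c1 : Canonical π s op₁) (hc1 : Coh π s₁)
    (h2 : MStep P n s op₂ s₂) (c2 : Canonical π s op₂) (hc2 : Coh π s₂) :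
    op₁ = op₂ ∧ s₁ = s₂ := by
  by_cases hhead : ∃ hk : s.output.length < n,
      s.container.head? = some (π ⟨s.output.length, hk⟩ : ℕ)
  · obtain ⟨hk, hh⟩ := hhead
    have e1 : op₁ = .pop := c1.1 hk hh
    have e2 : op₂ = .pop := c2.1 hk hh
    subst e1; subst e2
    refine ⟨rfl, ?_⟩
    cases h1 with
    | pop a rest hcr =>
      cases h2 with
      | pop a' rest' hcr' =>
        rw [hcr] at hcr'
        injection hcr' with e3 e4
        rw [e3, e4]
  · -- pops are impossible, and bypass/push are mutually exclusive
    have nopop₁ : op₁ ≠ .pop := fun e => hhead (pop_det π (e ▸ h1) hc1)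
    have nopop₂ : op₂ ≠ .pop := fun e => hhead (pop_det π (e ▸ h2) hc2)
    match op₁, op₂, h1, h2, c1, c2 with
    | .pop, _, h1, _, _, _ => exact absurd rfl nopop₁
    | _, .pop, _, h2, _, _ => exact absurd rfl nopop₂
    | .bypass, .push q, h1, h2, c1, c2 =>
      obtain ⟨hk, hm⟩ := bypass_det π h1 hc1
      exact absurd (lrmax_of π hcs hf hk hm) (c2.2 q rfl)
    | .push p, .bypass, h1, h2, c1, c2 =>
      obtain ⟨hk, hm⟩ := bypass_det π h2 hc2
      exact absurd (lrmax_of π hcs hf hk hm) (c1.2 p rfl)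
    | .bypass, .bypass, h1, h2, _, _ =>
      refine ⟨rfl, ?_⟩
      cases h1; cases h2; rfl
    | .push p, .push q, h1, h2, _, _ =>
      have d1 := push_det π h1 hcs hf hc1
      have d2 := push_det π h2 hcs hf hc2
      have hnm : s.next ∉ s.container := fun hmem => lt_irrefl _ (hf.1 _ hmem)
      have hpq : p = q :=
        insertIdx_inj _ hnm d1.1 d2.1 (d1.2.trans d2.2.symm)
      subst hpq
      refine ⟨rfl, ?_⟩
      cases h1; cases h2; rfl

lemma run_unique_aux {P : List ℕ → Prop} {t : MState}
    (hstop : ∀ op (s' : MState), MStep P n t op s' → False) (hct : Coh π t)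
    {s : MState} {ops₁ : List MOp}
    (h1 : MRun P n (Canonical π) s ops₁ t) :
    Coh π s → Fwd s → ∀ ops₂, MRun P n (Canonical π) s ops₂ t →
      ops₁ = ops₂ := by
  induction h1 with
  | nil s =>
    intro _ _ ops₂ h2
    cases h2 with
    | nil => rfl
    | cons hstep _ _ => exact absurd hstep (fun h => hstop _ _ h)
  | cons hstep hQ hrun ih =>
    intro hc hf ops₂ h2
    cases h2 with
    | nil => exact absurd hstep (fun h => hstop _ _ h)
    | cons hstep₂ hQ₂ hrun₂ =>
      have hc₁ := Coh_back_run π hrun (Fwd_step hstep hf) hct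
      have hc₂ := Coh_back_run π hrun₂ (Fwd_step hstep₂ hf) hct
      obtain ⟨hop, hstate⟩ := step_determinism π hc hf hstep hQ hc₁ hstep₂ hQ₂ hc₂
      subst hop
      simp only [List.cons.injEq, true_and]
      exact ih hstop hct hc₁ (Fwd_step hstep hf) _ (by rw [hstate]; exact hrun₂)

lemma run_unique {P : List ℕ → Prop} {s : MState} {ops₁ : List MOp}
    (h1 : MRun P n (Canonical π) s ops₁ (final π)) (hc : Coh π s) (hf : Fwd s)
    {ops₂ : List MOp} (h2 : MRun P n (Canonical π) s ops₂ (final π)) :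
    ops₁ = ops₂ :=
  run_unique_aux π (fun _ _ h => no_step_final π h) (Coh_final π) h1 hc hf _ h2

lemma get_append_right (A B : List ℕ) (i : Fin B.length) :
    (A ++ B).get ⟨A.length + i, by simp only [List.length_append]; omega⟩ = B.get i := by
  simp [List.getElem_append_right (by omega : A.length ≤ A.length + (i:ℕ))]

lemma classConstraint_suffix {C : Set (Σ n : ℕ, Equiv.Perm (Fin n))}
    (hC : IsPermClass C) {A B : List ℕ} (h : ClassConstraint C (A ++ B)) :
    ClassConstraint C B := by
  obtain ⟨σ, hmem, hiso⟩ := h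
  set f : Fin B.length → Fin (A ++ B).length :=
    fun i => ⟨A.length + i, by simp only [List.length_append]; omega⟩ with hf
  have hfmono : StrictMono f := by
    intro a b hab
    simp only [hf, Fin.mk_lt_mk]
    exact Nat.add_lt_add_left (Fin.lt_def.mp hab) _
  -- B.get is injective
  have hBinj : Function.Injective (fun i : Fin B.length => B.get i) := by
    intro a b hab
    simp only at hab
    by_contra hne
    have hfab : σ (f a) ≠ σ (f b) := fun e =>
      hne (Fin.val_injective (by
        have := hfmono.injective (σ.injective e)
        subst this
        omega))
    rcases lt_or_gt_of_ne hfab with hlt | hlt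
    · have := (hiso (f a) (f b)).mp hlt
      rw [get_append_right, get_append_right, hab] at this
      exact lt_irrefl _ this
    · have := (hiso (f b) (f a)).mp hlt
      rw [get_append_right, get_append_right, hab] at this
      exact lt_irrefl _ this
  -- build the pattern permutation of B
  set g : Fin B.length → ℕ := fun i => B.get i with hg
  set S : Finset ℕ := Finset.image g Finset.univ with hS
  have hcard : S.card = B.length := by
    rw [hS, Finset.card_image_of_injective _ hBinj, Finset.card_univ, Fintype.card_fin]
  set e := S.orderIsoOfFin hcard with he
  set σ'f : Fin B.length → Fin B.length :=
    fun i => e.symm ⟨g i, by rw [hS]; exact Finset.mem_image_of_mem g (Finset.mem_univ i)⟩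
    with hσ'
  have hσ'iso : ∀ a b, σ'f a < σ'f b ↔ B.get a < B.get b := by
    intro a b
    rw [hσ']
    dsimp only
    rw [OrderIso.lt_iff_lt]
    exact Subtype.mk_lt_mk
  have hσ'inj : Function.Injective σ'f := by
    intro a b hab
    rw [hσ'] at hab
    dsimp only at hab
    have := e.symm.injective hab
    exact hBinj (Subtype.mk_eq_mk.mp this)
  set σ' : Equiv.Perm (Fin B.length) :=
    Equiv.ofBijective σ'f (Finite.injective_iff_bijective.mp hσ'inj) with hσ'def
  have hcoe : ∀ i, σ' i = σ'f i := fun i => rfl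
  refine ⟨σ', ?_, ?_⟩
  · refine hC _ hmem _ ⟨f, hfmono, fun a b => ?_⟩
    have e1 : (A ++ B).get (f a) = B.get a := get_append_right A B a
    have e2 : (A ++ B).get (f b) = B.get b := get_append_right A B b
    rw [hcoe, hcoe, hσ'iso a b, ← e1, ← e2]
    exact (hiso (f a) (f b)).symm
  · intro a b
    rw [hcoe, hcoe]
    exact hσ'iso a b

lemma getElem_mem_take {L : List ℕ} {i j : ℕ} (h : i < j) (hL : i < L.length) :
    L[i] ∈ L.take j :=
  List.mem_take_iff_getElem.mpr ⟨i, by omega, rfl⟩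

lemma find_consume {P : List ℕ → Prop} {Q : MState → MOp → Prop} {m : ℕ}
    {s : MState} {ops : List MOp} {t : MState} (hrun : MRun P n Q s ops t) :
    s.next ≤ m → m < t.next →
    ∃ (ops₁ : List MOp) (s₁ : MState) (op : MOp) (s₂ : MState) (ops₂ : List MOp),
      MRun P n Q s ops₁ s₁ ∧ MStep P n s₁ op s₂ ∧ MRun P n Q s₂ ops₂ t ∧
      s₁.next = m ∧ s₂.next = m + 1 := by
  induction hrun with
  | nil s => intro h1 h2; omega
  | @cons s s' s'' op ops hstep hQ hrun ih =>
    intro h1 h2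
    by_cases hcase : s'.next ≤ m
    · obtain ⟨ops₁, s₁, op', s₂, ops₂, hr1, hst, hr2, hn1, hn2⟩ := ih hcase h2
      exact ⟨op :: ops₁, s₁, op', s₂, ops₂, MRun.cons hstep hQ hr1, hst, hr2, hn1, hn2⟩
    · have hb : s'.next = s.next + 1 ∨ s'.next = s.next := by
        cases hstep <;> simp
      exact ⟨[], s, op, s', ops, MRun.nil s, hstep, hrun, by omega, by omega⟩

/-- Pushability of the canonical push steps. -/
def PushOK (C : Set (Σ n : ℕ, Equiv.Perm (Fin n))) : Prop :=
  ∀ (m k : ℕ) (hk : k < n), m < n →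
    (∀ v ∈ (targ π).take k, v < m) → m < (π ⟨k, hk⟩ : ℕ) →
    ClassConstraint C (((targ π).drop k).filter (· < m + 1))

lemma pushOK_of_run {C : Set (Σ n : ℕ, Equiv.Perm (Fin n))} (hC : IsPermClass C)
    {ops0 : List MOp}
    (h0 : MRun (ClassConstraint C) n (fun _ _ => True) ⟨0, [], []⟩ ops0 (final π)) :
    PushOK π C := by
  intro m k hk hm houts hlt
  obtain ⟨ops₁, s₁, op, s₂, ops₂, hr1, hst, hr2, hn1, hn2⟩ :=
    find_consume h0 (by simp) (hm : m < (final π).next)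
  have hf0 : Fwd (⟨0, [], []⟩ : MState) := ⟨by simp, by simp⟩
  have hf1 : Fwd s₁ := Fwd_run hr1 hf0
  have hf2 : Fwd s₂ := Fwd_step hst hf1
  have hc2 : Coh π s₂ := Coh_back_run π hr2 hf2 (Coh_final π)
  have hc1 : Coh π s₁ := Coh_back_step π hst hf1 hc2
  have hk0 : s₁.output.length ≤ k := by
    by_contra hgt
    push_neg at hgt
    have hb : k < ((targ π).take s₁.output.length).length := by
      rw [List.length_take, targ_length]
      omega
    have hmem : (targ π)[k]'(by rw [targ_length]; omega) ∈ s₁.output := by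
      rw [hc1.2.2.1]
      exact getElem_mem_take hgt (by rw [targ_length]; omega)
    have := hf1.2 _ hmem
    rw [targ_getElem π k hk, hn1] at this
    omega
  cases hst with
  | pop a rest hcr => simp at hn2; omega
  | bypass h =>
    obtain ⟨hk', hmeq⟩ := bypass_det π (MStep.bypass (P := ClassConstraint C) s₁ h) hc2
    rw [hn1] at hmeq
    rcases Nat.lt_or_ge s₁.output.length k with hlt' | hge
    · have hmem : (targ π)[s₁.output.length]'(by rw [targ_length]; omega) ∈
          (targ π).take k := getElem_mem_take hlt' (by rw [targ_length]; omega)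
      have := houts _ hmem
      rw [targ_getElem π _ hk'] at this
      omega
    · have hke : s₁.output.length = k := by omega
      rw [← hmeq] at hlt
      have : (π ⟨s₁.output.length, hk'⟩ : ℕ) = (π ⟨k, hk⟩ : ℕ) := by
        have : (⟨s₁.output.length, hk'⟩ : Fin n) = ⟨k, hk⟩ := Fin.mk_eq_mk.mpr hke
        rw [this]
      omega
  | push pos h hpos hP =>
    obtain ⟨_, heq⟩ := push_det π (MStep.push (P := ClassConstraint C) s₁ pos h hpos hP) hc1 hf1 hc2
    rw [heq, hn1] at hP
    have hsplit := (List.take_append_drop (k - s₁.output.length)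
      ((targ π).drop s₁.output.length)).symm
    rw [List.drop_drop] at hsplit
    have hkk : s₁.output.length + (k - s₁.output.length) = k := by omega
    rw [hkk] at hsplit
    rw [hsplit, List.filter_append] at hP
    exact classConstraint_suffix hC hP

lemma targ_take_n : (targ π).take n = targ π :=
  List.take_of_length_le (le_of_eq (targ_length π))

lemma targ_drop_n : (targ π).drop n = [] :=
  List.drop_eq_nil_of_le (le_of_eq (targ_length π))

lemma state_eq_final {s : MState} (hc : Coh π s) (h1 : s.next = n)
    (h2 : s.output.length = n) : s = final π := by
  obtain ⟨hle1, hle2, h3, h4⟩ := hc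
  obtain ⟨next, cont, out⟩ := s
  dsimp only at h1 h2 h3 h4
  subst h1
  rw [h2, targ_drop_n, List.filter_nil] at h4
  rw [h2, targ_take_n] at h3
  subst h3; subst h4
  rfl

lemma take_succ_targ {k : ℕ} (hk : k < n) :
    (targ π).take (k + 1) = (targ π).take k ++ [(π ⟨k, hk⟩ : ℕ)] := by
  rw [List.take_succ, List.getElem?_eq_getElem (by rw [targ_length]; omega)]
  have := targ_getElem π k hk
  rw [Option.toList_some, this]

lemma exists_canonical {C : Set (Σ n : ℕ, Equiv.Perm (Fin n))} (hOK : PushOK π C) :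
    ∀ (N : ℕ) (s : MState), (n - s.next) + (n - s.output.length) ≤ N →
      Coh π s → Fwd s →
      ∃ ops, MRun (ClassConstraint C) n (Canonical π) s ops (final π) := by
  intro N
  induction N with
  | zero =>
    intro s hN hc hf
    have h1 : s.next = n := by have := hc.1; omega
    have h2 : s.output.length = n := by have := hc.2.1; omega
    exact ⟨[], state_eq_final π hc h1 h2 ▸ MRun.nil s⟩
  | succ N ih =>
    intro s hN hc hf
    by_cases hk : s.output.length < n
    case neg =>
      have h2 : s.output.length = n := by have := hc.2.1; omega
      have h1 : s.next = n := by
        by_contra hne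
        have hnn : s.next < n := by have := hc.1; omega
        have hmem : s.next ∈ s.output := by
          rw [hc.2.2.1, h2, targ_take_n]
          exact mem_targ π s.next hnn
        exact lt_irrefl _ (hf.2 _ hmem)
      exact ⟨[], state_eq_final π hc h1 h2 ▸ MRun.nil s⟩
    case pos =>
      have hc3 : s.output = (targ π).take s.output.length := hc.2.2.1
      have hc4 : s.container =
          ((targ π).drop s.output.length).filter (· < s.next) := hc.2.2.2
      have htke : (targ π)[s.output.length]'(by rw [targ_length]; omega) =
          (π ⟨s.output.length, hk⟩ : ℕ) := targ_getElem π s.output.length hk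
      have hdropc : (targ π).drop s.output.length =
          (targ π)[s.output.length]'(by rw [targ_length]; omega) ::
            (targ π).drop (s.output.length + 1) :=
        List.drop_eq_getElem_cons (by rw [targ_length]; omega)
      have htkn : (π ⟨s.output.length, hk⟩ : ℕ) < n := (π ⟨s.output.length, hk⟩).isLt
      by_cases hhead : s.container.head? = some (π ⟨s.output.length, hk⟩ : ℕ)
      · -- pop
        have htkmem : (π ⟨s.output.length, hk⟩ : ℕ) ∈ s.container := by
          cases hcase : s.container with
          | nil => rw [hcase] at hhead; simp at hhead
          | cons a rest =>
            rw [hcase] at hhead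
            rw [List.head?_cons, Option.some.injEq] at hhead
            rw [hhead]
            exact List.mem_cons_self
        have htklt : (π ⟨s.output.length, hk⟩ : ℕ) < s.next := hf.1 _ htkmem
        have hcont : s.container = (π ⟨s.output.length, hk⟩ : ℕ) ::
            ((targ π).drop (s.output.length + 1)).filter (· < s.next) := by
          rw [hc4, hdropc, List.filter_cons_of_pos (by rw [htke]; simp; omega), htke]
        have hstep : MStep (ClassConstraint C) n s .pop
            ⟨s.next, ((targ π).drop (s.output.length + 1)).filter (· < s.next),
              s.output ++ [(π ⟨s.output.length, hk⟩ : ℕ)]⟩ :=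
          MStep.pop s _ _ hcont
        have hcan : Canonical π s .pop :=
          ⟨fun _ _ => rfl, fun pos he => by simp at he⟩
        have hc' : Coh π ⟨s.next, ((targ π).drop (s.output.length + 1)).filter (· < s.next),
            s.output ++ [(π ⟨s.output.length, hk⟩ : ℕ)]⟩ := by
          refine ⟨hc.1, ?_, ?_, ?_⟩ <;>
            simp only [List.length_append, List.length_singleton]
          · omega
          · rw [take_succ_targ π hk, ← hc3]
        have hf' := Fwd_step hstep hf
        obtain ⟨ops, hops⟩ := ih _ (by
          simp only [List.length_append, List.length_singleton]
          omega) hc' hf'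
        exact ⟨.pop :: ops, MRun.cons hstep hcan hops⟩
      · -- no pop possible
        have hnn : s.next < n := by
          by_contra hge
          have h1 : s.next = n := by have := hc.1; omega
          apply hhead
          rw [hc4, hdropc, List.filter_cons_of_pos (by rw [htke]; simp; omega),
            List.head?_cons, htke]
        by_cases hbm : (π ⟨s.output.length, hk⟩ : ℕ) = s.next
        · -- bypass
          have hstep : MStep (ClassConstraint C) n s .bypass
              ⟨s.next + 1, s.container, s.output ++ [s.next]⟩ := MStep.bypass s hnn
          have hcan : Canonical π s .bypass :=
            ⟨fun h hh => absurd hh hhead, fun pos he => by simp at he⟩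
          have hnotmem : s.next ∉ (targ π).drop (s.output.length + 1) := by
            rw [← hbm, ← htke]
            exact nodup_not_mem_drop (targ_nodup π) _
          have hc' : Coh π ⟨s.next + 1, s.container, s.output ++ [s.next]⟩ := by
            refine ⟨by show s.next + 1 ≤ n; omega, ?_, ?_, ?_⟩ <;>
              simp only [List.length_append, List.length_singleton]
            · omega
            · rw [take_succ_targ π hk, hbm, ← hc3]
            · rw [hc4, hdropc, List.filter_cons_of_neg (by rw [htke]; simp; omega)]
              apply List.filter_congr
              intro x hx
              have : x ≠ s.next := fun h => hnotmem (h ▸ hx)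
              simp only [decide_eq_decide]
              omega
          have hf' := Fwd_step hstep hf
          obtain ⟨ops, hops⟩ := ih _ (by
            dsimp only
            simp only [List.length_append, List.length_singleton]
            omega) hc' hf'
          exact ⟨.bypass :: ops, MRun.cons hstep hcan hops⟩
        · -- push
          have htkgt : s.next < (π ⟨s.output.length, hk⟩ : ℕ) := by
            rcases Nat.lt_trichotomy (π ⟨s.output.length, hk⟩ : ℕ) s.next with h1 | h1 | h1
            · exfalso
              apply hhead
              rw [hc4, hdropc, List.filter_cons_of_pos (by rw [htke]; simp; omega),
                List.head?_cons, htke]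
            · exact absurd h1 hbm
            · exact h1
          have houts : ∀ v ∈ (targ π).take s.output.length, v < s.next := by
            intro v hv
            exact hf.2 v (by rw [hc3]; exact hv)
          have hcc := hOK s.next s.output.length hk hnn houts htkgt
          have hmem : s.next ∈ (targ π).drop s.output.length := by
            have h1 : s.next ∈ targ π := mem_targ π s.next hnn
            rw [← List.take_append_drop s.output.length (targ π), List.mem_append] at h1
            rcases h1 with h1 | h1
            · exact absurd (houts _ h1) (lt_irrefl _)
            · exact h1
          have hcount : ((targ π).drop s.output.length).count s.next ≤ 1 :=
            List.nodup_iff_count_le_one.mp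
              ((targ_nodup π).sublist (List.drop_sublist _ _)) s.next
          obtain ⟨pos, hpos, hins⟩ := insert_filter_exists _ hmem hcount
          have hpos' : pos ≤ s.container.length := by
            rw [hc4]; exact hpos
          have hP : ClassConstraint C (s.container.insertIdx pos s.next) := by
            rw [hc4, hins]; exact hcc
          have hstep : MStep (ClassConstraint C) n s (.push pos)
              ⟨s.next + 1, s.container.insertIdx pos s.next, s.output⟩ :=
            MStep.push s pos hnn hpos' hP
          have hcan : Canonical π s (.push pos) := by
            refine ⟨fun h hh => absurd hh hhead, fun pos' _ hlr => ?_⟩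
            obtain ⟨j, hj, hmax⟩ := hlr
            rcases Nat.lt_trichotomy (j : ℕ) s.output.length with h1 | h1 | h1
            · have hmem' : (π j : ℕ) ∈ (targ π).take s.output.length := by
                have hje : (π j : ℕ) =
                    (targ π)[(j : ℕ)]'(by rw [targ_length]; exact j.isLt) := by
                  rw [targ_getElem]
                rw [hje]
                exact getElem_mem_take h1 (by rw [targ_length]; exact j.isLt)
              have := houts _ hmem'
              omega
            · have hje : j = ⟨s.output.length, hk⟩ := Fin.val_injective h1
              rw [hje] at hj
              exact hbm hj
            · have := hmax ⟨s.output.length, hk⟩ (by rw [Fin.lt_def]; exact h1)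
              rw [Fin.lt_def] at this
              have hjv : (π j : ℕ) = s.next := hj
              omega
          have hc' : Coh π ⟨s.next + 1, s.container.insertIdx pos s.next, s.output⟩ := by
            refine ⟨by show s.next + 1 ≤ n; omega, hc.2.1, hc3, ?_⟩
            dsimp only
            rw [hc4]
            exact hins
          have hf' := Fwd_step hstep hf
          obtain ⟨ops, hops⟩ := ih _ (by
            show n - (s.next + 1) + (n - s.output.length) ≤ N
            omega) hc' hf'
          exact ⟨.push pos :: ops, MRun.cons hstep hcan hops⟩

end S17

/-- For any class `C` and any `π` generated by the `C`-machine, there is a unique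
generation sequence for `π` satisfying (U1) and (U2). -/
theorem stmt17 {n : ℕ} (C : Set (Σ n : ℕ, Equiv.Perm (Fin n))) (hC : IsPermClass C)
    (π : Equiv.Perm (Fin n))
    (hgen : ∃ ops, Generates (ClassConstraint C) π (fun _ _ => True) ops) :
    ∃! ops, Generates (ClassConstraint C) π (Canonical π) ops := by
  obtain ⟨ops0, h0⟩ := hgen
  have h0' : MRun (ClassConstraint C) n (fun _ _ => True) ⟨0, [], []⟩ ops0
      (S17.final π) := h0
  have hOK := S17.pushOK_of_run π hC h0'
  have hc0 : S17.Coh π ⟨0, [], []⟩ := by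
    refine ⟨Nat.zero_le n, by simp, by simp, ?_⟩
    simp
  have hf0 : S17.Fwd ⟨0, [], []⟩ := ⟨by simp, by simp⟩
  obtain ⟨ops, hops⟩ := S17.exists_canonical π hOK (2 * n) ⟨0, [], []⟩
    (by show n - 0 + (n - 0) ≤ 2 * n; omega) hc0 hf0
  exact ⟨ops, hops, fun ops' h' => S17.run_unique π h' hc0 hf0 hops⟩
end
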